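/- arXiv:1505.01452 — 14 statements merged into one kernel-verified Lean document; each statement's English description precedes it below -/
import Mathlib

section
/- For all masses m₁, m₂ > 0 and every distance d > 0 there exists a unique pair (d₁, d₂) of real numbers with d₁ > 0, d₂ > 0, d₁ + d₂ = d, and m₁·sinh(2d₁) = m₂·sinh(2d₂). (This shows the hyperbolic center of mass of two masses is well and uniquely defined.) -/
open Real

/-- For masses `m₁, m₂ > 0` and any distance `d > 0` there is a unique
pair `(d₁, d₂)` with `d₁, d₂ > 0`, `d₁ + d₂ = d` and `m₁ sinh(2 d₁) = m₂ sinh(2 d₂)`: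
the hyperbolic center of mass is well and uniquely defined. -/
theorem hyperbolic_center_of_mass_exists_unique
    (m₁ m₂ d : ℝ) (hm₁ : 0 < m₁) (hm₂ : 0 < m₂) (hd : 0 < d) :
    ∃! p : ℝ × ℝ, 0 < p.1 ∧ 0 < p.2 ∧ p.1 + p.2 = d ∧
      m₁ * Real.sinh (2 * p.1) = m₂ * Real.sinh (2 * p.2) := by
  set g : ℝ → ℝ := fun x => m₁ * Real.sinh (2 * x) - m₂ * Real.sinh (2 * (d - x)) with hg
  have hmono : StrictMono g := by
    intro a b hab
    have h1 : m₁ * Real.sinh (2 * a) < m₁ * Real.sinh (2 * b) := by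
      apply mul_lt_mul_of_pos_left _ hm₁
      exact Real.sinh_lt_sinh.mpr (by linarith)
    have h2 : m₂ * Real.sinh (2 * (d - b)) < m₂ * Real.sinh (2 * (d - a)) := by
      apply mul_lt_mul_of_pos_left _ hm₂
      exact Real.sinh_lt_sinh.mpr (by linarith)
    simp only [hg]
    linarith
  have hcont : Continuous g := by fun_prop
  have hg0 : g 0 < 0 := by
    simp only [hg]
    have : 0 < Real.sinh (2 * d) := Real.sinh_pos_iff.mpr (by linarith)
    simp only [mul_zero, Real.sinh_zero, sub_zero]
    nlinarith
  have hgd : 0 < g d := by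
    simp only [hg]
    have : 0 < Real.sinh (2 * d) := Real.sinh_pos_iff.mpr (by linarith)
    simp only [sub_self, mul_zero, Real.sinh_zero]
    nlinarith
  obtain ⟨x, hx, hgx⟩ := intermediate_value_Ioo hd.le hcont.continuousOn
    (show (0:ℝ) ∈ Set.Ioo (g 0) (g d) from ⟨hg0, hgd⟩)
  refine ⟨(x, d - x), ⟨hx.1, by simpa using hx.2, by ring, ?_⟩, ?_⟩
  · have := hgx
    simp only [hg] at this
    linarith
  · rintro ⟨a, b⟩ ⟨ha, hb, hab, heq⟩
    have hga : g a = 0 := by simp only [hg]; have : d - a = b := by linarith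
                             rw [this]; linarith
    have : a = x := hmono.injective (by rw [hga, hgx])
    have hb' : b = d - x := by linarith
    simp [this, hb']
end

section
/- Let θ₁, θ₂ ∈ (0, π/2), let z₁ = cos θ₁ + i·sin θ₁ and z₂ = −cos θ₂ + i·sin θ₂ be points of ℍ, and let m₁, m₂ > 0. Set d₁ = dist(i, z₁) and d₂ = dist(i, z₂). Then dist(z₁, z₂) = d₁ + d₂ (so i lies on the geodesic segment joining z₁ and z₂), and m₁·sinh(2d₁) = m₂·sinh(2d₂) holds if and only if m₁·sin²θ₂·cos θ₁ = m₂·cos θ₂·sin²θ₁. In other words, the two masses are in canonical configuration if and only if their hyperbolic center of mass is the point i. -/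
open Real

/-- For points `z₁ = cos θ₁ + i sin θ₁` and `z₂ = -cos θ₂ + i sin θ₂`
of `ℍ` with `θ₁, θ₂ ∈ (0, π/2)` and masses `m₁, m₂ > 0`, setting `d₁ = dist(i, z₁)` and
`d₂ = dist(i, z₂)`, one has `dist(z₁, z₂) = d₁ + d₂` (so `i` lies on the geodesic segment
joining the masses), and `m₁ sinh(2 d₁) = m₂ sinh(2 d₂)` holds iff
`m₁ sin²θ₂ cos θ₁ = m₂ cos θ₂ sin²θ₁`: the masses are in canonical configuration iff
their hyperbolic center of mass is `i`. -/
theorem canonical_configuration_iff_center_of_mass_eq_I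
    (θ₁ θ₂ : ℝ) (hθ₁ : θ₁ ∈ Set.Ioo 0 (π / 2)) (hθ₂ : θ₂ ∈ Set.Ioo 0 (π / 2))
    (m₁ m₂ : ℝ) (hm₁ : 0 < m₁) (hm₂ : 0 < m₂)
    (z₁ z₂ : UpperHalfPlane)
    (hz₁ : (z₁ : ℂ) = ⟨Real.cos θ₁, Real.sin θ₁⟩)
    (hz₂ : (z₂ : ℂ) = ⟨-Real.cos θ₂, Real.sin θ₂⟩)
    (d₁ d₂ : ℝ) (hd₁ : d₁ = dist UpperHalfPlane.I z₁) (hd₂ : d₂ = dist UpperHalfPlane.I z₂) :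
    dist z₁ z₂ = d₁ + d₂ ∧
      (m₁ * Real.sinh (2 * d₁) = m₂ * Real.sinh (2 * d₂) ↔
        m₁ * Real.sin θ₂ ^ 2 * Real.cos θ₁ = m₂ * Real.cos θ₂ * Real.sin θ₁ ^ 2) := by
  obtain ⟨ha1, ha2⟩ := hθ₁
  obtain ⟨hb1, hb2⟩ := hθ₂
  have pi2 : π / 2 < π := by linarith [Real.pi_pos]
  have s1 : 0 < Real.sin θ₁ := Real.sin_pos_of_pos_of_lt_pi ha1 (ha2.trans pi2)
  have s2 : 0 < Real.sin θ₂ := Real.sin_pos_of_pos_of_lt_pi hb1 (hb2.trans pi2)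
  have c1 : 0 < Real.cos θ₁ := Real.cos_pos_of_mem_Ioo ⟨by linarith, ha2⟩
  have c2 : 0 < Real.cos θ₂ := Real.cos_pos_of_mem_Ioo ⟨by linarith, hb2⟩
  have im1 : z₁.im = Real.sin θ₁ := by rw [UpperHalfPlane.im, hz₁]
  have im2 : z₂.im = Real.sin θ₂ := by rw [UpperHalfPlane.im, hz₂]
  have hd1nn : 0 ≤ d₁ := hd₁ ▸ dist_nonneg
  have hd2nn : 0 ≤ d₂ := hd₂ ▸ dist_nonneg
  have p1 : Real.sin θ₁ ^ 2 + Real.cos θ₁ ^ 2 = 1 := Real.sin_sq_add_cos_sq θ₁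
  have p2 : Real.sin θ₂ ^ 2 + Real.cos θ₂ ^ 2 = 1 := Real.sin_sq_add_cos_sq θ₂
  have hcosh1 : Real.cosh d₁ = 1 / Real.sin θ₁ := by
    rw [hd₁, UpperHalfPlane.cosh_dist, Complex.dist_eq, Complex.sq_norm,
      UpperHalfPlane.coe_I, hz₁, UpperHalfPlane.I_im, im1]
    simp only [Complex.normSq_apply, Complex.sub_re, Complex.sub_im, Complex.I_re, Complex.I_im]
    field_simp
    ring_nf
    linarith [p1]
  have hcosh2 : Real.cosh d₂ = 1 / Real.sin θ₂ := by
    rw [hd₂, UpperHalfPlane.cosh_dist, Complex.dist_eq, Complex.sq_norm,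
      UpperHalfPlane.coe_I, hz₂, UpperHalfPlane.I_im, im2]
    simp only [Complex.normSq_apply, Complex.sub_re, Complex.sub_im, Complex.I_re, Complex.I_im]
    field_simp
    ring_nf
    linarith [p2]
  have hsinh1 : Real.sinh d₁ = Real.cos θ₁ / Real.sin θ₁ := by
    have hsq : Real.sinh d₁ ^ 2 = (Real.cos θ₁ / Real.sin θ₁) ^ 2 := by
      have h3 : Real.cosh d₁ ^ 2 = Real.sinh d₁ ^ 2 + 1 := Real.cosh_sq d₁
      rw [hcosh1] at h3
      have h4 : Real.sinh d₁ ^ 2 = (1 / Real.sin θ₁) ^ 2 - 1 := by linarith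
      rw [h4]
      field_simp
      linarith [p1]
    have h1 : 0 ≤ Real.sinh d₁ := Real.sinh_nonneg_iff.mpr hd1nn
    have h2 : 0 ≤ Real.cos θ₁ / Real.sin θ₁ := by positivity
    calc Real.sinh d₁ = Real.sqrt (Real.sinh d₁ ^ 2) := (Real.sqrt_sq h1).symm
      _ = Real.sqrt ((Real.cos θ₁ / Real.sin θ₁) ^ 2) := by rw [hsq]
      _ = Real.cos θ₁ / Real.sin θ₁ := Real.sqrt_sq h2
  have hsinh2 : Real.sinh d₂ = Real.cos θ₂ / Real.sin θ₂ := by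
    have hsq : Real.sinh d₂ ^ 2 = (Real.cos θ₂ / Real.sin θ₂) ^ 2 := by
      have h3 : Real.cosh d₂ ^ 2 = Real.sinh d₂ ^ 2 + 1 := Real.cosh_sq d₂
      rw [hcosh2] at h3
      have h4 : Real.sinh d₂ ^ 2 = (1 / Real.sin θ₂) ^ 2 - 1 := by linarith
      rw [h4]
      field_simp
      linarith [p2]
    have h1 : 0 ≤ Real.sinh d₂ := Real.sinh_nonneg_iff.mpr hd2nn
    have h2 : 0 ≤ Real.cos θ₂ / Real.sin θ₂ := by positivity
    calc Real.sinh d₂ = Real.sqrt (Real.sinh d₂ ^ 2) := (Real.sqrt_sq h1).symm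
      _ = Real.sqrt ((Real.cos θ₂ / Real.sin θ₂) ^ 2) := by rw [hsq]
      _ = Real.cos θ₂ / Real.sin θ₂ := Real.sqrt_sq h2
  constructor
  · have key : Real.cosh (dist z₁ z₂) = Real.cosh (d₁ + d₂) := by
      rw [UpperHalfPlane.cosh_dist, Complex.dist_eq, Complex.sq_norm, hz₁, hz₂, im1, im2,
        Real.cosh_add, hcosh1, hcosh2, hsinh1, hsinh2]
      simp only [Complex.normSq_apply, Complex.sub_re, Complex.sub_im]
      field_simp
      linear_combination p1 + p2
    have h1 : |dist z₁ z₂| = |d₁ + d₂| := by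
      by_contra h
      rcases lt_or_gt_of_ne h with h | h
      · exact absurd key (ne_of_lt (Real.cosh_lt_cosh.mpr h))
      · exact absurd key.symm (ne_of_lt (Real.cosh_lt_cosh.mpr h))
    rwa [abs_of_nonneg dist_nonneg, abs_of_nonneg (by linarith)] at h1
  · rw [Real.sinh_two_mul, Real.sinh_two_mul, hcosh1, hcosh2, hsinh1, hsinh2]
    constructor
    · intro h
      field_simp at h
      linear_combination h
    · intro h
      field_simp
      linear_combination h
end

section
/- Given masses m₁, m₂ > 0 and two distinct points z₁, z₂ of ℍ, there exist g ∈ SL(2,ℝ) and angles θ₁, θ₂ ∈ (0, π/2) such that g•z₁ = cos θ₁ + i·sin θ₁, g•z₂ = −cos θ₂ + i·sin θ₂, and m₁·sin²θ₂·cos θ₁ = m₂·cos θ₂·sin²θ₁. That is, any two masses in ℍ can be mapped by an orientation-preserving isometry to the canonical configuration. -/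
open Real

private lemma sl_denom_ne (g : Matrix.SpecialLinearGroup (Fin 2) ℝ) (z : UpperHalfPlane) :
    ((g 1 0 : ℝ) : ℂ) * z + ((g 1 1 : ℝ) : ℂ) ≠ 0 := by
  have h : ![g 1 0, g 1 1] ≠ 0 := by
    intro h
    have h0 : g 1 0 = 0 := congrFun h 0
    have h1 : g 1 1 = 0 := congrFun h 1
    have := g.prop
    rw [Matrix.det_fin_two] at this
    simp only [h0, h1] at this
    norm_num at this
  simpa using UpperHalfPlane.linear_ne_zero (cd := ![g 1 0, g 1 1]) z h

private lemma sl_denom_ne' (g : Matrix.SpecialLinearGroup (Fin 2) ℝ) (z : UpperHalfPlane)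
    (c d : ℝ) (h10 : g 1 0 = c) (h11 : g 1 1 = d) :
    ((c : ℝ) : ℂ) * z + ((d : ℝ) : ℂ) ≠ 0 := by
  subst h10 h11
  exact sl_denom_ne g z

private lemma sl_smul_div (g : Matrix.SpecialLinearGroup (Fin 2) ℝ) (z : UpperHalfPlane)
    (a b c d : ℝ) (h00 : g 0 0 = a) (h01 : g 0 1 = b) (h10 : g 1 0 = c) (h11 : g 1 1 = d) :
    ((g • z : UpperHalfPlane) : ℂ)
      = (((a:ℝ):ℂ) * z + ((b:ℝ):ℂ)) / (((c:ℝ):ℂ) * z + ((d:ℝ):ℂ)) := by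
  subst h00 h01 h10 h11
  rw [UpperHalfPlane.specialLinearGroup_apply]
  simp only [UpperHalfPlane.coe_mk, Algebra.algebraMap_self, RingHom.id_apply]

private lemma sl_smul_eq (g : Matrix.SpecialLinearGroup (Fin 2) ℝ) (z : UpperHalfPlane) (w : ℂ)
    (a b c d : ℝ) (h00 : g 0 0 = a) (h01 : g 0 1 = b) (h10 : g 1 0 = c) (h11 : g 1 1 = d)
    (h : ((a:ℝ):ℂ) * z + ((b:ℝ):ℂ) = w * (((c:ℝ):ℂ) * z + ((d:ℝ):ℂ))) :
    ((g • z : UpperHalfPlane) : ℂ) = w := by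
  rw [sl_smul_div g z a b c d h00 h01 h10 h11, div_eq_iff (sl_denom_ne' g z c d h10 h11), h]


private lemma aux_hu1 (u v : ℝ) (hv0 : 0 < v) (hcirc : u^2 + v^2 = 1) : -1 < u := by
  nlinarith [mul_pos hv0 hv0]

private lemma aux_denpos (u τ : ℝ) (hu1 : -1 < u) (hu0 : u < 0)
    (h1 : 0 ≤ τ) (h2 : τ ≤ -u) : 0 < 1 + τ*u := by
  nlinarith [mul_nonneg h1 (by linarith : (0:ℝ) ≤ -u),
    mul_pos (by linarith : (0:ℝ) < 1-u) (by linarith : (0:ℝ) < 1+u)]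

private lemma aux_U0gt (τ u : ℝ) (hτ : 0 < τ) (hτ1 : τ < 1) (hu1 : -1 < u) (hu0 : u < 0)
    (hD : 0 < 1 + τ*u) : -1 < (τ+u)/(1+τ*u) := by
  rw [lt_div_iff₀ hD]
  nlinarith [mul_pos (by linarith : (0:ℝ) < 1+τ) (by linarith : (0:ℝ) < 1+u)]

private lemma aux_1τ (τ : ℝ) (h0 : 0 < τ) (h1 : τ < 1) : 0 < 1 - τ^2 := by nlinarith

private lemma aux_ab (τ C a b : ℝ) (hτ : 0 < τ) (hC : 0 < C)
    (hC2 : C^2*(1-τ^2) = 1) (ha2 : a^2 = (C+1)/2) (hb2 : b^2 = (C-1)/2)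
    (ha0 : 0 ≤ a) (hb0 : 0 ≤ b) : 2*a*b = τ*C := by
  have hsq : (2*a*b)^2 = (τ*C)^2 := by
    linear_combination 4*b^2*ha2 + 2*(C+1)*hb2 + hC2
  have h2ab : 0 ≤ 2*a*b := by positivity
  have hτC : 0 ≤ τ*C := by positivity
  rw [← Real.sqrt_sq h2ab, hsq, Real.sqrt_sq hτC]

private lemma aux_V2 (τ u σ v U0 V : ℝ) (hD : 0 < 1+τ*u) (hU0 : U0*(1+τ*u) = τ+u)
    (hV : V*(1+τ*u) = σ*v) (hσ2 : σ^2 = 1-τ^2) (hv2 : v^2 = 1-u^2) :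
    V^2 = 1-U0^2 := by
  have hkey : (V^2 - (1 - U0^2)) * (1+τ*u)^2 = 0 := by
    linear_combination (V*(1+τ*u)+σ*v)*hV + (U0*(1+τ*u)+τ+u)*hU0
      + v^2*hσ2 + (1-τ^2)*hv2
  have := mul_eq_zero.1 hkey
  rcases this with h | h
  · linarith
  · exact absurd h (by positivity)

set_option maxHeartbeats 1000000 in
/-- Any two point masses `m₁, m₂ > 0` at distinct points `z₁ ≠ z₂` of `ℍ`
can be mapped by an element of `SL(2,ℝ)` (acting by Möbius transformations, i.e. by
orientation-preserving isometries) to the canonical configuration: `g • z₁ = cos θ₁ + i sin θ₁`,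
`g • z₂ = -cos θ₂ + i sin θ₂` with `θ₁, θ₂ ∈ (0, π/2)` and
`m₁ sin²θ₂ cos θ₁ = m₂ cos θ₂ sin²θ₁`. -/
theorem exists_SL2_map_to_canonical_configuration
    (m₁ m₂ : ℝ) (hm₁ : 0 < m₁) (hm₂ : 0 < m₂)
    (z₁ z₂ : UpperHalfPlane) (hz : z₁ ≠ z₂) :
    ∃ (g : Matrix.SpecialLinearGroup (Fin 2) ℝ) (θ₁ θ₂ : ℝ),
      θ₁ ∈ Set.Ioo 0 (π / 2) ∧ θ₂ ∈ Set.Ioo 0 (π / 2) ∧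
      ((g • z₁ : UpperHalfPlane) : ℂ) = ⟨Real.cos θ₁, Real.sin θ₁⟩ ∧
      ((g • z₂ : UpperHalfPlane) : ℂ) = ⟨-Real.cos θ₂, Real.sin θ₂⟩ ∧
      m₁ * Real.sin θ₂ ^ 2 * Real.cos θ₁ = m₂ * Real.cos θ₂ * Real.sin θ₁ ^ 2 := by
  classical
  -- ## Stage A : map `z₁` to `i`
  set x := z₁.re with hx
  set y := z₁.im with hy
  have hy0 : 0 < y := z₁.im_pos
  set sy := Real.sqrt y with hsy
  have hsy0 : 0 < sy := Real.sqrt_pos.2 hy0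
  have hsysq : sy * sy = y := Real.mul_self_sqrt hy0.le
  set A : Matrix.SpecialLinearGroup (Fin 2) ℝ :=
    ⟨!![1/sy, -x/sy; 0, sy], by rw [Matrix.det_fin_two_of]; field_simp; ring⟩ with hA
  have hAz : ((A • z₁ : UpperHalfPlane) : ℂ) = Complex.I := by
    apply sl_smul_eq A z₁ Complex.I (1/sy) (-x/sy) 0 sy (by simp [hA]) (by simp [hA])
      (by simp [hA]) (by simp [hA])
    have hzc : (z₁ : ℂ) = Complex.mk x y := by
      apply Complex.ext <;> simp [hx, hy]
    rw [hzc]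
    have hsyC : (sy : ℂ) ≠ 0 := by exact_mod_cast hsy0.ne'
    push_cast
    field_simp
    rw [Complex.ext_iff]
    constructor <;> simp <;> nlinarith [hsysq]
  -- the image of `z₂` is not `i`
  have hwI : ((A • z₂ : UpperHalfPlane) : ℂ) ≠ Complex.I := by
    intro h
    apply hz
    have : A • z₁ = A • z₂ := UpperHalfPlane.ext (by rw [hAz, h])
    exact MulAction.injective A this
  -- ## Stage B : rotate about `i`, putting the image of `z₂` on the unit circle, left side
  set w : UpperHalfPlane := A • z₂ with hw
  set p := (w : ℂ).re with hp
  set q := (w : ℂ).im with hq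
  have hq0 : 0 < q := w.im_pos
  set A0 : ℝ := p^2 + q^2 - 1 with hA0
  set B0 : ℝ := 2*p with hB0
  have hAB : 0 < A0^2 + B0^2 := by
    rcases lt_or_eq_of_le (by positivity : (0:ℝ) ≤ A0^2 + B0^2) with h | h
    · exact h
    · exfalso
      obtain ⟨hA00, hB00⟩ :=
        (add_eq_zero_iff_of_nonneg (sq_nonneg A0) (sq_nonneg B0)).1 h.symm
      have hA01 : A0 = 0 := by
        have := sq_eq_zero_iff.1 hA00; exact this
      have hB01 : B0 = 0 := by
        have := sq_eq_zero_iff.1 hB00; exact this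
      have hp0 : p = 0 := by rw [hB0] at hB01; linarith
      have hq2 : q^2 = 1 := by linear_combination -hA0 + hA01 - p*hp0
      have hq1 : q = 1 := by
        have hfac : (q-1)*(q+1) = 0 := by linear_combination hq2
        rcases mul_eq_zero.1 hfac with h' | h'
        · linarith
        · linarith
      exact hwI (Complex.ext (by rw [Complex.I_re]; exact hp0) (by rw [Complex.I_im]; exact hq1))
  set R := Real.sqrt (A0^2 + B0^2) with hR
  have hR0 : 0 < R := Real.sqrt_pos.2 hAB
  have hR2 : R^2 = A0^2 + B0^2 := Real.sq_sqrt hAB.le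
  set X : ℝ := -B0/R with hX'
  set Y : ℝ := A0/R with hY'
  have hRX : R * X = -B0 := by rw [hX']; field_simp
  have hRY : R * Y = A0 := by rw [hY']; field_simp
  have hXY : X^2 + Y^2 = 1 := by
    have h2 : (R:ℝ)^2 ≠ 0 := by positivity
    have h1 : R^2 * (X^2 + Y^2) = R^2 * 1 := by
      rw [mul_one]
      linear_combination (R*X - B0)*hRX + (R*Y + A0)*hRY - hR2
    exact mul_left_cancel₀ h2 h1
  set u0 : ℂ := ⟨X, Y⟩ with hu0
  have habs : ‖u0‖ = 1 := by
    rw [Complex.norm_def, Complex.normSq_mk]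
    rw [show X*X + Y*Y = 1 by linear_combination hXY]
    exact Real.sqrt_one
  have hu0ne : u0 ≠ 0 := by
    intro h; rw [h] at habs; simp at habs
  set ψ := Complex.arg u0 with hψ
  set c := Real.cos (ψ/2) with hc
  set s := Real.sin (ψ/2) with hs
  have hcs : c^2 + s^2 = 1 := by rw [hc, hs]; linear_combination Real.sin_sq_add_cos_sq (ψ/2)
  have hXc : c^2 - s^2 = X := by
    have h2 : Real.cos (2 * (ψ/2)) = X := by
      rw [show 2 * (ψ/2) = ψ by ring, hψ, Complex.cos_arg hu0ne, habs]
      simp [hu0]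
    rw [hc, hs, ← Real.cos_two_mul', h2]
  have hYs : 2*s*c = Y := by
    have h2 : Real.sin (2 * (ψ/2)) = Y := by
      rw [show 2 * (ψ/2) = ψ by ring, hψ, Complex.sin_arg, habs]
      simp [hu0]
    rw [hc, hs, ← Real.sin_two_mul, h2]
  set K : Matrix.SpecialLinearGroup (Fin 2) ℝ :=
    ⟨!![c, s; -s, c], by rw [Matrix.det_fin_two_of]; linear_combination hcs⟩ with hK
  -- image of i stays i
  have hKI : ((K • (A • z₁) : UpperHalfPlane) : ℂ) = Complex.I := by
    apply sl_smul_eq K (A • z₁) Complex.I c s (-s) c (by simp [hK]) (by simp [hK])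
      (by simp [hK]) (by simp [hK])
    rw [hAz]
    push_cast
    rw [Complex.ext_iff]
    constructor <;> simp
  -- image of w
  set w₂ : UpperHalfPlane := K • w with hw₂
  have hden : ((-s : ℝ) : ℂ) * w + ((c:ℝ):ℂ) ≠ 0 :=
    sl_denom_ne' K w (-s) c (by simp [hK]) (by simp [hK])
  have hw₂c : (w₂ : ℂ) = (((c:ℝ):ℂ) * w + ((s:ℝ):ℂ)) / (((-s:ℝ):ℂ) * w + ((c:ℝ):ℂ)) := by
    rw [hw₂]
    exact sl_smul_div K w c s (-s) c (by simp [hK]) (by simp [hK]) (by simp [hK]) (by simp [hK])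
  have hnum_eq : Complex.normSq (((c:ℝ):ℂ) * w + ((s:ℝ):ℂ))
      = Complex.normSq (((-s:ℝ):ℂ) * w + ((c:ℝ):ℂ)) := by
    simp only [Complex.normSq_apply, Complex.add_re, Complex.add_im, Complex.mul_re,
      Complex.mul_im, Complex.ofReal_re, Complex.ofReal_im, ← hp, ← hq]
    linear_combination (-(c^2-s^2))*hA0 + 2*p*hYs + A0*hXc - X*hRY - Y*hB0 + Y*hRX
  have hd2 : 0 < Complex.normSq (((-s:ℝ):ℂ) * w + ((c:ℝ):ℂ)) := Complex.normSq_pos.mpr hden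
  have hkey2 : (((c:ℝ):ℂ) * w + ((s:ℝ):ℂ)).re * ((((-s:ℝ):ℂ)) * w + ((c:ℝ):ℂ)).re
      + (((c:ℝ):ℂ) * w + ((s:ℝ):ℂ)).im * ((((-s:ℝ):ℂ)) * w + ((c:ℝ):ℂ)).im = -R/2 := by
    simp only [Complex.add_re, Complex.add_im, Complex.mul_re, Complex.mul_im,
      Complex.ofReal_re, Complex.ofReal_im, ← hp, ← hq]
    linear_combination p*hXc + s*c*hA0 + (X/2)*hRX - (X/2)*hB0 + (Y/2)*hRY
      - (A0/2)*hYs - (R/2)*hXY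
  have hre : (w₂ : ℂ).re < 0 := by
    rw [hw₂c, Complex.div_re, ← add_div, hkey2]
    exact div_neg_of_neg_of_pos (by linarith) hd2
  have hns : Complex.normSq (w₂ : ℂ) = 1 := by
    rw [hw₂c, map_div₀, hnum_eq, div_self hd2.ne']
  -- coordinates of the new position of `z₂`
  set u := (w₂ : ℂ).re with hu'
  set v := (w₂ : ℂ).im with hv'
  have hv0 : 0 < v := w₂.im_pos
  have hcirc : u^2 + v^2 = 1 := by
    rw [Complex.normSq_apply, ← hu', ← hv'] at hns
    linear_combination hns
  have hu0' : u < 0 := hre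
  have hv2 : v^2 = 1 - u^2 := by linear_combination hcirc
  have hu1 : -1 < u := aux_hu1 u v hv0 hcirc
  -- ## Stage C : slide along the unit half-circle; intermediate value theorem
  set f : ℝ → ℝ := fun τ =>
    m₁ * (1 - ((τ+u)/(1+τ*u))^2) * τ - m₂ * (-((τ+u)/(1+τ*u))) * (1-τ^2) with hf
  have hdenpos : ∀ τ ∈ Set.Icc (0:ℝ) (-u), 0 < 1 + τ*u := by
    intro τ hτ
    rcases hτ with ⟨h1, h2⟩
    exact aux_denpos u τ hu1 hu0' h1 h2
  have hUcont : ContinuousOn (fun τ => (τ+u)/(1+τ*u)) (Set.Icc 0 (-u)) := by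
    apply ContinuousOn.div
    · fun_prop
    · fun_prop
    · intro τ hτ; exact (hdenpos τ hτ).ne'
  have hfcont : ContinuousOn f (Set.Icc 0 (-u)) := by
    rw [hf]
    apply ContinuousOn.sub
    · exact (continuousOn_const.mul (continuousOn_const.sub (hUcont.pow 2))).mul
        continuousOn_id
    · exact (continuousOn_const.mul hUcont.neg).mul
        (continuousOn_const.sub (continuousOn_id.pow 2))
  have hf0 : f 0 = m₂ * u := by rw [hf]; norm_num
  have hfu : f (-u) = -(m₁ * u) := by rw [hf]; norm_num
  have h0u : (0:ℝ) ≤ -u := by linarith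
  have hm₂u : m₂ * u < 0 := mul_neg_of_pos_of_neg hm₂ hu0'
  have hm₁u : m₁ * u < 0 := mul_neg_of_pos_of_neg hm₁ hu0'
  have h0mem : (0:ℝ) ∈ Set.Icc (f 0) (f (-u)) := by
    rw [hf0, hfu]
    constructor
    · linarith
    · linarith
  obtain ⟨τ, hτIcc, hfτ⟩ := intermediate_value_Icc h0u hfcont h0mem
  have hτ0 : τ ≠ 0 := by
    intro h; rw [h, hf0] at hfτ; linarith
  have hτu : τ ≠ -u := by
    intro h; rw [h, hfu] at hfτ; linarith
  have hτpos : 0 < τ := lt_of_le_of_ne hτIcc.1 (Ne.symm hτ0)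
  have hτlt : τ < -u := lt_of_le_of_ne hτIcc.2 hτu
  have hτ1 : τ < 1 := by linarith
  have hD : 0 < 1 + τ*u := hdenpos τ hτIcc
  set U0 : ℝ := (τ+u)/(1+τ*u) with hU0'
  have hU0neg : U0 < 0 := div_neg_of_neg_of_pos (by linarith) hD
  have hU0gt : -1 < U0 := by
    rw [hU0']
    exact aux_U0gt τ u hτpos hτ1 hu1 hu0' hD
  have hU0D : U0 * (1+τ*u) = τ + u := by rw [hU0']; field_simp
  -- the translation matrix
  have h1τ : 0 < 1 - τ^2 := aux_1τ τ hτpos hτ1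
  set σ := Real.sqrt (1-τ^2) with hσ'
  have hσpos : 0 < σ := Real.sqrt_pos.2 h1τ
  have hσ2 : σ^2 = 1-τ^2 := Real.sq_sqrt h1τ.le
  set C : ℝ := 1/σ with hC'
  have hCpos : 0 < C := by rw [hC']; positivity
  have hCσ : C * σ = 1 := by rw [hC']; field_simp
  have hC1 : 1 ≤ C := by
    rw [hC', le_div_iff₀ hσpos, one_mul, hσ']
    exact Real.sqrt_le_one.2 (sub_le_self 1 (sq_nonneg τ))
  have hC2 : C^2*(1-τ^2) = 1 := by
    linear_combination (C*σ+1)*hCσ - C^2*hσ2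
  set a := Real.sqrt ((C+1)/2) with ha'
  set b := Real.sqrt ((C-1)/2) with hb'
  have ha2 : a^2 = (C+1)/2 := Real.sq_sqrt (by linarith)
  have hb2 : b^2 = (C-1)/2 := Real.sq_sqrt (by linarith)
  have ha0 : 0 ≤ a := Real.sqrt_nonneg _
  have hb0 : 0 ≤ b := Real.sqrt_nonneg _
  have hab : 2*a*b = τ*C := aux_ab τ C a b hτpos hCpos hC2 ha2 hb2 ha0 hb0
  have hdet2 : a^2 - b^2 = 1 := by rw [ha2, hb2]; ring
  have hS : a^2 + b^2 = C := by rw [ha2, hb2]; ring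
  have hSpos : 0 < a^2 + b^2 := by rw [hS]; exact hCpos
  have hab2 : 2*a*b = τ*(a^2+b^2) := by rw [hS]; exact hab
  have hσS : σ*(a^2+b^2) = 1 := by rw [hS]; linarith [hCσ]
  set H : Matrix.SpecialLinearGroup (Fin 2) ℝ :=
    ⟨!![a, b; b, a], by rw [Matrix.det_fin_two_of]; linear_combination hdet2⟩ with hH
  -- final positions
  have hHz₁ : ((H • (K • (A • z₁)) : UpperHalfPlane) : ℂ) = ⟨τ, σ⟩ := by
    apply sl_smul_eq H (K • (A • z₁)) _ a b b a (by simp [hH]) (by simp [hH])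
      (by simp [hH]) (by simp [hH])
    rw [hKI]
    rw [Complex.ext_iff]
    simp only [Complex.add_re, Complex.add_im, Complex.mul_re, Complex.mul_im,
      Complex.ofReal_re, Complex.ofReal_im, Complex.I_re, Complex.I_im]
    have e1 : (b - (τ*a - σ*b)) * (a^2+b^2) = 0 := by
      linear_combination a*hab2 + b*hσS - b*hdet2
    have e1' : b - (τ*a - σ*b) = 0 := by
      rcases mul_eq_zero.1 e1 with h | h
      · exact h
      · exact absurd h hSpos.ne'
    have e2 : (a - (τ*b + σ*a)) * (a^2+b^2) = 0 := by
      linear_combination b*hab2 - a*hσS + a*hdet2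
    have e2' : a - (τ*b + σ*a) = 0 := by
      rcases mul_eq_zero.1 e2 with h | h
      · exact h
      · exact absurd h hSpos.ne'
    constructor
    · linarith [e1']
    · linarith [e2']
  set V : ℝ := σ*v/(1+τ*u) with hV'
  have hVpos : 0 < V := by rw [hV']; positivity
  have hVD : V * (1+τ*u) = σ*v := by rw [hV']; field_simp
  have hHz₂ : ((H • w₂ : UpperHalfPlane) : ℂ) = ⟨U0, V⟩ := by
    apply sl_smul_eq H w₂ _ a b b a (by simp [hH]) (by simp [hH])
      (by simp [hH]) (by simp [hH])
    rw [Complex.ext_iff]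
    simp only [Complex.add_re, Complex.add_im, Complex.mul_re, Complex.mul_im,
      Complex.ofReal_re, Complex.ofReal_im, ← hu', ← hv']
    have hDS : 0 < (1+τ*u)*(a^2+b^2) := mul_pos hD hSpos
    have e1 : (a*u + b - (U0*(b*u+a) - V*(b*v))) * ((1+τ*u)*(a^2+b^2)) = 0 := by
      linear_combination v^2*(a*hab2 - b*hdet2) - (a^2+b^2)*(b-a*τ)*hcirc
        + b*v^2*hσS - (b*u+a)*(a^2+b^2)*hU0D + b*v*(a^2+b^2)*hVD
    have e1' : a*u + b - (U0*(b*u+a) - V*(b*v)) = 0 := by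
      rcases mul_eq_zero.1 e1 with h | h
      · exact h
      · exact absurd h hDS.ne'
    have e2 : (a*v - (U0*(b*v) + V*(b*u+a))) * ((1+τ*u)*(a^2+b^2)) = 0 := by
      linear_combination v*((b*hab2 - a*hσS + a*hdet2) - u*(a*hab2 + b*hσS - b*hdet2))
        - b*v*(a^2+b^2)*hU0D - (b*u+a)*(a^2+b^2)*hVD
    have e2' : a*v - (U0*(b*v) + V*(b*u+a)) = 0 := by
      rcases mul_eq_zero.1 e2 with h | h
      · exact h
      · exact absurd h hDS.ne'
    constructor
    · linarith [e1']
    · linarith [e2']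
  have hV2 : V^2 = 1 - U0^2 := aux_V2 τ u σ v U0 V hD hU0D hVD hσ2 hv2
  -- assemble
  refine ⟨H * (K * A), Real.arccos τ, Real.arccos (-U0), ?_, ?_, ?_, ?_, ?_⟩
  · exact ⟨Real.arccos_pos.2 hτ1, Real.arccos_lt_pi_div_two.2 hτpos⟩
  · exact ⟨Real.arccos_pos.2 (by linarith), Real.arccos_lt_pi_div_two.2 (by linarith)⟩
  · rw [mul_smul, mul_smul, hHz₁]
    rw [Real.cos_arccos (show (-1:ℝ) ≤ τ by linarith) (show τ ≤ 1 by linarith),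
      Real.sin_arccos, ← hσ']
  · rw [mul_smul, mul_smul, ← hw, ← hw₂, hHz₂]
    rw [Real.cos_arccos (show (-1:ℝ) ≤ -U0 by linarith) (show -U0 ≤ 1 by linarith),
      Real.sin_arccos]
    rw [show (1 - (-U0)^2) = V^2 by rw [hV2]; ring, Real.sqrt_sq hVpos.le, neg_neg]
  · rw [Real.cos_arccos (show (-1:ℝ) ≤ τ by linarith) (show τ ≤ 1 by linarith),
      Real.cos_arccos (show (-1:ℝ) ≤ -U0 by linarith) (show -U0 ≤ 1 by linarith)]
    rw [Real.sin_arccos, Real.sin_arccos]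
    rw [Real.sq_sqrt (by rw [show (1:ℝ) - (-U0)^2 = V^2 by rw [hV2]; ring]; exact sq_nonneg V),
      Real.sq_sqrt h1τ.le]
    have hfτ' : m₁ * (1 - U0^2) * τ - m₂ * (-U0) * (1-τ^2) = 0 := by
      simp only [hf] at hfτ
      rw [← hU0'] at hfτ
      linarith [hfτ]
    linear_combination hfτ'
end

section
/- Let c₁, c₂ ∈ (0,1) and E, H, P ∈ ℝ. Then the 2×2 real matrix [[P·(E−P), −H·((1+c₁c₂)E − (1+2c₁c₂)P)], [−H·((1+c₁c₂)E − P), −P·(E−P)]] is the zero matrix if and only if (E = 0 and P = 0) or (H = 0 and P = 0) or (H = 0 and E = P). Consequently, the velocity ξ = E·ξ_e + H·ξ_h + P·ξ_p of a relative equilibrium in canonical configuration can never be a parabolic element (the case H = E = 0, P ≠ 0 is excluded). -/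
/-- For `c₁, c₂ ∈ (0,1)` (standing for `cos θ₁, cos θ₂` of a canonical
configuration) and `E, H, P ∈ ℝ`, the commutator matrix
`!![P(E-P), -H((1+c₁c₂)E - (1+2c₁c₂)P); -H((1+c₁c₂)E - P), -P(E-P)]` vanishes iff
`(E = 0 ∧ P = 0) ∨ (H = 0 ∧ P = 0) ∨ (H = 0 ∧ E = P)`; consequently the velocity
`ξ = E ξ_e + H ξ_h + P ξ_p` of a relative equilibrium can never be parabolic: the case
`H = E = 0`, `P ≠ 0` is excluded. -/
theorem commutator_vanishing_excludes_parabolic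
    (c₁ c₂ : ℝ) (hc₁ : c₁ ∈ Set.Ioo (0 : ℝ) 1) (hc₂ : c₂ ∈ Set.Ioo (0 : ℝ) 1)
    (E H P : ℝ) :
    (!![P * (E - P), -H * ((1 + c₁ * c₂) * E - (1 + 2 * c₁ * c₂) * P);
        -H * ((1 + c₁ * c₂) * E - P), -(P * (E - P))] = (0 : Matrix (Fin 2) (Fin 2) ℝ) ↔
      (E = 0 ∧ P = 0) ∨ (H = 0 ∧ P = 0) ∨ (H = 0 ∧ E = P)) ∧
    (!![P * (E - P), -H * ((1 + c₁ * c₂) * E - (1 + 2 * c₁ * c₂) * P);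
        -H * ((1 + c₁ * c₂) * E - P), -(P * (E - P))] = (0 : Matrix (Fin 2) (Fin 2) ℝ) →
      H = 0 → E = 0 → P = 0) := by
  obtain ⟨hc₁0, _⟩ := hc₁
  obtain ⟨hc₂0, _⟩ := hc₂
  have hc : 0 < c₁ * c₂ := mul_pos hc₁0 hc₂0
  have key : (!![P * (E - P), -H * ((1 + c₁ * c₂) * E - (1 + 2 * c₁ * c₂) * P);
        -H * ((1 + c₁ * c₂) * E - P), -(P * (E - P))] = (0 : Matrix (Fin 2) (Fin 2) ℝ) ↔
      (E = 0 ∧ P = 0) ∨ (H = 0 ∧ P = 0) ∨ (H = 0 ∧ E = P)) := by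
    rw [← Matrix.ext_iff]
    constructor
    · intro h
      have h00 := h 0 0
      have h01 := h 0 1
      have h10 := h 1 0
      simp [Matrix.zero_apply] at h00 h01 h10
      have hP : P = 0 ∨ E = P := by
        rcases h00 with h | h
        · exact Or.inl h
        · exact Or.inr (by linarith)
      rcases hP with hP | hEP
      · subst hP
        rcases h10 with h | h
        · exact Or.inr (Or.inl ⟨h, rfl⟩)
        · have hE : E = 0 := by
            have h1 : (1 + c₁ * c₂) ≠ 0 := by positivity
            have h2 : (1 + c₁ * c₂) * E = 0 := by linarith
            exact (mul_eq_zero.mp h2).resolve_left h1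
          exact Or.inl ⟨hE, rfl⟩
      · rcases h10 with h | h
        · exact Or.inr (Or.inr ⟨h, hEP⟩)
        · have hP0 : P = 0 := by
            have h2 : c₁ * c₂ * P = 0 := by
              have : E = P := hEP; nlinarith [h]
            exact (mul_eq_zero.mp h2).resolve_left (ne_of_gt hc)
          exact Or.inl ⟨by rw [hEP, hP0], hP0⟩
    · rintro (⟨hE, hP⟩ | ⟨hH, hP⟩ | ⟨hH, hEP⟩) i j <;>
        subst_vars <;> fin_cases i <;> fin_cases j <;> simp <;> ring
  refine ⟨key, fun h hH hE => ?_⟩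
  rcases key.mp h with ⟨_, hP⟩ | ⟨_, hP⟩ | ⟨_, hEP⟩
  · exact hP
  · exact hP
  · linarith
end

section
/- Let k, m₁, m₂ > 0, θ₁, θ₂ ∈ (0, π/2) with m₁·sin²θ₂·cos θ₁ = m₂·cos θ₂·sin²θ₁, and ω ∈ ℝ. Define on the open set Ω = {(x₁,y₁,x₂,y₂) ∈ ℝ⁴ : y₁ > 0, y₂ > 0, (x₁,y₁) ≠ (x₂,y₂)} the augmented potential V_e(x₁,y₁,x₂,y₂) = V(x₁,y₁,x₂,y₂) − (ω²/8)·Σ_{i=1,2} m_i·(x_i² + (y_i−1)²)·(x_i² + (y_i+1)²)/y_i². Then the point q = (cos θ₁, sin θ₁, −cos θ₂, sin θ₂) is a critical point of V_e (i.e. the Fréchet derivative of V_e at q is zero) if and only if ω² = k·m₁·sin²θ₁·sin⁴θ₂/((cos θ₁ + cos θ₂)²·cos θ₂). -/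
open Real


open Real

private lemma hasDerivAt_div_sqrt {f g : ℝ → ℝ} {f' g' t : ℝ} (hf : HasDerivAt f f' t)
    (hg : HasDerivAt g g' t) (h0 : 0 < g t) :
    HasDerivAt (fun s => f s / Real.sqrt (g s))
      ((f' * Real.sqrt (g t) - f t * (g' / (2 * Real.sqrt (g t)))) / g t) t := by
  have hs : HasDerivAt (fun s => Real.sqrt (g s)) (g' / (2 * Real.sqrt (g t))) t := by
    have h := (Real.hasDerivAt_sqrt (ne_of_gt h0)).comp t hg
    exact h.congr_deriv (by ring)
  have hsn : Real.sqrt (g t) ≠ 0 := by positivity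
  have h2 := hf.div hs hsn
  rw [Real.sq_sqrt h0.le] at h2
  exact h2

set_option maxHeartbeats 1000000 in
private lemma crit_slice1 (k m₁ m₂ ω c₁ s₁ c₂ s₂ : ℝ)
    (hune : c₁ + c₂ ≠ 0) (hs₁ne : s₁ ≠ 0) (hs₂ne : s₂ ≠ 0)
    (hp₁ : c₁ ^ 2 + s₁ ^ 2 = 1) (hp₂ : c₂ ^ 2 + s₂ ^ 2 = 1)
    (hBq : 0 < ((c₁ - -c₂) ^ 2 + (s₁ - s₂) ^ 2) * ((c₁ - -c₂) ^ 2 + (s₁ + s₂) ^ 2))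
    (hBval : ((c₁ - -c₂) ^ 2 + (s₁ - s₂) ^ 2) * ((c₁ - -c₂) ^ 2 + (s₁ + s₂) ^ 2) = (2 * (c₁ + c₂)) ^ 2)
    (hsq : Real.sqrt (((c₁ - -c₂) ^ 2 + (s₁ - s₂) ^ 2) * ((c₁ - -c₂) ^ 2 + (s₁ + s₂) ^ 2)) = 2 * (c₁ + c₂))
    (hdiff : DifferentiableAt ℝ (fun p : ℝ × ℝ × ℝ × ℝ => -(k * m₁ * m₂) * ((p.1 - p.2.2.1) ^ 2 + p.2.1 ^ 2 + p.2.2.2 ^ 2) / Real.sqrt (((p.1 - p.2.2.1) ^ 2 + (p.2.1 - p.2.2.2) ^ 2) * ((p.1 - p.2.2.1) ^ 2 + (p.2.1 + p.2.2.2) ^ 2)) - ω ^ 2 / 8 * (m₁ * (p.1 ^ 2 + (p.2.1 - 1) ^ 2) * (p.1 ^ 2 + (p.2.1 + 1) ^ 2) / p.2.1 ^ 2 + m₂ * (p.2.2.1 ^ 2 + (p.2.2.2 - 1) ^ 2) * (p.2.2.1 ^ 2 + (p.2.2.2 + 1) ^ 2) / p.2.2.2 ^ 2)) ((c₁, s₁,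 -c₂, s₂) : ℝ × ℝ × ℝ × ℝ)) :
    fderiv ℝ (fun p : ℝ × ℝ × ℝ × ℝ => -(k * m₁ * m₂) * ((p.1 - p.2.2.1) ^ 2 + p.2.1 ^ 2 + p.2.2.2 ^ 2) / Real.sqrt (((p.1 - p.2.2.1) ^ 2 + (p.2.1 - p.2.2.2) ^ 2) * ((p.1 - p.2.2.1) ^ 2 + (p.2.1 + p.2.2.2) ^ 2)) - ω ^ 2 / 8 * (m₁ * (p.1 ^ 2 + (p.2.1 - 1) ^ 2) * (p.1 ^ 2 + (p.2.1 + 1) ^ 2) / p.2.1 ^ 2 + m₂ * (p.2.2.1 ^ 2 + (p.2.2.2 - 1) ^ 2) * (p.2.2.1 ^ 2 + (p.2.2.2 + 1) ^ 2) / p.2.2.2 ^ 2)) ((c₁, s₁, -c₂, s₂) : ℝ × ℝ × ℝ × ℝ) (((1:ℝ), (0:ℝ), (0:ℝ), (0:ℝ)) : ℝ × ℝ × ℝ × ℝ) = k * m₁ * m₂ * s₁ ^ 2 * s₂ ^ 2 / (c₁ + c₂) ^ 2 - ω ^ 2 * m₁ * c₁ / s₁ ^ 2 := by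
  have hγ : HasDerivAt (fun t : ℝ => (((t, s₁, -c₂, s₂)) : ℝ × ℝ × ℝ × ℝ)) (((1:ℝ), (0:ℝ), (0:ℝ), (0:ℝ)) : ℝ × ℝ × ℝ × ℝ) c₁ :=
    (hasDerivAt_id c₁).prodMk ((hasDerivAt_const c₁ s₁).prodMk ((hasDerivAt_const c₁ (-c₂)).prodMk (hasDerivAt_const c₁ s₂)))
  have hg := (hasDerivAt_div_sqrt (HasDerivAt.const_mul (-(k * m₁ * m₂)) (((((hasDerivAt_id c₁).sub_const (-c₂)).pow 2).add_const (s₁ ^ 2)).add_const (s₂ ^ 2))) (((((hasDerivAt_id c₁).sub_const (-c₂)).pow 2).add_const ((s₁ - s₂) ^ 2)).mul ((((hasDerivAt_id c₁).sub_const (-c₂)).pow 2).add_const ((s₁ + s₂) ^ 2))) hBq).sub ((((((((hasDerivAt_id c₁).pow 2).add_const ((s₁ - 1) ^ 2)).const_mul m₁).mul (((hasDerivAt_id c₁).pow 2).add_const ((s₁ + 1) ^ 2))).div_const (s₁ ^ 2)).add_const (m₂ * ((-c₂) ^ 2 + (s₂ - 1) ^ 2) * ((-c₂) ^ 2 + (s₂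 + 1) ^ 2) / s₂ ^ 2)).const_mul (ω ^ 2 / 8))
  have hcomp := hdiff.hasFDerivAt.comp_hasDerivAt c₁ hγ
  simp only [Function.comp_def] at hcomp
  simp only [id_eq] at hg
  rw [hcomp.unique hg]
  simp only [Nat.reduceSub, pow_one, Nat.cast_ofNat, Pi.pow_apply, Pi.add_apply, Pi.mul_apply, Pi.sub_apply, id_eq, id]
  rw [hsq, hBval]
  field_simp
  linear_combination (-64*k*m₁*m₂*c₁^3 + -128*k*m₁*m₂*c₁^2*c₂ + -96*k*m₁*m₂*c₁*c₂^2 + 64*k*m₁*m₂*c₁^3*c₂^2 + 16*k*m₁*m₂*c₁^3*s₁^2 + 64*k*m₁*m₂*c₁^3*s₂^2 + 128*k*m₁*m₂*c₁^2*c₂^3 + 80*k*m₁*m₂*c₁^2*s₁^2*c₂ + 128*k*m₁*m₂*c₁^2*c₂*s₂^2 + 80*k*m₁*m₂*c₁*c₂^4 + 96*k*m₁*m₂*c₁*s₁^2*c₂^2 + 96*k*m₁*m₂*c₁*c₂^2*s₂^2 + 16*k*m₁*m₂*c₁*s₁^4 + -32*k*m₁*m₂*c₁*s₁^2*s₂^2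 + 16*k*m₁*m₂*c₁*s₂^4 + -32*k*m₁*m₂*c₂^3 + 16*k*m₁*m₂*c₂^5 + 32*k*m₁*m₂*s₁^2*c₂^3 + 32*k*m₁*m₂*c₂^3*s₂^2 + 16*k*m₁*m₂*s₁^4*c₂ + -32*k*m₁*m₂*s₁^2*c₂*s₂^2 + 16*k*m₁*m₂*c₂*s₂^4 + -32*m₁*ω^2*c₁^4 + -96*m₁*ω^2*c₁^3*c₂ + -96*m₁*ω^2*c₁^2*c₂^2 + -32*m₁*ω^2*c₁*c₂^3 + 16*k*m₁*m₂*c₁*s₁^2 + -32*k*m₁*m₂*c₁*s₂^2 + 16*k*m₁*m₂*s₁^2*c₂ + -32*k*m₁*m₂*c₂*s₂^2 + 16*k*m₁*m₂*c₁ + 16*k*m₁*m₂*c₂) * hp₁ + (-64*k*m₁*m₂*c₁^5 + 80*k*m₁*m₂*c₁^3 + -128*k*m₁*m₂*c₁^4*c₂ + 144*k*m₁*m₂*c₁^2*c₂ + -80*k*m₁*m₂*c₁^3*c₂^2 + 80*k*m₁*m₂*c₁*c₂^2 + -16*k*m₁*m₂*c₁^3*s₂^2 + 16*k*m₁*m₂*c₁*s₂^2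 + -16*k*m₁*m₂*c₁^2*c₂^3 + 16*k*m₁*m₂*c₂^3 + -16*k*m₁*m₂*c₁^2*c₂*s₂^2 + 16*k*m₁*m₂*c₂*s₂^2 + -16*k*m₁*m₂*c₁ + -16*k*m₁*m₂*c₂) * hp₂

set_option maxHeartbeats 1000000 in
private lemma crit_slice2 (k m₁ m₂ ω c₁ s₁ c₂ s₂ : ℝ)
    (hune : c₁ + c₂ ≠ 0) (hs₁ne : s₁ ≠ 0) (hs₂ne : s₂ ≠ 0)
    (hp₁ : c₁ ^ 2 + s₁ ^ 2 = 1) (hp₂ : c₂ ^ 2 + s₂ ^ 2 = 1)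
    (hBq : 0 < ((c₁ - -c₂) ^ 2 + (s₁ - s₂) ^ 2) * ((c₁ - -c₂) ^ 2 + (s₁ + s₂) ^ 2))
    (hBval : ((c₁ - -c₂) ^ 2 + (s₁ - s₂) ^ 2) * ((c₁ - -c₂) ^ 2 + (s₁ + s₂) ^ 2) = (2 * (c₁ + c₂)) ^ 2)
    (hsq : Real.sqrt (((c₁ - -c₂) ^ 2 + (s₁ - s₂) ^ 2) * ((c₁ - -c₂) ^ 2 + (s₁ + s₂) ^ 2)) = 2 * (c₁ + c₂))
    (hdiff : DifferentiableAt ℝ (fun p : ℝ × ℝ × ℝ × ℝ => -(k * m₁ * m₂) * ((p.1 - p.2.2.1) ^ 2 + p.2.1 ^ 2 + p.2.2.2 ^ 2) / Real.sqrt (((p.1 - p.2.2.1) ^ 2 + (p.2.1 - p.2.2.2) ^ 2) * ((p.1 - p.2.2.1) ^ 2 + (p.2.1 + p.2.2.2) ^ 2)) - ω ^ 2 / 8 * (m₁ * (p.1 ^ 2 + (p.2.1 - 1) ^ 2) * (p.1 ^ 2 + (p.2.1 + 1) ^ 2) / p.2.1 ^ 2 + m₂ * (p.2.2.1 ^ 2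 + (p.2.2.2 - 1) ^ 2) * (p.2.2.1 ^ 2 + (p.2.2.2 + 1) ^ 2) / p.2.2.2 ^ 2)) ((c₁, s₁, -c₂, s₂) : ℝ × ℝ × ℝ × ℝ)) :
    fderiv ℝ (fun p : ℝ × ℝ × ℝ × ℝ => -(k * m₁ * m₂) * ((p.1 - p.2.2.1) ^ 2 + p.2.1 ^ 2 + p.2.2.2 ^ 2) / Real.sqrt (((p.1 - p.2.2.1) ^ 2 + (p.2.1 - p.2.2.2) ^ 2) * ((p.1 - p.2.2.1) ^ 2 + (p.2.1 + p.2.2.2) ^ 2)) - ω ^ 2 / 8 * (m₁ * (p.1 ^ 2 + (p.2.1 - 1) ^ 2) * (p.1 ^ 2 + (p.2.1 + 1) ^ 2) / p.2.1 ^ 2 + m₂ * (p.2.2.1 ^ 2 + (p.2.2.2 - 1) ^ 2) * (p.2.2.1 ^ 2 + (p.2.2.2 + 1) ^ 2) / p.2.2.2 ^ 2)) ((c₁, s₁, -c₂, s₂) : ℝ × ℝ × ℝ × ℝ) (((0:ℝ), (1:ℝ), (0:ℝ), (0:ℝ)) : ℝ × ℝ × ℝ × ℝ) = -(k * m₁ *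 m₂ * c₁ * s₁ * s₂ ^ 2 / (c₁ + c₂) ^ 2) + ω ^ 2 * m₁ * c₁ ^ 2 / s₁ ^ 3 := by
  have hγ : HasDerivAt (fun t : ℝ => (((c₁, t, -c₂, s₂)) : ℝ × ℝ × ℝ × ℝ)) (((0:ℝ), (1:ℝ), (0:ℝ), (0:ℝ)) : ℝ × ℝ × ℝ × ℝ) s₁ :=
    (hasDerivAt_const s₁ c₁).prodMk ((hasDerivAt_id s₁).prodMk ((hasDerivAt_const s₁ (-c₂)).prodMk (hasDerivAt_const s₁ s₂)))
  have hg := (hasDerivAt_div_sqrt (HasDerivAt.const_mul (-(k * m₁ * m₂)) (((hasDerivAt_const s₁ ((c₁ - -c₂) ^ 2)).add ((hasDerivAt_id s₁).pow 2)).add_const (s₂ ^ 2))) (((hasDerivAt_const s₁ ((c₁ - -c₂) ^ 2)).add (((hasDerivAt_id s₁).sub_const s₂).pow 2)).mul ((hasDerivAt_const s₁ ((c₁ - -c₂) ^ 2)).add (((hasDerivAt_id s₁).add_const s₂).pow 2))) hBq).sub (((((((hasDerivAt_const s₁ (c₁ ^ 2)).add (((hasDerivAt_id s₁).sub_const 1).pow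 2)).const_mul m₁).mul ((hasDerivAt_const s₁ (c₁ ^ 2)).add (((hasDerivAt_id s₁).add_const 1).pow 2))).div ((hasDerivAt_id s₁).pow 2) (pow_ne_zero 2 hs₁ne)).add_const (m₂ * ((-c₂) ^ 2 + (s₂ - 1) ^ 2) * ((-c₂) ^ 2 + (s₂ + 1) ^ 2) / s₂ ^ 2)).const_mul (ω ^ 2 / 8))
  have hcomp := hdiff.hasFDerivAt.comp_hasDerivAt s₁ hγ
  simp only [Function.comp_def] at hcomp
  simp only [id_eq] at hg
  rw [hcomp.unique hg]
  simp only [Nat.reduceSub, pow_one, Nat.cast_ofNat, Pi.pow_apply, Pi.add_apply, Pi.mul_apply, Pi.sub_apply, id_eq, id]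
  rw [hsq, hBval]
  field_simp
  linear_combination (-128*k*m₁*m₂*c₁^2*s₁^2 + -128*k*m₁*m₂*c₁*s₁^2*c₂ + -64*k*m₁*m₂*s₁^2*c₂^2 + 128*k*m₁*m₂*c₁^2*s₁^2*c₂^2 + 32*k*m₁*m₂*c₁^2*s₁^4 + 128*k*m₁*m₂*c₁*s₁^2*c₂^3 + 128*k*m₁*m₂*c₁*s₁^4*c₂ + 32*k*m₁*m₂*s₁^2*c₂^4 + 64*k*m₁*m₂*s₁^4*c₂^2 + 32*k*m₁*m₂*s₁^6 + -32*k*m₁*m₂*s₁^2*s₂^4 + -32*m₁*ω^2*c₁^3*s₁^2 + -96*m₁*ω^2*c₁^2*s₁^2*c₂ + -96*m₁*ω^2*c₁*s₁^2*c₂^2 + -32*m₁*ω^2*s₁^2*c₂^3 + 128*k*m₁*m₂*c₁^2*s₁^2*s₂^2 + 128*k*m₁*m₂*c₁*s₁^2*c₂*s₂^2 + 128*k*m₁*m₂*c₁^4 + -160*k*m₁*m₂*c₁^2 + 128*k*m₁*m₂*c₁^3*c₂ + -128*k*m₁*m₂*c₁*c₂ + 192*k*m₁*m₂*c₁^2*c₂^2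 + -64*k*m₁*m₂*c₂^2 + -128*k*m₁*m₂*c₁^4*c₂^2 + -128*k*m₁*m₂*c₁^3*c₂^3 + 128*k*m₁*m₂*c₁*c₂^3 + -32*k*m₁*m₂*c₁^2*c₂^4 + 32*k*m₁*m₂*c₂^4 + 32*k*m₁*m₂*s₁^4 + 32*k*m₁*m₂*c₁^2*s₂^4 + -32*k*m₁*m₂*s₂^4 + 32*m₁*ω^2*c₁^5 + -32*m₁*ω^2*c₁^3 + 96*m₁*ω^2*c₁^4*c₂ + -96*m₁*ω^2*c₁^2*c₂ + 96*m₁*ω^2*c₁^3*c₂^2 + -96*m₁*ω^2*c₁*c₂^2 + 32*m₁*ω^2*c₁^2*c₂^3 + -32*m₁*ω^2*c₂^3 + -128*k*m₁*m₂*c₁^4*s₂^2 + 128*k*m₁*m₂*c₁^2*s₂^2 + -128*k*m₁*m₂*c₁^3*c₂*s₂^2 + 128*k*m₁*m₂*c₁*c₂*s₂^2 + 32*k*m₁*m₂*s₁^2 + 32*k*m₁*m₂) * hp₁ + (-32*k*m₁*m₂*c₁^4*s₂^2 + 64*k*m₁*m₂*c₁^2*s₂^2 + -32*k*m₁*m₂*s₂^2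 + 128*k*m₁*m₂*c₁^6 + -288*k*m₁*m₂*c₁^4 + 192*k*m₁*m₂*c₁^2 + 128*k*m₁*m₂*c₁^5*c₂ + -256*k*m₁*m₂*c₁^3*c₂ + 128*k*m₁*m₂*c₁*c₂ + 32*k*m₁*m₂*c₁^4*c₂^2 + -64*k*m₁*m₂*c₁^2*c₂^2 + 32*k*m₁*m₂*c₂^2 + -32*k*m₁*m₂) * hp₂

set_option maxHeartbeats 1000000 in
private lemma crit_slice3 (k m₁ m₂ ω c₁ s₁ c₂ s₂ : ℝ)
    (hune : c₁ + c₂ ≠ 0) (hs₁ne : s₁ ≠ 0) (hs₂ne : s₂ ≠ 0)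
    (hp₁ : c₁ ^ 2 + s₁ ^ 2 = 1) (hp₂ : c₂ ^ 2 + s₂ ^ 2 = 1)
    (hBq : 0 < ((c₁ - -c₂) ^ 2 + (s₁ - s₂) ^ 2) * ((c₁ - -c₂) ^ 2 + (s₁ + s₂) ^ 2))
    (hBval : ((c₁ - -c₂) ^ 2 + (s₁ - s₂) ^ 2) * ((c₁ - -c₂) ^ 2 + (s₁ + s₂) ^ 2) = (2 * (c₁ + c₂)) ^ 2)
    (hsq : Real.sqrt (((c₁ - -c₂) ^ 2 + (s₁ - s₂) ^ 2) * ((c₁ - -c₂) ^ 2 + (s₁ + s₂) ^ 2)) = 2 * (c₁ + c₂))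
    (hdiff : DifferentiableAt ℝ (fun p : ℝ × ℝ × ℝ × ℝ => -(k * m₁ * m₂) * ((p.1 - p.2.2.1) ^ 2 + p.2.1 ^ 2 + p.2.2.2 ^ 2) / Real.sqrt (((p.1 - p.2.2.1) ^ 2 + (p.2.1 - p.2.2.2) ^ 2) * ((p.1 - p.2.2.1) ^ 2 + (p.2.1 + p.2.2.2) ^ 2)) - ω ^ 2 / 8 * (m₁ * (p.1 ^ 2 + (p.2.1 - 1) ^ 2) * (p.1 ^ 2 + (p.2.1 + 1) ^ 2) / p.2.1 ^ 2 + m₂ * (p.2.2.1 ^ 2 + (p.2.2.2 - 1) ^ 2) * (p.2.2.1 ^ 2 + (p.2.2.2 + 1) ^ 2) / p.2.2.2 ^ 2)) ((c₁, s₁, -c₂, s₂) : ℝ × ℝ × ℝ × ℝ)) :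
    fderiv ℝ (fun p : ℝ × ℝ × ℝ × ℝ => -(k * m₁ * m₂) * ((p.1 - p.2.2.1) ^ 2 + p.2.1 ^ 2 + p.2.2.2 ^ 2) / Real.sqrt (((p.1 - p.2.2.1) ^ 2 + (p.2.1 - p.2.2.2) ^ 2) * ((p.1 - p.2.2.1) ^ 2 + (p.2.1 + p.2.2.2) ^ 2)) - ω ^ 2 / 8 * (m₁ * (p.1 ^ 2 + (p.2.1 - 1) ^ 2) * (p.1 ^ 2 + (p.2.1 + 1) ^ 2) / p.2.1 ^ 2 + m₂ * (p.2.2.1 ^ 2 + (p.2.2.2 - 1) ^ 2) * (p.2.2.1 ^ 2 + (p.2.2.2 + 1) ^ 2) / p.2.2.2 ^ 2)) ((c₁, s₁, -c₂, s₂) : ℝ × ℝ × ℝ × ℝ) (((0:ℝ), (0:ℝ), (1:ℝ), (0:ℝ)) : ℝ × ℝ × ℝ × ℝ) = -(k * m₁ * m₂ * s₁ ^ 2 * s₂ ^ 2 / (c₁ + c₂) ^ 2) + ω ^ 2 * m₂ * c₂ / s₂ ^ 2 := by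
  have hγ : HasDerivAt (fun t : ℝ => (((c₁, s₁, t, s₂)) : ℝ × ℝ × ℝ × ℝ)) (((0:ℝ), (0:ℝ), (1:ℝ), (0:ℝ)) : ℝ × ℝ × ℝ × ℝ) (-c₂) :=
    (hasDerivAt_const (-c₂) c₁).prodMk ((hasDerivAt_const (-c₂) s₁).prodMk ((hasDerivAt_id (-c₂)).prodMk (hasDerivAt_const (-c₂) s₂)))
  have hg := (hasDerivAt_div_sqrt (HasDerivAt.const_mul (-(k * m₁ * m₂)) (((((hasDerivAt_id (-c₂)).const_sub c₁).pow 2).add_const (s₁ ^ 2)).add_const (s₂ ^ 2))) (((((hasDerivAt_id (-c₂)).const_sub c₁).pow 2).add_const ((s₁ - s₂) ^ 2)).mul ((((hasDerivAt_id (-c₂)).const_sub c₁).pow 2).add_const ((s₁ + s₂) ^ 2))) hBq).sub (((hasDerivAt_const (-c₂) (m₁ * (c₁ ^ 2 + (s₁ - 1) ^ 2) * (c₁ ^ 2 + (s₁ + 1) ^ 2) / s₁ ^ 2)).add ((((((hasDerivAt_id (-c₂)).pow 2).add_const ((s₂ - 1) ^ 2)).const_mul m₂).mul (((hasDerivAt_id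 (-c₂)).pow 2).add_const ((s₂ + 1) ^ 2))).div_const (s₂ ^ 2))).const_mul (ω ^ 2 / 8))
  have hcomp := hdiff.hasFDerivAt.comp_hasDerivAt (-c₂) hγ
  simp only [Function.comp_def] at hcomp
  simp only [id_eq] at hg
  rw [hcomp.unique hg]
  simp only [Nat.reduceSub, pow_one, Nat.cast_ofNat, Pi.pow_apply, Pi.add_apply, Pi.mul_apply, Pi.sub_apply, id_eq, id]
  rw [hsq, hBval]
  field_simp
  linear_combination (-16*k*m₁*m₂*c₁^3*s₂^2 + -80*k*m₁*m₂*c₁^2*c₂*s₂^2 + -96*k*m₁*m₂*c₁*c₂^2*s₂^2 + -16*k*m₁*m₂*c₁*s₁^2*s₂^2 + 32*k*m₁*m₂*c₁*s₂^4 + -32*k*m₁*m₂*c₂^3*s₂^2 + -16*k*m₁*m₂*s₁^2*c₂*s₂^2 + 32*k*m₁*m₂*c₂*s₂^4 + -16*k*m₁*m₂*c₁*s₂^2 + -16*k*m₁*m₂*c₂*s₂^2) * hp₁ + (-64*k*m₁*m₂*c₁^3*s₂^2 + -128*k*m₁*m₂*c₁^2*c₂*s₂^2 + -80*k*m₁*m₂*c₁*c₂^2*s₂^2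 + -16*k*m₁*m₂*c₁*s₂^4 + -16*k*m₁*m₂*c₂^3*s₂^2 + -16*k*m₁*m₂*c₂*s₂^4 + 32*m₂*ω^2*c₁^3*c₂ + 96*m₂*ω^2*c₁^2*c₂^2 + 96*m₂*ω^2*c₁*c₂^3 + 32*m₂*ω^2*c₂^4 + 16*k*m₁*m₂*c₁*s₂^2 + 16*k*m₁*m₂*c₂*s₂^2) * hp₂

set_option maxHeartbeats 1000000 in
private lemma crit_slice4 (k m₁ m₂ ω c₁ s₁ c₂ s₂ : ℝ)
    (hune : c₁ + c₂ ≠ 0) (hs₁ne : s₁ ≠ 0) (hs₂ne : s₂ ≠ 0)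
    (hp₁ : c₁ ^ 2 + s₁ ^ 2 = 1) (hp₂ : c₂ ^ 2 + s₂ ^ 2 = 1)
    (hBq : 0 < ((c₁ - -c₂) ^ 2 + (s₁ - s₂) ^ 2) * ((c₁ - -c₂) ^ 2 + (s₁ + s₂) ^ 2))
    (hBval : ((c₁ - -c₂) ^ 2 + (s₁ - s₂) ^ 2) * ((c₁ - -c₂) ^ 2 + (s₁ + s₂) ^ 2) = (2 * (c₁ + c₂)) ^ 2)
    (hsq : Real.sqrt (((c₁ - -c₂) ^ 2 + (s₁ - s₂) ^ 2) * ((c₁ - -c₂) ^ 2 + (s₁ + s₂) ^ 2)) = 2 * (c₁ + c₂))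
    (hdiff : DifferentiableAt ℝ (fun p : ℝ × ℝ × ℝ × ℝ => -(k * m₁ * m₂) * ((p.1 - p.2.2.1) ^ 2 + p.2.1 ^ 2 + p.2.2.2 ^ 2) / Real.sqrt (((p.1 - p.2.2.1) ^ 2 + (p.2.1 - p.2.2.2) ^ 2) * ((p.1 - p.2.2.1) ^ 2 + (p.2.1 + p.2.2.2) ^ 2)) - ω ^ 2 / 8 * (m₁ * (p.1 ^ 2 + (p.2.1 - 1) ^ 2) * (p.1 ^ 2 + (p.2.1 + 1) ^ 2) / p.2.1 ^ 2 + m₂ * (p.2.2.1 ^ 2 + (p.2.2.2 - 1) ^ 2) * (p.2.2.1 ^ 2 + (p.2.2.2 + 1) ^ 2) / p.2.2.2 ^ 2)) ((c₁, s₁, -c₂, s₂) : ℝ × ℝ × ℝ × ℝ)) :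
    fderiv ℝ (fun p : ℝ × ℝ × ℝ × ℝ => -(k * m₁ * m₂) * ((p.1 - p.2.2.1) ^ 2 + p.2.1 ^ 2 + p.2.2.2 ^ 2) / Real.sqrt (((p.1 - p.2.2.1) ^ 2 + (p.2.1 - p.2.2.2) ^ 2) * ((p.1 - p.2.2.1) ^ 2 + (p.2.1 + p.2.2.2) ^ 2)) - ω ^ 2 / 8 * (m₁ * (p.1 ^ 2 + (p.2.1 - 1) ^ 2) * (p.1 ^ 2 + (p.2.1 + 1) ^ 2) / p.2.1 ^ 2 + m₂ * (p.2.2.1 ^ 2 + (p.2.2.2 - 1) ^ 2) * (p.2.2.1 ^ 2 + (p.2.2.2 + 1) ^ 2) / p.2.2.2 ^ 2)) ((c₁, s₁, -c₂, s₂) : ℝ × ℝ × ℝ × ℝ) (((0:ℝ), (0:ℝ), (0:ℝ), (1:ℝ)) : ℝ × ℝ × ℝ × ℝ) = -(k * m₁ * m₂ * c₂ * s₂ * s₁ ^ 2 / (c₁ + c₂) ^ 2) + ω ^ 2 * m₂ * c₂ ^ 2 / s₂ ^ 3 := by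
  have hγ : HasDerivAt (fun t : ℝ => (((c₁, s₁, -c₂, t)) : ℝ × ℝ × ℝ × ℝ)) (((0:ℝ), (0:ℝ), (0:ℝ), (1:ℝ)) : ℝ × ℝ × ℝ × ℝ) s₂ :=
    (hasDerivAt_const s₂ c₁).prodMk ((hasDerivAt_const s₂ s₁).prodMk ((hasDerivAt_const s₂ (-c₂)).prodMk (hasDerivAt_id s₂)))
  have hg := (hasDerivAt_div_sqrt (HasDerivAt.const_mul (-(k * m₁ * m₂)) ((hasDerivAt_const s₂ ((c₁ - -c₂) ^ 2 + s₁ ^ 2)).add ((hasDerivAt_id s₂).pow 2))) (((hasDerivAt_const s₂ ((c₁ - -c₂) ^ 2)).add (((hasDerivAt_id s₂).const_sub s₁).pow 2)).mul ((hasDerivAt_const s₂ ((c₁ - -c₂) ^ 2)).add (((hasDerivAt_id s₂).const_add s₁).pow 2))) hBq).sub (((hasDerivAt_const s₂ (m₁ * (c₁ ^ 2 + (s₁ - 1) ^ 2) * (c₁ ^ 2 + (s₁ + 1) ^ 2) / s₁ ^ 2)).add (((((hasDerivAt_const s₂ ((-c₂) ^ 2)).add (((hasDerivAt_id s₂).sub_const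 1).pow 2)).const_mul m₂).mul ((hasDerivAt_const s₂ ((-c₂) ^ 2)).add (((hasDerivAt_id s₂).add_const 1).pow 2))).div ((hasDerivAt_id s₂).pow 2) (pow_ne_zero 2 hs₂ne))).const_mul (ω ^ 2 / 8))
  have hcomp := hdiff.hasFDerivAt.comp_hasDerivAt s₂ hγ
  simp only [Function.comp_def] at hcomp
  simp only [id_eq] at hg
  rw [hcomp.unique hg]
  simp only [Nat.reduceSub, pow_one, Nat.cast_ofNat, Pi.pow_apply, Pi.add_apply, Pi.mul_apply, Pi.sub_apply, id_eq, id]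
  rw [hsq, hBval]
  field_simp
  linear_combination (-32*k*m₁*m₂*s₁^2*s₂^4 + 128*k*m₁*m₂*c₁*c₂*s₂^4 + 128*k*m₁*m₂*c₂^2*s₂^4 + 32*k*m₁*m₂*c₁^2*s₂^4 + -32*k*m₁*m₂*s₂^4) * hp₁ + (64*k*m₁*m₂*c₁^2*s₂^4 + 128*k*m₁*m₂*c₁*c₂*s₂^4 + 32*k*m₁*m₂*c₂^2*s₂^4 + 32*k*m₁*m₂*s₂^6 + -32*m₂*ω^2*c₁^3*s₂^2 + -96*m₂*ω^2*c₁^2*c₂*s₂^2 + -96*m₂*ω^2*c₁*c₂^2*s₂^2 + -32*m₂*ω^2*c₂^3*s₂^2 + 32*k*m₁*m₂*s₂^4 + 32*m₂*ω^2*c₁^3*c₂^2 + -32*m₂*ω^2*c₁^3 + 96*m₂*ω^2*c₁^2*c₂^3 + -96*m₂*ω^2*c₁^2*c₂ + 96*m₂*ω^2*c₁*c₂^4 + -96*m₂*ω^2*c₁*c₂^2 + 32*m₂*ω^2*c₂^5 + -32*m₂*ω^2*c₂^3) * hp₂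

set_option maxHeartbeats 1000000 in
private lemma crit_key (k m₁ m₂ ω c₁ s₁ c₂ s₂ : ℝ) (hk : 0 < k) (hm₁ : 0 < m₁) (hm₂ : 0 < m₂)
    (hc₁ : 0 < c₁) (hs₁ : 0 < s₁) (hc₂ : 0 < c₂) (hs₂ : 0 < s₂)
    (hp₁ : c₁ ^ 2 + s₁ ^ 2 = 1) (hp₂ : c₂ ^ 2 + s₂ ^ 2 = 1)
    (hcan : m₁ * s₂ ^ 2 * c₁ = m₂ * c₂ * s₁ ^ 2) :
    fderiv ℝ (fun p : ℝ × ℝ × ℝ × ℝ => -(k * m₁ * m₂) * ((p.1 - p.2.2.1) ^ 2 + p.2.1 ^ 2 + p.2.2.2 ^ 2) / Real.sqrt (((p.1 - p.2.2.1) ^ 2 + (p.2.1 - p.2.2.2) ^ 2) * ((p.1 - p.2.2.1) ^ 2 + (p.2.1 + p.2.2.2) ^ 2)) - ω ^ 2 / 8 * (m₁ * (p.1 ^ 2 + (p.2.1 - 1) ^ 2) * (p.1 ^ 2 + (p.2.1 + 1) ^ 2) / p.2.1 ^ 2 + m₂ * (p.2.2.1 ^ 2 + (p.2.2.2 - 1)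 ^ 2) * (p.2.2.1 ^ 2 + (p.2.2.2 + 1) ^ 2) / p.2.2.2 ^ 2)) ((c₁, s₁, -c₂, s₂) : ℝ × ℝ × ℝ × ℝ) = 0 ↔
      ω ^ 2 = k * m₁ * s₁ ^ 2 * s₂ ^ 4 / ((c₁ + c₂) ^ 2 * c₂) := by
  have hu : 0 < c₁ + c₂ := by linarith
  have hune : c₁ + c₂ ≠ 0 := ne_of_gt hu
  have hs₁ne : s₁ ≠ 0 := ne_of_gt hs₁
  have hs₂ne : s₂ ≠ 0 := ne_of_gt hs₂
  have hc₂ne : c₂ ≠ 0 := ne_of_gt hc₂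
  have hm₂ne : m₂ ≠ 0 := ne_of_gt hm₂
  have hBq : 0 < ((c₁ - -c₂) ^ 2 + (s₁ - s₂) ^ 2) * ((c₁ - -c₂) ^ 2 + (s₁ + s₂) ^ 2) := by
    have hu2 : 0 < (c₁ - -c₂) ^ 2 := pow_pos (by linarith) 2
    exact mul_pos (by nlinarith [sq_nonneg (s₁ - s₂)]) (by nlinarith [sq_nonneg (s₁ + s₂)])
  have hBval : ((c₁ - -c₂) ^ 2 + (s₁ - s₂) ^ 2) * ((c₁ - -c₂) ^ 2 + (s₁ + s₂) ^ 2)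
      = (2 * (c₁ + c₂)) ^ 2 := by
    have h' : ((c₁ - -c₂) ^ 2 + (s₁ - s₂) ^ 2) * ((c₁ - -c₂) ^ 2 + (s₁ + s₂) ^ 2)
        = ((c₁ + c₂) ^ 2 + s₁ ^ 2 + s₂ ^ 2) ^ 2 - 4 * (s₁ ^ 2 * s₂ ^ 2) := by ring
    rw [h', show s₁ ^ 2 = 1 - c₁ ^ 2 by linarith, show s₂ ^ 2 = 1 - c₂ ^ 2 by linarith]; ring
  have hsq : Real.sqrt (((c₁ - -c₂) ^ 2 + (s₁ - s₂) ^ 2) * ((c₁ - -c₂) ^ 2 + (s₁ + s₂) ^ 2))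
      = 2 * (c₁ + c₂) := by
    rw [hBval]; exact Real.sqrt_sq (by linarith)
  have hx1 : DifferentiableAt ℝ (fun p : ℝ × ℝ × ℝ × ℝ => p.1) ((c₁, s₁, -c₂, s₂) : ℝ × ℝ × ℝ × ℝ) := differentiableAt_fst
  have hy1 : DifferentiableAt ℝ (fun p : ℝ × ℝ × ℝ × ℝ => p.2.1) ((c₁, s₁, -c₂, s₂) : ℝ × ℝ × ℝ × ℝ) := differentiableAt_snd.fst
  have hx2 : DifferentiableAt ℝ (fun p : ℝ × ℝ × ℝ × ℝ => p.2.2.1) ((c₁, s₁, -c₂, s₂) : ℝ × ℝ × ℝ × ℝ) := differentiableAt_snd.snd.fst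
  have hy2 : DifferentiableAt ℝ (fun p : ℝ × ℝ × ℝ × ℝ => p.2.2.2) ((c₁, s₁, -c₂, s₂) : ℝ × ℝ × ℝ × ℝ) := differentiableAt_snd.snd.snd
  have hsqrtDne : (fun p : ℝ × ℝ × ℝ × ℝ =>
      Real.sqrt (((p.1 - p.2.2.1) ^ 2 + (p.2.1 - p.2.2.2) ^ 2) *
        ((p.1 - p.2.2.1) ^ 2 + (p.2.1 + p.2.2.2) ^ 2))) ((c₁, s₁, -c₂, s₂) : ℝ × ℝ × ℝ × ℝ) ≠ 0 := by
    show Real.sqrt (((c₁ - -c₂) ^ 2 + (s₁ - s₂) ^ 2) * ((c₁ - -c₂) ^ 2 + (s₁ + s₂) ^ 2)) ≠ 0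
    positivity
  have hy1ne : (fun p : ℝ × ℝ × ℝ × ℝ => p.2.1 ^ 2) ((c₁, s₁, -c₂, s₂) : ℝ × ℝ × ℝ × ℝ) ≠ 0 := by
    show s₁ ^ 2 ≠ 0; positivity
  have hy2ne : (fun p : ℝ × ℝ × ℝ × ℝ => p.2.2.2 ^ 2) ((c₁, s₁, -c₂, s₂) : ℝ × ℝ × ℝ × ℝ) ≠ 0 := by
    show s₂ ^ 2 ≠ 0; positivity
  have hD : DifferentiableAt ℝ (fun p : ℝ × ℝ × ℝ × ℝ =>
      ((p.1 - p.2.2.1) ^ 2 + (p.2.1 - p.2.2.2) ^ 2) *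
        ((p.1 - p.2.2.1) ^ 2 + (p.2.1 + p.2.2.2) ^ 2)) ((c₁, s₁, -c₂, s₂) : ℝ × ℝ × ℝ × ℝ) :=
    ((((hx1.sub hx2).pow 2).add ((hy1.sub hy2).pow 2)).mul
      (((hx1.sub hx2).pow 2).add ((hy1.add hy2).pow 2)))
  have hsqrtD : DifferentiableAt ℝ (fun p : ℝ × ℝ × ℝ × ℝ =>
      Real.sqrt (((p.1 - p.2.2.1) ^ 2 + (p.2.1 - p.2.2.2) ^ 2) *
        ((p.1 - p.2.2.1) ^ 2 + (p.2.1 + p.2.2.2) ^ 2))) ((c₁, s₁, -c₂, s₂) : ℝ × ℝ × ℝ × ℝ) :=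
    hD.sqrt (ne_of_gt hBq)
  have hdiff : DifferentiableAt ℝ (fun p : ℝ × ℝ × ℝ × ℝ => -(k * m₁ * m₂) * ((p.1 - p.2.2.1) ^ 2 + p.2.1 ^ 2 + p.2.2.2 ^ 2) / Real.sqrt (((p.1 - p.2.2.1) ^ 2 + (p.2.1 - p.2.2.2) ^ 2) * ((p.1 - p.2.2.1) ^ 2 + (p.2.1 + p.2.2.2) ^ 2)) - ω ^ 2 / 8 * (m₁ * (p.1 ^ 2 + (p.2.1 - 1) ^ 2) * (p.1 ^ 2 + (p.2.1 + 1) ^ 2) / p.2.1 ^ 2 + m₂ * (p.2.2.1 ^ 2 + (p.2.2.2 - 1) ^ 2) * (p.2.2.1 ^ 2 + (p.2.2.2 + 1) ^ 2) / p.2.2.2 ^ 2)) ((c₁, s₁, -c₂, s₂) : ℝ × ℝ × ℝ × ℝ) := by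
    apply DifferentiableAt.sub
    · exact ((((hx1.sub hx2).pow 2).add (hy1.pow 2)).add (hy2.pow 2)).const_mul
        (-(k * m₁ * m₂)) |>.mul (hsqrtD.inv hsqrtDne)
    · apply DifferentiableAt.const_mul
      apply DifferentiableAt.add
      · exact ((((hx1.pow 2).add ((hy1.sub_const 1).pow 2)).const_mul m₁).mul
          ((hx1.pow 2).add ((hy1.add_const 1).pow 2))).mul ((hy1.pow 2).inv hy1ne)
      · exact ((((hx2.pow 2).add ((hy2.sub_const 1).pow 2)).const_mul m₂).mul
          ((hx2.pow 2).add ((hy2.add_const 1).pow 2))).mul ((hy2.pow 2).inv hy2ne)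
  have h1 := crit_slice1 k m₁ m₂ ω c₁ s₁ c₂ s₂ hune hs₁ne hs₂ne hp₁ hp₂ hBq hBval hsq hdiff
  have h2 := crit_slice2 k m₁ m₂ ω c₁ s₁ c₂ s₂ hune hs₁ne hs₂ne hp₁ hp₂ hBq hBval hsq hdiff
  have h3 := crit_slice3 k m₁ m₂ ω c₁ s₁ c₂ s₂ hune hs₁ne hs₂ne hp₁ hp₂ hBq hBval hsq hdiff
  have h4 := crit_slice4 k m₁ m₂ ω c₁ s₁ c₂ s₂ hune hs₁ne hs₂ne hp₁ hp₂ hBq hBval hsq hdiff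
  constructor
  · intro h
    rw [h] at h3
    simp only [ContinuousLinearMap.zero_apply] at h3
    have h3' : ω ^ 2 * m₂ * c₂ / s₂ ^ 2 = k * m₁ * m₂ * s₁ ^ 2 * s₂ ^ 2 / (c₁ + c₂) ^ 2 := by
      linarith
    field_simp at h3' ⊢
    exact mul_left_cancel₀ hm₂ne (by linear_combination m₂ * h3')
  · intro hw
    have z1 : k * m₁ * m₂ * s₁ ^ 2 * s₂ ^ 2 / (c₁ + c₂) ^ 2 - ω ^ 2 * m₁ * c₁ / s₁ ^ 2 = 0 := by
      rw [hw]; field_simp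
      linear_combination (-(k*m₁*s₂^2)) * hcan
    have z2 : -(k * m₁ * m₂ * c₁ * s₁ * s₂ ^ 2 / (c₁ + c₂) ^ 2) + ω ^ 2 * m₁ * c₁ ^ 2 / s₁ ^ 3 = 0 := by
      rw [hw]; field_simp
      linear_combination (k*m₁*c₁*s₂^2) * hcan
    have z3 : -(k * m₁ * m₂ * s₁ ^ 2 * s₂ ^ 2 / (c₁ + c₂) ^ 2) + ω ^ 2 * m₂ * c₂ / s₂ ^ 2 = 0 := by
      rw [hw]; field_simp
      ring
    have z4 : -(k * m₁ * m₂ * c₂ * s₂ * s₁ ^ 2 / (c₁ + c₂) ^ 2) + ω ^ 2 * m₂ * c₂ ^ 2 / s₂ ^ 3 = 0 := by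
      rw [hw]; field_simp
      ring
    have h1' := h1.trans z1
    have h2' := h2.trans z2
    have h3' := h3.trans z3
    have h4' := h4.trans z4
    refine ContinuousLinearMap.ext fun v => ?_
    have hv : (v : ℝ × ℝ × ℝ × ℝ) = v.1 • (((1:ℝ), (0:ℝ), (0:ℝ), (0:ℝ)) : ℝ × ℝ × ℝ × ℝ)
        + v.2.1 • (((0:ℝ), (1:ℝ), (0:ℝ), (0:ℝ)) : ℝ × ℝ × ℝ × ℝ)
        + v.2.2.1 • (((0:ℝ), (0:ℝ), (1:ℝ), (0:ℝ)) : ℝ × ℝ × ℝ × ℝ)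
        + v.2.2.2 • (((0:ℝ), (0:ℝ), (0:ℝ), (1:ℝ)) : ℝ × ℝ × ℝ × ℝ) := by
      refine Prod.ext ?_ (Prod.ext ?_ (Prod.ext ?_ ?_)) <;> simp
    rw [hv, map_add, map_add, map_add, map_smul, map_smul, map_smul, map_smul,
      h1', h2', h3', h4']
    simp


/-- For masses `m₁, m₂ > 0`, gravitational constant `k > 0`, angles
`θ₁, θ₂ ∈ (0, π/2)` in canonical configuration (`m₁ sin²θ₂ cos θ₁ = m₂ cos θ₂ sin²θ₁`),
the point `q = (cos θ₁, sin θ₁, -cos θ₂, sin θ₂)` is a critical point of the augmented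
potential `V_e = V - (ω²/8) Σᵢ mᵢ (xᵢ² + (yᵢ-1)²)(xᵢ² + (yᵢ+1)²)/yᵢ²` (for the elliptic
generator `ξ = ω ξ_e`) iff `ω² = k m₁ sin²θ₁ sin⁴θ₂ / ((cos θ₁ + cos θ₂)² cos θ₂)`. -/
theorem elliptic_relative_equilibrium_condition
    (k m₁ m₂ θ₁ θ₂ ω : ℝ) (hk : 0 < k) (hm₁ : 0 < m₁) (hm₂ : 0 < m₂)
    (hθ₁ : θ₁ ∈ Set.Ioo 0 (π / 2)) (hθ₂ : θ₂ ∈ Set.Ioo 0 (π / 2))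
    (hcan : m₁ * Real.sin θ₂ ^ 2 * Real.cos θ₁ = m₂ * Real.cos θ₂ * Real.sin θ₁ ^ 2)
    (V Ve : ℝ × ℝ × ℝ × ℝ → ℝ)
    (hV : ∀ x₁ y₁ x₂ y₂ : ℝ, V (x₁, y₁, x₂, y₂) =
      -(k * m₁ * m₂) * ((x₁ - x₂) ^ 2 + y₁ ^ 2 + y₂ ^ 2) /
        Real.sqrt (((x₁ - x₂) ^ 2 + (y₁ - y₂) ^ 2) * ((x₁ - x₂) ^ 2 + (y₁ + y₂) ^ 2)))
    (hVe : ∀ x₁ y₁ x₂ y₂ : ℝ, Ve (x₁, y₁, x₂, y₂) = V (x₁, y₁, x₂, y₂) -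
      ω ^ 2 / 8 * (m₁ * (x₁ ^ 2 + (y₁ - 1) ^ 2) * (x₁ ^ 2 + (y₁ + 1) ^ 2) / y₁ ^ 2 +
        m₂ * (x₂ ^ 2 + (y₂ - 1) ^ 2) * (x₂ ^ 2 + (y₂ + 1) ^ 2) / y₂ ^ 2)) :
    fderiv ℝ Ve (Real.cos θ₁, Real.sin θ₁, -Real.cos θ₂, Real.sin θ₂) = 0 ↔
      ω ^ 2 = k * m₁ * Real.sin θ₁ ^ 2 * Real.sin θ₂ ^ 4 /
        ((Real.cos θ₁ + Real.cos θ₂) ^ 2 * Real.cos θ₂) := by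
  obtain ⟨hθ₁l, hθ₁r⟩ := hθ₁
  obtain ⟨hθ₂l, hθ₂r⟩ := hθ₂
  have hpi := Real.pi_pos
  have hc1 : 0 < Real.cos θ₁ := Real.cos_pos_of_mem_Ioo ⟨by linarith, hθ₁r⟩
  have hc2 : 0 < Real.cos θ₂ := Real.cos_pos_of_mem_Ioo ⟨by linarith, hθ₂r⟩
  have hs1 : 0 < Real.sin θ₁ := Real.sin_pos_of_pos_of_lt_pi hθ₁l (by linarith)
  have hs2 : 0 < Real.sin θ₂ := Real.sin_pos_of_pos_of_lt_pi hθ₂l (by linarith)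
  have hFe : Ve = (fun p : ℝ × ℝ × ℝ × ℝ => -(k * m₁ * m₂) * ((p.1 - p.2.2.1) ^ 2 + p.2.1 ^ 2 + p.2.2.2 ^ 2) / Real.sqrt (((p.1 - p.2.2.1) ^ 2 + (p.2.1 - p.2.2.2) ^ 2) * ((p.1 - p.2.2.1) ^ 2 + (p.2.1 + p.2.2.2) ^ 2)) - ω ^ 2 / 8 * (m₁ * (p.1 ^ 2 + (p.2.1 - 1) ^ 2) * (p.1 ^ 2 + (p.2.1 + 1) ^ 2) / p.2.1 ^ 2 + m₂ * (p.2.2.1 ^ 2 + (p.2.2.2 - 1) ^ 2) * (p.2.2.1 ^ 2 + (p.2.2.2 + 1) ^ 2) / p.2.2.2 ^ 2)) := by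
    funext p
    obtain ⟨x₁, y₁, x₂, y₂⟩ := p
    rw [hVe, hV]
  rw [hFe]
  exact crit_key k m₁ m₂ ω (Real.cos θ₁) (Real.sin θ₁) (Real.cos θ₂) (Real.sin θ₂)
    hk hm₁ hm₂ hc1 hs1 hc2 hs2 (Real.cos_sq_add_sin_sq θ₁) (Real.cos_sq_add_sin_sq θ₂) hcan
end

section
/- Let k, m₁, m₂ > 0 and θ₁, θ₂ ∈ (0, π/2) with m₁·sin²θ₂·cos θ₁ = m₂·cos θ₂·sin²θ₁. For any ω ∈ ℝ define on the open set Ω = {(x₁,y₁,x₂,y₂) ∈ ℝ⁴ : y₁ > 0, y₂ > 0, (x₁,y₁) ≠ (x₂,y₂)} the augmented potential V_c(x₁,y₁,x₂,y₂) = V(x₁,y₁,x₂,y₂) − (ω²/8)·Σ_{i=1,2} m_i·((x_i−1)² + y_i²)·((x_i+1)² + y_i²)/y_i². Then for every ω ∈ ℝ the point q = (cos θ₁, sin θ₁, −cos θ₂, sin θ₂) is NOT a critical point of V_c, i.e. the Fréchet derivative of V_c at q is nonzero. (Hence there are no relative equilibria with velocity ξ = ω(ξ_e + ξ_p), ω ≠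 0.) -/
open Real

private lemma auxNum (a b : ℝ) :
    (Real.cos a - -Real.cos b) ^ 2 + Real.sin a ^ 2 + Real.sin b ^ 2
      = 2 + Real.cos (a + b) + Real.cos (a - b) := by
  rw [Real.cos_add, Real.cos_sub]
  linear_combination Real.sin_sq_add_cos_sq a + Real.sin_sq_add_cos_sq b

private lemma auxA (a b : ℝ) :
    (Real.cos a - -Real.cos b) ^ 2 + (Real.sin a - Real.sin b) ^ 2
      = 2 + 2 * Real.cos (a + b) := by
  rw [Real.cos_add]
  linear_combination Real.sin_sq_add_cos_sq a + Real.sin_sq_add_cos_sq b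

private lemma auxB (a b : ℝ) :
    (Real.cos a - -Real.cos b) ^ 2 + (Real.sin a + Real.sin b) ^ 2
      = 2 + 2 * Real.cos (a - b) := by
  rw [Real.cos_sub]
  linear_combination Real.sin_sq_add_cos_sq a + Real.sin_sq_add_cos_sq b

private lemma auxT1 (m a : ℝ) (h : Real.sin a ≠ 0) :
    m * ((Real.cos a - 1) ^ 2 + Real.sin a ^ 2) * ((Real.cos a + 1) ^ 2 + Real.sin a ^ 2)
      / Real.sin a ^ 2 = m * 4 := by
  rw [div_eq_iff (pow_ne_zero 2 h)]
  linear_combination (m * (Real.sin a ^ 2 + Real.cos a ^ 2 - 1)) * Real.sin_sq_add_cos_sq a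

private lemma auxT2 (m b : ℝ) (h : Real.sin b ≠ 0) :
    m * ((-Real.cos b - 1) ^ 2 + Real.sin b ^ 2) * ((-Real.cos b + 1) ^ 2 + Real.sin b ^ 2)
      / Real.sin b ^ 2 = m * 4 := by
  rw [div_eq_iff (pow_ne_zero 2 h)]
  linear_combination (m * (Real.sin b ^ 2 + Real.cos b ^ 2 - 1)) * Real.sin_sq_add_cos_sq b

/-- For masses `m₁, m₂ > 0`, gravitational constant `k > 0`, angles
`θ₁, θ₂ ∈ (0, π/2)` in canonical configuration (`m₁ sin²θ₂ cos θ₁ = m₂ cos θ₂ sin²θ₁`),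
and any `ω ∈ ℝ`, the point `q = (cos θ₁, sin θ₁, -cos θ₂, sin θ₂)` is never a critical
point of the augmented potential
`V_c = V - (ω²/8) Σᵢ mᵢ ((xᵢ-1)² + yᵢ²)((xᵢ+1)² + yᵢ²)/yᵢ²` (for the generator
`ξ = ω(ξ_e + ξ_p)`): the Fréchet derivative of `V_c` at `q` is nonzero. -/
theorem no_relative_equilibrium_for_mixed_generator
    (k m₁ m₂ θ₁ θ₂ ω : ℝ) (hk : 0 < k) (hm₁ : 0 < m₁) (hm₂ : 0 < m₂)
    (hθ₁ : θ₁ ∈ Set.Ioo 0 (π / 2)) (hθ₂ : θ₂ ∈ Set.Ioo 0 (π / 2))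
    (hcan : m₁ * Real.sin θ₂ ^ 2 * Real.cos θ₁ = m₂ * Real.cos θ₂ * Real.sin θ₁ ^ 2)
    (V Vc : ℝ × ℝ × ℝ × ℝ → ℝ)
    (hV : ∀ x₁ y₁ x₂ y₂ : ℝ, V (x₁, y₁, x₂, y₂) =
      -(k * m₁ * m₂) * ((x₁ - x₂) ^ 2 + y₁ ^ 2 + y₂ ^ 2) /
        Real.sqrt (((x₁ - x₂) ^ 2 + (y₁ - y₂) ^ 2) * ((x₁ - x₂) ^ 2 + (y₁ + y₂) ^ 2)))
    (hVc : ∀ x₁ y₁ x₂ y₂ : ℝ, Vc (x₁, y₁, x₂, y₂) = V (x₁, y₁, x₂, y₂) -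
      ω ^ 2 / 8 * (m₁ * ((x₁ - 1) ^ 2 + y₁ ^ 2) * ((x₁ + 1) ^ 2 + y₁ ^ 2) / y₁ ^ 2 +
        m₂ * ((x₂ - 1) ^ 2 + y₂ ^ 2) * ((x₂ + 1) ^ 2 + y₂ ^ 2) / y₂ ^ 2)) :
    fderiv ℝ Vc (Real.cos θ₁, Real.sin θ₁, -Real.cos θ₂, Real.sin θ₂) ≠ 0 := by
  obtain ⟨h1a, h1b⟩ := hθ₁
  obtain ⟨h2a, h2b⟩ := hθ₂
  have hπ := Real.pi_pos
  have hs1 : 0 < Real.sin θ₁ := Real.sin_pos_of_pos_of_lt_pi h1a (by linarith)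
  have hs2 : 0 < Real.sin θ₂ := Real.sin_pos_of_pos_of_lt_pi h2a (by linarith)
  have hc1 : 0 < Real.cos θ₁ := Real.cos_pos_of_mem_Ioo ⟨by linarith, h1b⟩
  have hc2 : 0 < Real.cos θ₂ := Real.cos_pos_of_mem_Ioo ⟨by linarith, h2b⟩
  have hS : 0 < Real.sin (θ₁ + θ₂) := Real.sin_pos_of_pos_of_lt_pi (by linarith) (by linarith)
  have hA0 : 0 < 2 + 2 * Real.cos (θ₁ + θ₂) := by
    rw [Real.cos_add]
    nlinarith [Real.sin_sq_add_cos_sq θ₁, Real.sin_sq_add_cos_sq θ₂,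
      sq_nonneg (Real.sin θ₁ - Real.sin θ₂), mul_pos hc1 hc2]
  have hBB : 0 < 2 + 2 * Real.cos (θ₁ - θ₂) := by
    have : 0 < Real.cos (θ₁ - θ₂) := Real.cos_pos_of_mem_Ioo ⟨by linarith, by linarith⟩
    linarith
  have hd0 : 0 < (2 + 2 * Real.cos (θ₁ + θ₂)) * (2 + 2 * Real.cos (θ₁ - θ₂)) :=
    mul_pos hA0 hBB
  have hr : 0 < Real.sqrt ((2 + 2 * Real.cos (θ₁ + θ₂)) * (2 + 2 * Real.cos (θ₁ - θ₂))) :=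
    Real.sqrt_pos.mpr hd0
  have hr2 : Real.sqrt ((2 + 2 * Real.cos (θ₁ + θ₂)) * (2 + 2 * Real.cos (θ₁ - θ₂))) ^ 2
      = (2 + 2 * Real.cos (θ₁ + θ₂)) * (2 + 2 * Real.cos (θ₁ - θ₂)) := Real.sq_sqrt hd0.le
  intro hcrit
  -- `Vc` as an explicit function
  have hVF : Vc = fun p : ℝ × ℝ × ℝ × ℝ =>
      -(k * m₁ * m₂) * ((p.1 - p.2.2.1) ^ 2 + p.2.1 ^ 2 + p.2.2.2 ^ 2) /
        Real.sqrt (((p.1 - p.2.2.1) ^ 2 + (p.2.1 - p.2.2.2) ^ 2) *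
          ((p.1 - p.2.2.1) ^ 2 + (p.2.1 + p.2.2.2) ^ 2)) -
      ω ^ 2 / 8 * (m₁ * ((p.1 - 1) ^ 2 + p.2.1 ^ 2) * ((p.1 + 1) ^ 2 + p.2.1 ^ 2) / p.2.1 ^ 2 +
        m₂ * ((p.2.2.1 - 1) ^ 2 + p.2.2.2 ^ 2) * ((p.2.2.1 + 1) ^ 2 + p.2.2.2 ^ 2) /
          p.2.2.2 ^ 2) := by
    funext p
    obtain ⟨x₁, y₁, x₂, y₂⟩ := p
    rw [hVc, hV]
  have hDval : ((Real.cos θ₁ - -Real.cos θ₂) ^ 2 + (Real.sin θ₁ - Real.sin θ₂) ^ 2) *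
      ((Real.cos θ₁ - -Real.cos θ₂) ^ 2 + (Real.sin θ₁ + Real.sin θ₂) ^ 2)
      = (2 + 2 * Real.cos (θ₁ + θ₂)) * (2 + 2 * Real.cos (θ₁ - θ₂)) := by
    rw [auxA θ₁ θ₂, auxB θ₁ θ₂]
  -- differentiability of `Vc` at the point
  have hdiff : DifferentiableAt ℝ Vc (Real.cos θ₁, Real.sin θ₁, -Real.cos θ₂, Real.sin θ₂) := by
    rw [hVF]
    simp only [div_eq_mul_inv]
    apply DifferentiableAt.sub
    · refine DifferentiableAt.mul (by fun_prop) (DifferentiableAt.inv ?_ ?_)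
      · refine DifferentiableAt.sqrt (by fun_prop) ?_
        show ((Real.cos θ₁ - -Real.cos θ₂) ^ 2 + (Real.sin θ₁ - Real.sin θ₂) ^ 2) *
          ((Real.cos θ₁ - -Real.cos θ₂) ^ 2 + (Real.sin θ₁ + Real.sin θ₂) ^ 2) ≠ 0
        rw [hDval]; exact hd0.ne'
      · show Real.sqrt (((Real.cos θ₁ - -Real.cos θ₂) ^ 2 + (Real.sin θ₁ - Real.sin θ₂) ^ 2) *
          ((Real.cos θ₁ - -Real.cos θ₂) ^ 2 + (Real.sin θ₁ + Real.sin θ₂) ^ 2)) ≠ 0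
        rw [hDval]; exact hr.ne'
    · apply DifferentiableAt.const_mul
      apply DifferentiableAt.add
      · exact DifferentiableAt.mul (by fun_prop)
          (DifferentiableAt.inv (by fun_prop) (pow_ne_zero 2 hs1.ne'))
      · exact DifferentiableAt.mul (by fun_prop)
          (DifferentiableAt.inv (by fun_prop) (pow_ne_zero 2 hs2.ne'))
  have h0 : HasFDerivAt Vc (0 : ℝ × ℝ × ℝ × ℝ →L[ℝ] ℝ)
      (Real.cos θ₁, Real.sin θ₁, -Real.cos θ₂, Real.sin θ₂) := by
    have := hdiff.hasFDerivAt
    rwa [hcrit] at this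
  -- the curve along the two unit circles
  have h1d : HasDerivAt (fun t : ℝ => θ₁ + t) 1 0 := (hasDerivAt_id 0).const_add θ₁
  have h2d : HasDerivAt (fun t : ℝ => θ₂ + t) 1 0 := (hasDerivAt_id 0).const_add θ₂
  have hc1d : HasDerivAt (fun t : ℝ => Real.cos (θ₁ + t)) (-Real.sin θ₁) 0 := by
    simpa [Function.comp_def] using (Real.hasDerivAt_cos (θ₁ + 0)).comp 0 h1d
  have hs1d : HasDerivAt (fun t : ℝ => Real.sin (θ₁ + t)) (Real.cos θ₁) 0 := by
    simpa [Function.comp_def] using (Real.hasDerivAt_sin (θ₁ + 0)).comp 0 h1d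
  have hc2d : HasDerivAt (fun t : ℝ => -Real.cos (θ₂ + t)) (Real.sin θ₂) 0 := by
    simpa [Function.comp_def, Pi.neg_def] using ((Real.hasDerivAt_cos (θ₂ + 0)).comp 0 h2d).neg
  have hs2d : HasDerivAt (fun t : ℝ => Real.sin (θ₂ + t)) (Real.cos θ₂) 0 := by
    simpa [Function.comp_def] using (Real.hasDerivAt_sin (θ₂ + 0)).comp 0 h2d
  have hcurve : HasDerivAt
      (fun t : ℝ => (Real.cos (θ₁ + t), Real.sin (θ₁ + t), -Real.cos (θ₂ + t), Real.sin (θ₂ + t)))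
      (-Real.sin θ₁, Real.cos θ₁, Real.sin θ₂, Real.cos θ₂) 0 :=
    hc1d.prodMk (hs1d.prodMk (hc2d.prodMk hs2d))
  have h0' : HasFDerivAt Vc (0 : ℝ × ℝ × ℝ × ℝ →L[ℝ] ℝ)
      (Real.cos (θ₁ + 0), Real.sin (θ₁ + 0), -Real.cos (θ₂ + 0), Real.sin (θ₂ + 0)) := by
    rw [add_zero, add_zero]; exact h0
  have hchain : HasDerivAt (fun t : ℝ =>
      Vc (Real.cos (θ₁ + t), Real.sin (θ₁ + t), -Real.cos (θ₂ + t), Real.sin (θ₂ + t))) 0 0 := by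
    simpa [Function.comp_def] using h0'.comp_hasDerivAt 0 hcurve
  -- the explicit derivative of the restricted potential
  have hu : HasDerivAt (fun t : ℝ => θ₁ + θ₂ + 2 * t) 2 0 := by
    simpa using ((hasDerivAt_id (0 : ℝ)).const_mul 2).const_add (θ₁ + θ₂)
  have hcosu : HasDerivAt (fun t : ℝ => Real.cos (θ₁ + θ₂ + 2 * t))
      (-Real.sin (θ₁ + θ₂) * 2) 0 := by
    have := (Real.hasDerivAt_cos (θ₁ + θ₂ + 2 * 0)).comp 0 hu
    simp only [mul_zero, add_zero] at this
    exact this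
  have hnum : HasDerivAt
      (fun t : ℝ => -(k * m₁ * m₂) * (2 + Real.cos (θ₁ + θ₂ + 2 * t) + Real.cos (θ₁ - θ₂)))
      (-(k * m₁ * m₂) * (-Real.sin (θ₁ + θ₂) * 2)) 0 :=
    ((hcosu.const_add 2).add_const (Real.cos (θ₁ - θ₂))).const_mul _
  have hdeninner : HasDerivAt
      (fun t : ℝ => (2 + 2 * Real.cos (θ₁ + θ₂ + 2 * t)) * (2 + 2 * Real.cos (θ₁ - θ₂)))
      ((2 * (-Real.sin (θ₁ + θ₂) * 2)) * (2 + 2 * Real.cos (θ₁ - θ₂))) 0 :=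
    ((hcosu.const_mul 2).const_add 2).mul_const _
  have hsqrtd : HasDerivAt
      (fun t : ℝ => Real.sqrt ((2 + 2 * Real.cos (θ₁ + θ₂ + 2 * t)) * (2 + 2 * Real.cos (θ₁ - θ₂))))
      ((2 * (-Real.sin (θ₁ + θ₂) * 2)) * (2 + 2 * Real.cos (θ₁ - θ₂)) /
        (2 * Real.sqrt ((2 + 2 * Real.cos (θ₁ + θ₂)) * (2 + 2 * Real.cos (θ₁ - θ₂))))) 0 := by
    have := hdeninner.sqrt (x := 0) (by
      show (2 + 2 * Real.cos (θ₁ + θ₂ + 2 * 0)) * (2 + 2 * Real.cos (θ₁ - θ₂)) ≠ 0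
      simp only [mul_zero, add_zero]
      exact hd0.ne')
    simp only [mul_zero, add_zero] at this
    exact this
  have hφ := (hnum.div hsqrtd (by
      show Real.sqrt ((2 + 2 * Real.cos (θ₁ + θ₂ + 2 * 0)) * (2 + 2 * Real.cos (θ₁ - θ₂))) ≠ 0
      simp only [mul_zero, add_zero]
      exact hr.ne')).sub_const (ω ^ 2 / 8 * (m₁ * 4 + m₂ * 4))
  simp only [mul_zero, add_zero] at hφ
  -- eventual equality of the two functions along the curve
  have hev1 : ∀ᶠ t in nhds (0 : ℝ), 0 < Real.sin (θ₁ + t) := by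
    have hcont : ContinuousAt (fun t : ℝ => Real.sin (θ₁ + t)) 0 := by fun_prop
    have := continuousAt_const.eventually_lt hcont (by
      show (0 : ℝ) < Real.sin (θ₁ + 0); simpa using hs1)
    simpa using this
  have hev2 : ∀ᶠ t in nhds (0 : ℝ), 0 < Real.sin (θ₂ + t) := by
    have hcont : ContinuousAt (fun t : ℝ => Real.sin (θ₂ + t)) 0 := by fun_prop
    have := continuousAt_const.eventually_lt hcont (by
      show (0 : ℝ) < Real.sin (θ₂ + 0); simpa using hs2)
    simpa using this
  have heq : (fun t : ℝ =>
      Vc (Real.cos (θ₁ + t), Real.sin (θ₁ + t), -Real.cos (θ₂ + t), Real.sin (θ₂ + t)))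
      =ᶠ[nhds (0 : ℝ)] (fun t : ℝ =>
        -(k * m₁ * m₂) * (2 + Real.cos (θ₁ + θ₂ + 2 * t) + Real.cos (θ₁ - θ₂)) /
          Real.sqrt ((2 + 2 * Real.cos (θ₁ + θ₂ + 2 * t)) * (2 + 2 * Real.cos (θ₁ - θ₂))) -
        ω ^ 2 / 8 * (m₁ * 4 + m₂ * 4)) := by
    filter_upwards [hev1, hev2] with t ht1 ht2
    rw [hVc, hV]
    rw [show θ₁ + θ₂ + 2 * t = (θ₁ + t) + (θ₂ + t) from by ring,
      show θ₁ - θ₂ = (θ₁ + t) - (θ₂ + t) from by ring]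
    rw [auxNum (θ₁ + t) (θ₂ + t), auxA (θ₁ + t) (θ₂ + t), auxB (θ₁ + t) (θ₂ + t),
      auxT1 m₁ (θ₁ + t) ht1.ne', auxT2 m₂ (θ₂ + t) ht2.ne']
  have hL := (hφ.congr_of_eventuallyEq heq).unique hchain
  -- derive the contradiction
  have hcossub : Real.cos (θ₁ - θ₂) - Real.cos (θ₁ + θ₂) = 2 * Real.sin θ₁ * Real.sin θ₂ := by
    rw [Real.cos_sub, Real.cos_add]; ring
  have hkM : 0 < k * m₁ * m₂ := mul_pos (mul_pos hk hm₁) hm₂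
  set r := Real.sqrt ((2 + 2 * Real.cos (θ₁ + θ₂)) * (2 + 2 * Real.cos (θ₁ - θ₂))) with hrdef
  have hnum0 : -(k * m₁ * m₂) * (-Real.sin (θ₁ + θ₂) * 2) * r -
      -(k * m₁ * m₂) * (2 + Real.cos (θ₁ + θ₂) + Real.cos (θ₁ - θ₂)) *
        (2 * (-Real.sin (θ₁ + θ₂) * 2) * (2 + 2 * Real.cos (θ₁ - θ₂)) / (2 * r)) = 0 :=
    (div_eq_zero_iff.mp hL).resolve_right (pow_ne_zero 2 hr.ne')
  have h4 : (-(k * m₁ * m₂) * (-Real.sin (θ₁ + θ₂) * 2) * r -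
      -(k * m₁ * m₂) * (2 + Real.cos (θ₁ + θ₂) + Real.cos (θ₁ - θ₂)) *
        (2 * (-Real.sin (θ₁ + θ₂) * 2) * (2 + 2 * Real.cos (θ₁ - θ₂)) / (2 * r))) * (2 * r)
      = 0 := by
    rw [hnum0, zero_mul]
  have hXc : -(k * m₁ * m₂) * (2 + Real.cos (θ₁ + θ₂) + Real.cos (θ₁ - θ₂)) *
      (2 * (-Real.sin (θ₁ + θ₂) * 2) * (2 + 2 * Real.cos (θ₁ - θ₂)) / (2 * r)) * (2 * r)
      = -(k * m₁ * m₂) * (2 + Real.cos (θ₁ + θ₂) + Real.cos (θ₁ - θ₂)) *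
        (2 * (-Real.sin (θ₁ + θ₂) * 2) * (2 + 2 * Real.cos (θ₁ - θ₂))) := by
    field_simp
  have h5 : -(k * m₁ * m₂) * (-Real.sin (θ₁ + θ₂) * 2) * r * (2 * r) -
      -(k * m₁ * m₂) * (2 + Real.cos (θ₁ + θ₂) + Real.cos (θ₁ - θ₂)) *
        (2 * (-Real.sin (θ₁ + θ₂) * 2) * (2 + 2 * Real.cos (θ₁ - θ₂))) = 0 := by
    linear_combination h4 + hXc
  have h6 : 4 * (k * m₁ * m₂) * Real.sin (θ₁ + θ₂) * (2 + 2 * Real.cos (θ₁ - θ₂)) *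
      (2 * Real.sin θ₁ * Real.sin θ₂) = 0 := by
    linear_combination (-1 : ℝ) * h5 + (4 * (k * m₁ * m₂) * Real.sin (θ₁ + θ₂)) * hr2 -
      (4 * (k * m₁ * m₂) * Real.sin (θ₁ + θ₂) * (2 + 2 * Real.cos (θ₁ - θ₂))) * hcossub
  have hpos : 0 < 4 * (k * m₁ * m₂) * Real.sin (θ₁ + θ₂) * (2 + 2 * Real.cos (θ₁ - θ₂)) *
      (2 * Real.sin θ₁ * Real.sin θ₂) :=
    mul_pos (mul_pos (mul_pos (by linarith) hS) hBB) (mul_pos (mul_pos two_pos hs1) hs2)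
  exact hpos.ne' h6
end

section
/- For all d₁, d₂ > 0 the identity (sech²(d₁)·sech⁴(d₂))/((tanh(d₁) + tanh(d₂))²·tanh(d₂)) = 2/(sinh²(d₁ + d₂)·sinh(2d₂)) holds. (This shows the angular-velocity formula ω² = k·m₁·sin²θ₁·sin⁴θ₂/((cos θ₁+cos θ₂)²·cos θ₂), obtained in a canonical configuration, coincides with the intrinsic formula ω² = 2k·m₁/(sinh²(d)·sinh(2d₂)) with d = d₁ + d₂, under the substitutions sin θᵢ = sech(dᵢ), cos θᵢ = tanh(dᵢ).) -/
open Real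

/-- For `d₁, d₂ > 0`,
`sech²(d₁) sech⁴(d₂) / ((tanh d₁ + tanh d₂)² tanh d₂) = 2 / (sinh²(d₁+d₂) sinh(2 d₂))`:
the angular-velocity formula obtained in a canonical configuration coincides with the
intrinsic one under the substitutions `sin θᵢ = sech dᵢ`, `cos θᵢ = tanh dᵢ`. -/
theorem angular_velocity_intrinsic_identity
    (d₁ d₂ : ℝ) (hd₁ : 0 < d₁) (hd₂ : 0 < d₂) :
    (1 / Real.cosh d₁) ^ 2 * (1 / Real.cosh d₂) ^ 4 /
        ((Real.tanh d₁ + Real.tanh d₂) ^ 2 * Real.tanh d₂) =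
      2 / (Real.sinh (d₁ + d₂) ^ 2 * Real.sinh (2 * d₂)) := by
  have hc₁ : Real.cosh d₁ ≠ 0 := (Real.cosh_pos d₁).ne'
  have hc₂ : Real.cosh d₂ ≠ 0 := (Real.cosh_pos d₂).ne'
  have hs₂ : Real.sinh d₂ ≠ 0 := (Real.sinh_pos_iff.2 hd₂).ne'
  have hs : Real.sinh (d₁ + d₂) ≠ 0 := (Real.sinh_pos_iff.2 (by linarith)).ne'
  have hsum : Real.tanh d₁ + Real.tanh d₂
      = Real.sinh (d₁ + d₂) / (Real.cosh d₁ * Real.cosh d₂) := by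
    rw [Real.tanh_eq_sinh_div_cosh, Real.tanh_eq_sinh_div_cosh, Real.sinh_add]
    field_simp
  rw [hsum, Real.sinh_two_mul, Real.tanh_eq_sinh_div_cosh]
  field_simp
end

section
/- Let c > 0 and define v : (0,1) → ℝ by v(u) = (u² − 1 + √((u²−1)² + 4c²u²))/(2cu). Then for every u ∈ (0,1): (i) 0 < v(u) < 1; (ii) v(u) is the unique w ∈ (0,1) satisfying c = ((1−u²)/u)·(w/(1−w²)); (iii) v is strictly increasing on (0,1); (iv) v(u) → 0 as u → 0⁺ and v(u) → 1 as u → 1⁻. -/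
open Real Filter

set_option maxHeartbeats 1600000 in
/-- For a mass ratio `c > 0`, the function
`v(u) = (u² - 1 + √((u²-1)² + 4c²u²))/(2cu)` on `(0,1)` satisfies: (i) `0 < v(u) < 1`;
(ii) `v(u)` is the unique `w ∈ (0,1)` with `c = ((1-u²)/u)(w/(1-w²))`;
(iii) `v` is strictly increasing on `(0,1)`; (iv) `v(u) → 0` as `u → 0⁺` and
`v(u) → 1` as `u → 1⁻`. -/
theorem canonical_angle_function_properties
    (c : ℝ) (hc : 0 < c) (v : ℝ → ℝ)
    (hv : ∀ u ∈ Set.Ioo (0 : ℝ) 1,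
      v u = (u ^ 2 - 1 + Real.sqrt ((u ^ 2 - 1) ^ 2 + 4 * c ^ 2 * u ^ 2)) / (2 * c * u)) :
    (∀ u ∈ Set.Ioo (0 : ℝ) 1, v u ∈ Set.Ioo (0 : ℝ) 1) ∧
    (∀ u ∈ Set.Ioo (0 : ℝ) 1, ∀ w ∈ Set.Ioo (0 : ℝ) 1,
      (c = ((1 - u ^ 2) / u) * (w / (1 - w ^ 2)) ↔ w = v u)) ∧
    StrictMonoOn v (Set.Ioo (0 : ℝ) 1) ∧
    Tendsto v (nhdsWithin 0 (Set.Ioo (0 : ℝ) 1)) (nhds 0) ∧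
    Tendsto v (nhdsWithin 1 (Set.Ioo (0 : ℝ) 1)) (nhds 1) := by
  have key : ∀ u ∈ Set.Ioo (0:ℝ) 1, 0 < v u ∧ v u < 1 ∧
      c * u * (1 - (v u)^2) = (1 - u^2) * v u := by
    rintro u ⟨hu0, hu1⟩
    have hvu := hv u ⟨hu0, hu1⟩
    set s := Real.sqrt ((u^2-1)^2 + 4*c^2*u^2) with hs
    have hs0 : (0:ℝ) ≤ (u^2-1)^2 + 4*c^2*u^2 := by positivity
    have hs2 : s^2 = (u^2-1)^2 + 4*c^2*u^2 := Real.sq_sqrt hs0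
    have hsnn : 0 ≤ s := Real.sqrt_nonneg _
    have hcu : (0:ℝ) < 2*c*u := by positivity
    have hslt : 1 - u^2 < s := by
      have h1 : (1 - u^2)^2 < s^2 := by nlinarith [mul_pos (mul_pos hc hc) (mul_pos hu0 hu0)]
      exact lt_of_pow_lt_pow_left₀ 2 hsnn h1
    have hpos : 0 < v u := by
      rw [hvu]; apply div_pos _ hcu; linarith
    have hlt1 : v u < 1 := by
      rw [hvu, div_lt_one hcu]
      have hR : (0:ℝ) < 2*c*u + (1 - u^2) := by nlinarith
      have h1 : s^2 < (2*c*u + (1 - u^2))^2 := by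
        nlinarith [mul_pos (mul_pos hc hu0) (mul_pos (sub_pos.mpr hu1) (by linarith : (0:ℝ) < 1 + u))]
      have := lt_of_pow_lt_pow_left₀ 2 (le_of_lt hR) h1
      linarith
    refine ⟨hpos, hlt1, ?_⟩
    have heq : v u * (2*c*u) = u^2 - 1 + s := by
      rw [hvu]; field_simp
    have hsx : s = 2*c*u*(v u) - u^2 + 1 := by linarith
    rw [hsx] at hs2
    have h4 : (4*c*u) * (c * u * (1 - (v u)^2)) = (4*c*u) * ((1 - u^2) * v u) := by
      linear_combination (-1 : ℝ) * hs2
    exact mul_left_cancel₀ (by positivity) h4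
  have huniq : ∀ u ∈ Set.Ioo (0:ℝ) 1, ∀ w ∈ Set.Ioo (0:ℝ) 1,
      (c = ((1 - u ^ 2) / u) * (w / (1 - w ^ 2)) ↔ w = v u) := by
    rintro u ⟨hu0, hu1⟩ w ⟨hw0, hw1⟩
    obtain ⟨hx0, hx1, hxeq⟩ := key u ⟨hu0, hu1⟩
    have hune : u ≠ 0 := ne_of_gt hu0
    have hw2 : (1:ℝ) - w^2 ≠ 0 := by nlinarith
    constructor
    · intro h
      have heqw : c * u * (1 - w^2) = (1 - u^2) * w := by
          field_simp at h; linear_combination h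
      have hfac : (w - v u) * (c*u*(w + v u) + (1 - u^2)) = 0 := by
        linear_combination hxeq - heqw
      have hpos : 0 < c*u*(w + v u) + (1 - u^2) := by
        have : 0 < c * u := mul_pos hc hu0
        nlinarith
      rcases mul_eq_zero.mp hfac with h' | h'
      · linarith
      · linarith
    · rintro rfl
      field_simp
      linarith [hxeq]
  refine ⟨fun u hu => ⟨(key u hu).1, (key u hu).2.1⟩, huniq, ?_, ?_, ?_⟩
  · rintro u1 ⟨h10, h11⟩ u2 ⟨h20, h21⟩ hlt
    obtain ⟨a0, a1, ae⟩ := key u1 ⟨h10, h11⟩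
    obtain ⟨b0, b1, be⟩ := key u2 ⟨h20, h21⟩
    by_contra hcon
    push_neg at hcon
    have heq : (1-u1^2)*u2*(v u1)*(1-(v u2)^2) = (1-u2^2)*u1*(v u2)*(1-(v u1)^2) := by
      linear_combination (u1*(1-(v u1)^2)) * be - (u2*(1-(v u2)^2)) * ae
    have h1 : (1-u2^2)*u1 < (1-u1^2)*u2 := by nlinarith [mul_pos (mul_pos (sub_pos.mpr hlt) h10) h20]
    have h2 : (v u2)*(1-(v u1)^2) ≤ (v u1)*(1-(v u2)^2) := by nlinarith [mul_nonneg (sub_nonneg.mpr hcon) (mul_pos a0 b0).le]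
    have h3 : 0 < (v u2)*(1-(v u1)^2) := mul_pos b0 (by nlinarith)
    have hA : 0 < (1-u1^2)*u2 := mul_pos (by nlinarith) h20
    have hfin : (1-u2^2)*u1*((v u2)*(1-(v u1)^2)) < (1-u1^2)*u2*((v u1)*(1-(v u2)^2)) :=
      calc (1-u2^2)*u1*((v u2)*(1-(v u1)^2))
          < (1-u1^2)*u2*((v u2)*(1-(v u1)^2)) := mul_lt_mul_of_pos_right h1 h3
        _ ≤ (1-u1^2)*u2*((v u1)*(1-(v u2)^2)) := mul_le_mul_of_nonneg_left h2 hA.le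
    linarith [heq, hfin]
  · -- limit at 0
    have hF : Tendsto (fun u => 2*c*u / (Real.sqrt ((u^2-1)^2 + 4*c^2*u^2) + (1 - u^2)))
        (nhds (0:ℝ)) (nhds 0) := by
      have hden : Tendsto (fun u : ℝ => Real.sqrt ((u^2-1)^2 + 4*c^2*u^2) + (1 - u^2))
          (nhds 0) (nhds 2) := by
        have hpoly : Continuous (fun u : ℝ => (u^2-1)^2 + 4*c^2*u^2) :=
          (((continuous_pow 2).sub continuous_const).pow 2).add
            (continuous_const.mul (continuous_pow 2))
        have hcont : Continuous (fun u : ℝ => Real.sqrt ((u^2-1)^2 + 4*c^2*u^2) + (1 - u^2)) :=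
          (Real.continuous_sqrt.comp hpoly).add (continuous_const.sub (continuous_pow 2))
        have h := hcont.tendsto 0
        norm_num at h
        exact h
      have hnum : Tendsto (fun u : ℝ => 2*c*u) (nhds 0) (nhds 0) := by
        have : Continuous (fun u : ℝ => 2*c*u) := continuous_const.mul continuous_id
        simpa using this.tendsto 0
      have := hnum.div hden (by norm_num)
      rw [zero_div] at this
      exact this
    refine (hF.mono_left nhdsWithin_le_nhds).congr' ?_
    filter_upwards [self_mem_nhdsWithin] with u hu
    obtain ⟨hu0, hu1⟩ := hu
    have hvu := hv u ⟨hu0, hu1⟩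
    set s := Real.sqrt ((u^2-1)^2 + 4*c^2*u^2) with hsdef
    have hs0 : (0:ℝ) ≤ (u^2-1)^2 + 4*c^2*u^2 := by positivity
    have hs2 : s^2 = (u^2-1)^2 + 4*c^2*u^2 := Real.sq_sqrt hs0
    have hsnn : 0 ≤ s := Real.sqrt_nonneg _
    have hslt : 1 - u^2 < s := by
      have h1 : (1 - u^2)^2 < s^2 := by nlinarith [mul_pos (mul_pos hc hc) (mul_pos hu0 hu0)]
      exact lt_of_pow_lt_pow_left₀ 2 hsnn h1
    have hd1 : (0:ℝ) < s + (1 - u^2) := by nlinarith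
    have hd2 : (0:ℝ) < 2*c*u := by positivity
    rw [hvu, div_eq_div_iff hd1.ne' hd2.ne']
    linear_combination -hs2
  · -- limit at 1
    have h2c : Real.sqrt ((1^2-1)^2 + 4*c^2*1^2) = 2*c := by
      have : ((1:ℝ)^2-1)^2 + 4*c^2*1^2 = (2*c)^2 := by ring
      rw [this, Real.sqrt_sq (by linarith)]
    have hF : Tendsto (fun u => 2*c*u / (Real.sqrt ((u^2-1)^2 + 4*c^2*u^2) + (1 - u^2)))
        (nhds (1:ℝ)) (nhds 1) := by
      have hden : Tendsto (fun u : ℝ => Real.sqrt ((u^2-1)^2 + 4*c^2*u^2) + (1 - u^2))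
          (nhds 1) (nhds (2*c)) := by
        have hpoly : Continuous (fun u : ℝ => (u^2-1)^2 + 4*c^2*u^2) :=
          (((continuous_pow 2).sub continuous_const).pow 2).add
            (continuous_const.mul (continuous_pow 2))
        have hcont : Continuous (fun u : ℝ => Real.sqrt ((u^2-1)^2 + 4*c^2*u^2) + (1 - u^2)) :=
          (Real.continuous_sqrt.comp hpoly).add (continuous_const.sub (continuous_pow 2))
        have h := hcont.tendsto 1
        norm_num at h
        convert h using 2
        rw [Real.sqrt_sq hc.le]
      have hnum : Tendsto (fun u : ℝ => 2*c*u) (nhds 1) (nhds (2*c)) := by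
        have : Continuous (fun u : ℝ => 2*c*u) := continuous_const.mul continuous_id
        simpa using this.tendsto 1
      have := hnum.div hden (by positivity)
      rw [div_self (by positivity : (2*c:ℝ) ≠ 0)] at this
      exact this
    refine (hF.mono_left nhdsWithin_le_nhds).congr' ?_
    filter_upwards [self_mem_nhdsWithin] with u hu
    obtain ⟨hu0, hu1⟩ := hu
    have hvu := hv u ⟨hu0, hu1⟩
    set s := Real.sqrt ((u^2-1)^2 + 4*c^2*u^2) with hsdef
    have hs0 : (0:ℝ) ≤ (u^2-1)^2 + 4*c^2*u^2 := by positivity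
    have hs2 : s^2 = (u^2-1)^2 + 4*c^2*u^2 := Real.sq_sqrt hs0
    have hsnn : 0 ≤ s := Real.sqrt_nonneg _
    have hslt : 1 - u^2 < s := by
      have h1 : (1 - u^2)^2 < s^2 := by nlinarith [mul_pos (mul_pos hc hc) (mul_pos hu0 hu0)]
      exact lt_of_pow_lt_pow_left₀ 2 hsnn h1
    have hd1 : (0:ℝ) < s + (1 - u^2) := by nlinarith
    have hd2 : (0:ℝ) < 2*c*u := by positivity
    rw [hvu, div_eq_div_iff hd1.ne' hd2.ne']
    linear_combination -hs2
end

section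
/- Let c > 0, let v(u) = (u² − 1 + √((u²−1)² + 4c²u²))/(2cu) for u ∈ (0,1), let F(u,v) = 1 − 3u²v² − u² − v², and define f(u) = F(u, v(u)). Then f is strictly decreasing on (0,1), f(u) → 1 as u → 0⁺, f(u) → −4 as u → 1⁻, and consequently f has a unique zero u₀ ∈ (0,1). -/
open Real Filter

/-- For a mass ratio `c > 0`, with
`v(u) = (u² - 1 + √((u²-1)² + 4c²u²))/(2cu)` and `F(u,v) = 1 - 3u²v² - u² - v²`, the
function `f(u) = F(u, v(u))` is strictly decreasing on `(0,1)`, tends to `1` as `u → 0⁺`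
and to `-4` as `u → 1⁻`, and consequently has a unique zero `u₀ ∈ (0,1)`. -/
theorem stability_function_strict_anti_and_unique_zero
    (c : ℝ) (hc : 0 < c) (v f : ℝ → ℝ)
    (hv : ∀ u ∈ Set.Ioo (0 : ℝ) 1,
      v u = (u ^ 2 - 1 + Real.sqrt ((u ^ 2 - 1) ^ 2 + 4 * c ^ 2 * u ^ 2)) / (2 * c * u))
    (hf : ∀ u ∈ Set.Ioo (0 : ℝ) 1,
      f u = 1 - 3 * u ^ 2 * (v u) ^ 2 - u ^ 2 - (v u) ^ 2) :
    StrictAntiOn f (Set.Ioo (0 : ℝ) 1) ∧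
    Tendsto f (nhdsWithin 0 (Set.Ioo (0 : ℝ) 1)) (nhds 1) ∧
    Tendsto f (nhdsWithin 1 (Set.Ioo (0 : ℝ) 1)) (nhds (-4)) ∧
    (∃! u₀ : ℝ, u₀ ∈ Set.Ioo (0 : ℝ) 1 ∧ f u₀ = 0) := by
  set S : ℝ → ℝ := fun u => Real.sqrt ((u ^ 2 - 1) ^ 2 + 4 * c ^ 2 * u ^ 2) with hSdef
  have hSnn : ∀ u : ℝ, 0 ≤ S u := fun u => Real.sqrt_nonneg _
  have hS2 : ∀ u : ℝ, (S u) ^ 2 = (u ^ 2 - 1) ^ 2 + 4 * c ^ 2 * u ^ 2 := fun u =>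
    Real.sq_sqrt (by positivity)
  have hScont : Continuous S := by
    apply Real.continuous_sqrt.comp; continuity
  have hSgt : ∀ u ∈ Set.Ioo (0 : ℝ) 1, 1 - u ^ 2 < S u := by
    intro u hu
    have h2 : (0:ℝ) ≤ 1 - u ^ 2 := by nlinarith [hu.1, hu.2]
    rw [hSdef]
    rw [Real.lt_sqrt h2]
    nlinarith [mul_pos (pow_pos hc 2) (pow_pos hu.1 2)]
  have hv_pos : ∀ u ∈ Set.Ioo (0 : ℝ) 1, 0 < v u := by
    intro u hu
    rw [hv u hu]
    apply div_pos
    · have := hSgt u hu; linarith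
    · have := hu.1; positivity
  have hquad : ∀ u ∈ Set.Ioo (0 : ℝ) 1,
      c * u * (v u) ^ 2 = (u ^ 2 - 1) * (v u) + c * u := by
    intro u hu
    have hu0 : (0:ℝ) < u := hu.1
    rw [hv u hu]
    have hd : 2 * c * u ≠ 0 := by positivity
    field_simp
    nlinarith [hS2 u, Real.sq_sqrt (show (0:ℝ) ≤ (u ^ 2 - 1) ^ 2 + c ^ 2 * u ^ 2 * 4 by positivity)]
  have hv_lt1 : ∀ u ∈ Set.Ioo (0 : ℝ) 1, v u < 1 := by
    intro u hu
    have hq := hquad u hu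
    have hvp := hv_pos u hu
    by_contra h
    push_neg at h
    have h1 : 0 ≤ (v u) ^ 2 - 1 := by nlinarith
    have h2 : 0 < c * u := mul_pos hc hu.1
    have h3 : 0 ≤ c * u * ((v u) ^ 2 - 1) := mul_nonneg h2.le h1
    have h4 : (u ^ 2 - 1) * (v u) < 0 :=
      mul_neg_of_neg_of_pos (by nlinarith [hu.1, hu.2]) hvp
    nlinarith
  -- v strictly increasing
  have hvmono : ∀ a ∈ Set.Ioo (0 : ℝ) 1, ∀ b ∈ Set.Ioo (0 : ℝ) 1, a < b → v a < v b := by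
    intro a ha b hb hab
    by_contra h
    push_neg at h
    have qa := hquad a ha
    have qb := hquad b hb
    have hva := hv_pos a ha
    have hvb := hv_pos b hb
    have key : c * a * b * ((v a) - (v b)) * ((v a) * (v b) + 1)
        = (v a) * (v b) * (a - b) * (a * b + 1) := by
      linear_combination b * (v b) * qa - a * (v a) * qb
    have l1 : 0 ≤ c * a * b * ((v a) - (v b)) * ((v a) * (v b) + 1) :=
      mul_nonneg (mul_nonneg (mul_pos (mul_pos hc ha.1) hb.1).le (by linarith))
        (by nlinarith [mul_pos hva hvb])
    have l2 : (v a) * (v b) * (a - b) * (a * b + 1) < 0 :=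
      mul_neg_of_neg_of_pos
        (mul_neg_of_pos_of_neg (mul_pos hva hvb) (by linarith))
        (by nlinarith [mul_pos ha.1 hb.1])
    linarith [key, l1, l2]
  have hanti : StrictAntiOn f (Set.Ioo (0 : ℝ) 1) := by
    intro a ha b hb hab
    rw [hf a ha, hf b hb]
    have h1 := hvmono a ha b hb hab
    have hva := hv_pos a ha
    have hvb := hv_pos b hb
    have ha2 : a ^ 2 < b ^ 2 := by nlinarith [ha.1, hb.1]
    have hv2 : (v a) ^ 2 < (v b) ^ 2 := by nlinarith
    nlinarith [sq_nonneg a, sq_nonneg (v a), sq_nonneg b, sq_nonneg (v b)]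
  -- alternative formula for v (good near 0)
  have halt : ∀ u ∈ Set.Ioo (0 : ℝ) 1, v u = 2 * c * u / (S u + 1 - u ^ 2) := by
    intro u hu
    have hden : 0 < S u + 1 - u ^ 2 := by have := hSnn u; nlinarith [hu.2, hu.1]
    rw [hv u hu, div_eq_div_iff (by have := hu.1; positivity) (by linarith)]
    nlinarith [hS2 u]
  -- limit of v at 0
  have nb0 : (nhdsWithin (0:ℝ) (Set.Ioo 0 1)).NeBot := by
    apply mem_closure_iff_nhdsWithin_neBot.mp
    rw [closure_Ioo (by norm_num : (0:ℝ) ≠ 1)]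
    constructor <;> norm_num
  have nb1 : (nhdsWithin (1:ℝ) (Set.Ioo 0 1)).NeBot := by
    apply mem_closure_iff_nhdsWithin_neBot.mp
    rw [closure_Ioo (by norm_num : (0:ℝ) ≠ 1)]
    constructor <;> norm_num
  have hS0 : S 0 = 1 := by
    show Real.sqrt (((0:ℝ) ^ 2 - 1) ^ 2 + 4 * c ^ 2 * 0 ^ 2) = 1
    rw [show (((0:ℝ) ^ 2 - 1) ^ 2 + 4 * c ^ 2 * 0 ^ 2) = 1 by norm_num]
    exact Real.sqrt_one
  have hS1 : S 1 = 2 * c := by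
    show Real.sqrt (((1:ℝ) ^ 2 - 1) ^ 2 + 4 * c ^ 2 * 1 ^ 2) = 2 * c
    rw [show (((1:ℝ) ^ 2 - 1) ^ 2 + 4 * c ^ 2 * 1 ^ 2) = (2 * c) ^ 2 by ring]
    exact Real.sqrt_sq (by positivity)
  have hv0 : Tendsto v (nhdsWithin 0 (Set.Ioo (0:ℝ) 1)) (nhds 0) := by
    have hg : ContinuousAt (fun u => 2 * c * u / (S u + 1 - u ^ 2)) 0 := by
      apply ContinuousAt.div
      · fun_prop
      · exact (hScont.add continuous_const).sub (continuous_pow 2) |>.continuousAt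
      · simp [hS0]
    have htd : Tendsto (fun u => 2 * c * u / (S u + 1 - u ^ 2))
        (nhdsWithin 0 (Set.Ioo (0:ℝ) 1)) (nhds (2 * c * 0 / (S 0 + 1 - 0 ^ 2))) :=
      hg.tendsto.mono_left nhdsWithin_le_nhds
    rw [show (2 * c * 0 / (S 0 + 1 - 0 ^ 2) : ℝ) = 0 by rw [hS0]; norm_num] at htd
    exact htd.congr' (eventually_mem_nhdsWithin.mono fun u hu => (halt u hu).symm)
  have hv1 : Tendsto v (nhdsWithin 1 (Set.Ioo (0:ℝ) 1)) (nhds 1) := by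
    have hg : ContinuousAt (fun u => (u ^ 2 - 1 + S u) / (2 * c * u)) 1 := by
      apply ContinuousAt.div
      · exact ((continuous_pow 2).sub continuous_const |>.add hScont).continuousAt
      · fun_prop
      · simp; positivity
    have htd : Tendsto (fun u => (u ^ 2 - 1 + S u) / (2 * c * u))
        (nhdsWithin 1 (Set.Ioo (0:ℝ) 1)) (nhds ((1 ^ 2 - 1 + S 1) / (2 * c * 1))) :=
      hg.tendsto.mono_left nhdsWithin_le_nhds
    rw [show (((1:ℝ) ^ 2 - 1 + S 1) / (2 * c * 1) : ℝ) = 1 by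
      rw [hS1]; field_simp; ring] at htd
    exact htd.congr' (eventually_mem_nhdsWithin.mono fun u hu => (hv u hu).symm)
  have hid0 : Tendsto (fun u : ℝ => u) (nhdsWithin 0 (Set.Ioo (0:ℝ) 1)) (nhds 0) :=
    tendsto_id.mono_right nhdsWithin_le_nhds
  have hid1 : Tendsto (fun u : ℝ => u) (nhdsWithin 1 (Set.Ioo (0:ℝ) 1)) (nhds 1) :=
    tendsto_id.mono_right nhdsWithin_le_nhds
  have hf0 : Tendsto f (nhdsWithin 0 (Set.Ioo (0:ℝ) 1)) (nhds 1) := by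
    have : Tendsto (fun u => 1 - 3 * u ^ 2 * (v u) ^ 2 - u ^ 2 - (v u) ^ 2)
        (nhdsWithin 0 (Set.Ioo (0:ℝ) 1)) (nhds (1 - 3 * 0 ^ 2 * 0 ^ 2 - 0 ^ 2 - 0 ^ 2)) := by
      exact ((tendsto_const_nhds.sub ((((hid0.pow 2).const_mul 3).mul (hv0.pow 2)))).sub
        (hid0.pow 2)).sub (hv0.pow 2)
    rw [show ((1:ℝ) - 3 * 0 ^ 2 * 0 ^ 2 - 0 ^ 2 - 0 ^ 2) = 1 by norm_num] at this
    exact this.congr' (eventually_mem_nhdsWithin.mono fun u hu => (hf u hu).symm)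
  have hf1 : Tendsto f (nhdsWithin 1 (Set.Ioo (0:ℝ) 1)) (nhds (-4)) := by
    have : Tendsto (fun u => 1 - 3 * u ^ 2 * (v u) ^ 2 - u ^ 2 - (v u) ^ 2)
        (nhdsWithin 1 (Set.Ioo (0:ℝ) 1)) (nhds (1 - 3 * 1 ^ 2 * 1 ^ 2 - 1 ^ 2 - 1 ^ 2)) := by
      exact ((tendsto_const_nhds.sub ((((hid1.pow 2).const_mul 3).mul (hv1.pow 2)))).sub
        (hid1.pow 2)).sub (hv1.pow 2)
    rw [show ((1:ℝ) - 3 * 1 ^ 2 * 1 ^ 2 - 1 ^ 2 - 1 ^ 2) = -4 by norm_num] at this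
    exact this.congr' (eventually_mem_nhdsWithin.mono fun u hu => (hf u hu).symm)
  refine ⟨hanti, hf0, hf1, ?_⟩
  -- existence of a zero
  have hea : ∃ a ∈ Set.Ioo (0:ℝ) 1, 0 < f a := by
    have h1 : ∀ᶠ u in nhdsWithin 0 (Set.Ioo (0:ℝ) 1), 0 < f u :=
      hf0.eventually (eventually_gt_nhds (by norm_num))
    obtain ⟨a, ha, hfa⟩ := (eventually_mem_nhdsWithin.and h1).exists
    exact ⟨a, ha, hfa⟩
  have heb : ∃ b ∈ Set.Ioo (0:ℝ) 1, f b < 0 := by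
    have h1 : ∀ᶠ u in nhdsWithin 1 (Set.Ioo (0:ℝ) 1), f u < 0 :=
      hf1.eventually (eventually_lt_nhds (by norm_num))
    obtain ⟨b, hb, hfb⟩ := (eventually_mem_nhdsWithin.and h1).exists
    exact ⟨b, hb, hfb⟩
  obtain ⟨a, ha, hfa⟩ := hea
  obtain ⟨b, hb, hfb⟩ := heb
  have hab : a < b := by
    rcases lt_trichotomy a b with h | h | h
    · exact h
    · exfalso; rw [h] at hfa; linarith
    · exfalso; have := hanti hb ha h; linarith
  have hsub : Set.Icc a b ⊆ Set.Ioo (0:ℝ) 1 := fun x hx =>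
    ⟨lt_of_lt_of_le ha.1 hx.1, lt_of_le_of_lt hx.2 hb.2⟩
  have hcont : ContinuousOn f (Set.Icc a b) := by
    have hG : ContinuousOn (fun u => 1 - 3 * u ^ 2 *
        ((u ^ 2 - 1 + S u) / (2 * c * u)) ^ 2 - u ^ 2 -
        ((u ^ 2 - 1 + S u) / (2 * c * u)) ^ 2) (Set.Icc a b) := by
      apply ContinuousOn.sub
      apply ContinuousOn.sub
      apply ContinuousOn.sub continuousOn_const
      · apply ContinuousOn.mul
        · exact (continuousOn_const.mul ((continuous_pow 2).continuousOn))
        · apply ContinuousOn.pow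
          apply ContinuousOn.div
          · exact (((continuous_pow 2).sub continuous_const).add hScont).continuousOn
          · fun_prop
          · intro x hx
            have : 0 < x := lt_of_lt_of_le ha.1 hx.1
            positivity
      · exact (continuous_pow 2).continuousOn
      · apply ContinuousOn.pow
        apply ContinuousOn.div
        · exact (((continuous_pow 2).sub continuous_const).add hScont).continuousOn
        · fun_prop
        · intro x hx
          have : 0 < x := lt_of_lt_of_le ha.1 hx.1
          positivity
    apply hG.congr
    intro x hx
    rw [hf x (hsub hx), hv x (hsub hx)]
  have hIVT := intermediate_value_Icc' (le_of_lt hab) hcont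
  have h0mem : (0:ℝ) ∈ Set.Icc (f b) (f a) := ⟨le_of_lt hfb, le_of_lt hfa⟩
  obtain ⟨u₀, hu₀, hfu₀⟩ := hIVT h0mem
  refine ⟨u₀, ⟨hsub hu₀, hfu₀⟩, ?_⟩
  rintro y ⟨hy, hfy⟩
  exact hanti.injOn hy (hsub hu₀) (by rw [hfy, hfu₀])
end

section
/- Let c > 0 and let v(u) = (u² − 1 + √((u²−1)² + 4c²u²))/(2cu) for u ∈ (0,1). Then for every u ∈ (0,1): 1 − 3u²·v(u)² − u² − v(u)² > 0 if and only if 4c·u³ < (1−u²)^{3/2}·√(3u²+1), equivalently if and only if p(u) < 0 where p(x) = 3x⁸ + (16c²−8)x⁶ + 6x⁴ − 1 = (3x²+1)(x²−1)³ + 16c²x⁶. In particular, with u = cos θ₁ and c = m₁/m₂, the elliptic relative equilibrium is stable precisely when m₁/m₂ < sin³θ₁·√(3cos²θ₁+1)/(4cos³θ₁). -/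
open Real

set_option maxHeartbeats 1000000 in
/-- For a mass ratio `c > 0` and
`v(u) = (u² - 1 + √((u²-1)² + 4c²u²))/(2cu)` on `(0,1)`, the stability quantity
`F(u, v(u)) = 1 - 3u²v(u)² - u² - v(u)²` is positive iff `4cu³ < (1-u²)^{3/2}√(3u²+1)`,
equivalently iff `p(u) < 0` where
`p(x) = 3x⁸ + (16c²-8)x⁶ + 6x⁴ - 1 = (3x²+1)(x²-1)³ + 16c²x⁶`. In particular, with
`u = cos θ₁` and `c = m₁/m₂`, the elliptic relative equilibrium is stable precisely when
`m₁/m₂ < sin³θ₁ √(3cos²θ₁+1) / (4cos³θ₁)`. -/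
theorem stability_criterion_for_elliptic_relative_equilibria
    (c : ℝ) (hc : 0 < c) (v : ℝ → ℝ)
    (hv : ∀ u ∈ Set.Ioo (0 : ℝ) 1,
      v u = (u ^ 2 - 1 + Real.sqrt ((u ^ 2 - 1) ^ 2 + 4 * c ^ 2 * u ^ 2)) / (2 * c * u)) :
    (∀ x : ℝ, 3 * x ^ 8 + (16 * c ^ 2 - 8) * x ^ 6 + 6 * x ^ 4 - 1 =
      (3 * x ^ 2 + 1) * (x ^ 2 - 1) ^ 3 + 16 * c ^ 2 * x ^ 6) ∧
    (∀ u ∈ Set.Ioo (0 : ℝ) 1,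
      (0 < 1 - 3 * u ^ 2 * (v u) ^ 2 - u ^ 2 - (v u) ^ 2 ↔
        4 * c * u ^ 3 < (1 - u ^ 2) ^ ((3 : ℝ) / 2) * Real.sqrt (3 * u ^ 2 + 1)) ∧
      (0 < 1 - 3 * u ^ 2 * (v u) ^ 2 - u ^ 2 - (v u) ^ 2 ↔
        3 * u ^ 8 + (16 * c ^ 2 - 8) * u ^ 6 + 6 * u ^ 4 - 1 < 0)) ∧
    (∀ θ₁ ∈ Set.Ioo 0 (π / 2),
      (0 < 1 - 3 * Real.cos θ₁ ^ 2 * (v (Real.cos θ₁)) ^ 2 - Real.cos θ₁ ^ 2 -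
          (v (Real.cos θ₁)) ^ 2 ↔
        c < Real.sin θ₁ ^ 3 * Real.sqrt (3 * Real.cos θ₁ ^ 2 + 1) /
          (4 * Real.cos θ₁ ^ 3))) := by
  have key : ∀ u ∈ Set.Ioo (0 : ℝ) 1,
      (0 < 1 - 3 * u ^ 2 * (v u) ^ 2 - u ^ 2 - (v u) ^ 2 ↔
        4 * c * u ^ 3 < (1 - u ^ 2) ^ ((3 : ℝ) / 2) * Real.sqrt (3 * u ^ 2 + 1)) ∧
      (0 < 1 - 3 * u ^ 2 * (v u) ^ 2 - u ^ 2 - (v u) ^ 2 ↔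
        3 * u ^ 8 + (16 * c ^ 2 - 8) * u ^ 6 + 6 * u ^ 4 - 1 < 0) := by
    rintro u ⟨hu0, hu1⟩
    have hvu := hv u ⟨hu0, hu1⟩
    set s := Real.sqrt ((u ^ 2 - 1) ^ 2 + 4 * c ^ 2 * u ^ 2) with hs
    have hDpos : (0:ℝ) < (u ^ 2 - 1) ^ 2 + 4 * c ^ 2 * u ^ 2 := by positivity
    have hs2 : s ^ 2 = (u ^ 2 - 1) ^ 2 + 4 * c ^ 2 * u ^ 2 := Real.sq_sqrt hDpos.le
    have hsnn : 0 ≤ s := Real.sqrt_nonneg _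
    have hu2 : u ^ 2 < 1 := by nlinarith
    have hs_gt : 1 - u ^ 2 < s := by
      have h1 : Real.sqrt ((1 - u ^ 2) ^ 2) < s :=
        Real.sqrt_lt_sqrt (sq_nonneg _)
          (by nlinarith [mul_pos (mul_pos hc hu0) (mul_pos hc hu0)])
      rwa [Real.sqrt_sq (by linarith : (0:ℝ) ≤ 1 - u ^ 2)] at h1
    have hcu : (0:ℝ) < 2 * c * u := by positivity
    have hvpos : 0 < v u := by
      rw [hvu]; apply div_pos (by nlinarith) hcu
    have hvq : c * u * (v u) ^ 2 + (1 - u ^ 2) * (v u) - c * u = 0 := by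
      rw [hvu]
      field_simp
      nlinarith [hs2]
    set V := v u with hV
    -- F > 0 ↔ K*V > 4cu³, where K = (3u²+1)(1-u²)
    have hFeq : c * u * (1 - 3 * u ^ 2 * V ^ 2 - u ^ 2 - V ^ 2)
        = (3 * u ^ 2 + 1) * (1 - u ^ 2) * V - 4 * c * u ^ 3 := by
      linear_combination (-(3 * u ^ 2 + 1)) * hvq
    have hKpos : (0:ℝ) < (3 * u ^ 2 + 1) * (1 - u ^ 2) := by nlinarith
    have hiden : c * u * (16 * c ^ 2 * u ^ 6 - (3 * u ^ 2 + 1) * (1 - u ^ 2) ^ 3)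
        = (4 * c * u ^ 3 - (3 * u ^ 2 + 1) * (1 - u ^ 2) * V) *
          (4 * c ^ 2 * u ^ 4 + c * u * ((3 * u ^ 2 + 1) * (1 - u ^ 2)) * V +
            (3 * u ^ 2 + 1) * (1 - u ^ 2) * (1 - u ^ 2)) := by
      linear_combination ((3 * u ^ 2 + 1) * (1 - u ^ 2)) ^ 2 * hvq
    have hM : 0 < 4 * c ^ 2 * u ^ 4 + c * u * ((3 * u ^ 2 + 1) * (1 - u ^ 2)) * V +
        (3 * u ^ 2 + 1) * (1 - u ^ 2) * (1 - u ^ 2) := by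
      have h1 : 0 < c * u * ((3 * u ^ 2 + 1) * (1 - u ^ 2)) * V :=
        mul_pos (mul_pos (mul_pos hc hu0) hKpos) hvpos
      nlinarith
    have hcupos : (0:ℝ) < c * u := mul_pos hc hu0
    have hQiff : (0 < 1 - 3 * u ^ 2 * V ^ 2 - u ^ 2 - V ^ 2) ↔
        16 * c ^ 2 * u ^ 6 < (3 * u ^ 2 + 1) * (1 - u ^ 2) ^ 3 := by
      constructor
      · intro hF
        have h1 : 0 < (3 * u ^ 2 + 1) * (1 - u ^ 2) * V - 4 * c * u ^ 3 := by
          have := mul_pos hcupos hF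
          linarith [hFeq]
        have h2 : c * u * (16 * c ^ 2 * u ^ 6 - (3 * u ^ 2 + 1) * (1 - u ^ 2) ^ 3) < 0 := by
          rw [hiden]
          exact mul_neg_of_neg_of_pos (by linarith) hM
        by_contra hcon
        push_neg at hcon
        have h5 : 0 ≤ c * u * (16 * c ^ 2 * u ^ 6 - (3 * u ^ 2 + 1) * (1 - u ^ 2) ^ 3) :=
          mul_nonneg hcupos.le (by linarith)
        linarith
      · intro hQ
        have h2 : (4 * c * u ^ 3 - (3 * u ^ 2 + 1) * (1 - u ^ 2) * V) *
            (4 * c ^ 2 * u ^ 4 + c * u * ((3 * u ^ 2 + 1) * (1 - u ^ 2)) * V +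
              (3 * u ^ 2 + 1) * (1 - u ^ 2) * (1 - u ^ 2)) < 0 := by
          rw [← hiden]
          exact mul_neg_of_pos_of_neg hcupos (by linarith)
        have h3 : 4 * c * u ^ 3 - (3 * u ^ 2 + 1) * (1 - u ^ 2) * V < 0 := by
          by_contra h
          push_neg at h
          linarith [mul_nonneg h hM.le]
        have h4 : c * u * 0 < c * u * (1 - 3 * u ^ 2 * V ^ 2 - u ^ 2 - V ^ 2) := by
          rw [hFeq, mul_zero]; linarith
        exact lt_of_mul_lt_mul_left h4 hcupos.le
    constructor
    · rw [hQiff]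
      have h32 : (1 - u ^ 2) ^ ((3 : ℝ) / 2) = Real.sqrt ((1 - u ^ 2) ^ 3) := by
        rw [show ((3:ℝ)/2) = (3:ℕ) * (1/2 : ℝ) by norm_num,
          Real.rpow_mul (by linarith : (0:ℝ) ≤ 1 - u ^ 2), Real.rpow_natCast,
          ← Real.sqrt_eq_rpow]
      rw [h32, ← Real.sqrt_mul (pow_nonneg (by linarith : (0:ℝ) ≤ 1 - u ^ 2) 3) (3 * u ^ 2 + 1),
        Real.lt_sqrt (mul_nonneg (by linarith : (0:ℝ) ≤ 4 * c) (pow_nonneg hu0.le 3))]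
      constructor <;> intro h <;> nlinarith [h]
    · rw [hQiff]
      constructor <;> intro h <;> nlinarith [h]
  refine ⟨fun x => by ring, key, ?_⟩
  rintro θ₁ ⟨hθ0, hθ1⟩
  have hπ := Real.pi_pos
  have hcos0 : 0 < Real.cos θ₁ := Real.cos_pos_of_mem_Ioo ⟨by linarith, hθ1⟩
  have hsin0 : 0 < Real.sin θ₁ := Real.sin_pos_of_pos_of_lt_pi hθ0 (by linarith)
  have hcos1 : Real.cos θ₁ < 1 := by
    nlinarith [Real.sin_sq_add_cos_sq θ₁]
  have h := (key (Real.cos θ₁) ⟨hcos0, hcos1⟩).1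
  rw [h]
  have hsin : Real.sin θ₁ = Real.sqrt (1 - Real.cos θ₁ ^ 2) :=
    Real.sin_eq_sqrt_one_sub_cos_sq hθ0.le (by linarith)
  have hsin3 : Real.sin θ₁ ^ 3 = (1 - Real.cos θ₁ ^ 2) ^ ((3 : ℝ) / 2) := by
    rw [hsin, Real.sqrt_eq_rpow, ← Real.rpow_natCast ((1 - Real.cos θ₁ ^ 2) ^ ((1:ℝ)/2)) 3,
      ← Real.rpow_mul (by nlinarith : (0:ℝ) ≤ 1 - Real.cos θ₁ ^ 2)]
    norm_num
  rw [hsin3, lt_div_iff₀ (mul_pos (by norm_num : (0:ℝ) < 4) (pow_pos hcos0 3))]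
  constructor <;> intro hh <;> linarith [hh]
end

section
/- Let c > 0, let v(u) = (u² − 1 + √((u²−1)² + 4c²u²))/(2cu) for u ∈ (0,1), let F(u,v) = 1 − 3u²v² − u² − v², and let u₀ ∈ (0,1) be the unique zero of u ↦ F(u, v(u)). Then the function g(u) = √(u·(1 − v(u)²)) is strictly increasing on (0, u₀] and strictly decreasing on [u₀, 1). (Since the norm of the momentum of the elliptic relative equilibrium is ‖μ(u)‖ = λ·√(u(1−v(u)²)) for a positive constant λ, the change of stability occurs at a critical value of the momentum.) -/
open Real

open Set in

noncomputable def SS (c u : ℝ) : ℝ := Real.sqrt ((u ^ 2 - 1) ^ 2 + 4 * c ^ 2 * u ^ 2)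
noncomputable def WW (c u : ℝ) : ℝ := (u ^ 2 - 1 + SS c u) / (2 * c * u)

lemma arg_pos {c u : ℝ} (hc : 0 < c) (hu : 0 < u) :
    0 < (u ^ 2 - 1) ^ 2 + 4 * c ^ 2 * u ^ 2 := by
  nlinarith [sq_nonneg (u ^ 2 - 1), pow_pos (mul_pos hc hu) 2]

lemma SS_pos {c u : ℝ} (hc : 0 < c) (hu : 0 < u) : 0 < SS c u :=
  Real.sqrt_pos.2 (arg_pos hc hu)

lemma SS_sq {c u : ℝ} (hc : 0 < c) (hu : 0 < u) :
    SS c u ^ 2 = (u ^ 2 - 1) ^ 2 + 4 * c ^ 2 * u ^ 2 :=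
  Real.sq_sqrt (arg_pos hc hu).le

lemma SS_eq {c u : ℝ} (hc : 0 < c) (hu : 0 < u) :
    SS c u = 2 * c * u * WW c u - (u ^ 2 - 1) := by
  unfold WW
  have hcu : 2 * c * u ≠ 0 := by positivity
  field_simp
  ring

lemma WW_pos {c u : ℝ} (hc : 0 < c) (hu : 0 < u) : 0 < WW c u := by
  have h1 := SS_sq hc hu
  have h2 := SS_pos hc hu
  have hnum : 0 < u ^ 2 - 1 + SS c u := by nlinarith [pow_pos (mul_pos hc hu) 2]
  exact div_pos hnum (by positivity)

lemma WW_quad {c u : ℝ} (hc : 0 < c) (hu : 0 < u) :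
    c * u * (WW c u) ^ 2 - (u ^ 2 - 1) * WW c u - c * u = 0 := by
  have h1 := SS_sq hc hu
  unfold WW
  have hcu : 2 * c * u ≠ 0 := by positivity
  field_simp
  ring_nf
  nlinarith [h1]

lemma WW_diff {c u : ℝ} (hc : 0 < c) (hu : 0 < u) :
    DifferentiableAt ℝ (WW c) u := by
  have harg : ((u ^ 2 - 1) ^ 2 + 4 * c ^ 2 * u ^ 2) ≠ 0 := (arg_pos hc hu).ne'
  have h1 : DifferentiableAt ℝ (fun x : ℝ => (x ^ 2 - 1) ^ 2 + 4 * c ^ 2 * x ^ 2) u := by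
    fun_prop
  have h2 : DifferentiableAt ℝ (fun x : ℝ => SS c x) u := by
    unfold SS
    exact h1.sqrt harg
  have h3 : DifferentiableAt ℝ (fun x : ℝ => x ^ 2 - 1 + SS c x) u := by fun_prop
  have h4 : DifferentiableAt ℝ (fun x : ℝ => 2 * c * x) u := by fun_prop
  have h5 : (2 : ℝ) * c * u ≠ 0 := by positivity
  exact h3.div h4 h5

lemma WW_one_sub_sq_pos {c u : ℝ} (hc : 0 < c) (hu : 0 < u) (hu1 : u < 1) :
    0 < 1 - (WW c u) ^ 2 := by
  have hq := WW_quad hc hu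
  have hw := WW_pos hc hu
  by_contra hcon
  push_neg at hcon
  have hr : (u ^ 2 - 1) * WW c u < 0 :=
    mul_neg_of_neg_of_pos (by nlinarith) hw
  have h0 : (0:ℝ) ≤ c * u * ((WW c u) ^ 2 - 1) :=
    mul_nonneg (mul_pos hc hu).le (by linarith)
  nlinarith

lemma WW_lt_one {c u : ℝ} (hc : 0 < c) (hu : 0 < u) (hu1 : u < 1) : WW c u < 1 := by
  have h := WW_one_sub_sq_pos hc hu hu1
  have hw := WW_pos hc hu
  nlinarith

lemma Phi_pos_near_zero {c a : ℝ} (hc : 0 < c) (ha0 : 0 < a) (ha2 : a ≤ 1 / 2)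
    (hca : c * a ≤ 1 / 6) :
    0 < 1 - 3 * a ^ 2 * (WW c a) ^ 2 - a ^ 2 - (WW c a) ^ 2 := by
  have ha1 : a < 1 := by linarith
  have hq := WW_quad hc ha0
  have hw0 := WW_pos hc ha0
  have hstep1 : (1 - a ^ 2) * WW c a = c * a * (1 - (WW c a) ^ 2) := by
    linear_combination hq
  have hstep2 : c * a * (1 - (WW c a) ^ 2) ≤ c * a := by
    nlinarith [mul_nonneg (mul_pos hc ha0).le (sq_nonneg (WW c a))]
  have hstep3 : (3 / 4 : ℝ) * WW c a ≤ (1 - a ^ 2) * WW c a := by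
    nlinarith [mul_nonneg (show (0:ℝ) ≤ 1 / 4 - a ^ 2 by nlinarith) hw0.le]
  have hw29 : WW c a ≤ 2 / 9 := by linarith
  have hwsq : (WW c a) ^ 2 ≤ 4 / 81 := by nlinarith
  have hasq : a ^ 2 ≤ 1 / 4 := by nlinarith
  nlinarith [mul_nonneg (sq_nonneg a) (sq_nonneg (WW c a))]

lemma Phi_neg_near_one {c b : ℝ} (hc : 0 < c) (hb : 1 / 2 < b) (hb1 : b < 1)
    (hsm : 1 - b ^ 2 ≤ c / 16) :
    1 - 3 * b ^ 2 * (WW c b) ^ 2 - b ^ 2 - (WW c b) ^ 2 < 0 := by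
  have hb0 : 0 < b := by linarith
  have hq := WW_quad hc hb0
  have hw0 := WW_pos hc hb0
  have hw1 := WW_lt_one hc hb0 hb1
  have hos := WW_one_sub_sq_pos hc hb0 hb1
  have h1 : c * b * (1 - (WW c b) ^ 2) ≤ c / 16 := by
    have e : c * b * (1 - (WW c b) ^ 2) = (1 - b ^ 2) * WW c b := by
      linear_combination -hq
    rw [e]
    nlinarith [mul_nonneg (show (0:ℝ) ≤ 1 - b ^ 2 by nlinarith) (show (0:ℝ) ≤ 1 - WW c b by linarith)]
  have h2 : 1 - (WW c b) ^ 2 ≤ 1 / 8 := by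
    by_contra hx
    push_neg at hx
    have p1 : 0 < c * b * (1 - (WW c b) ^ 2 - 1 / 8) :=
      mul_pos (mul_pos hc hb0) (by linarith)
    have p2 : 0 < c * (b - 1 / 2) := mul_pos hc (by linarith)
    nlinarith
  have h3 : (0:ℝ) ≤ b ^ 2 - 1 / 4 := by nlinarith
  have h4 : (0:ℝ) ≤ (WW c b) ^ 2 - 7 / 8 := by linarith
  nlinarith [mul_nonneg h3 h4]

lemma hasDeriv_h {c u : ℝ} (hc : 0 < c) (hu : 0 < u) :
    HasDerivAt (fun x => x * (1 - (WW c x) ^ 2))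
      ((1 - 3 * u ^ 2 * (WW c u) ^ 2 - u ^ 2 - (WW c u) ^ 2) / SS c u) u := by
  set d := deriv (WW c) u with hd'
  have hd : HasDerivAt (WW c) d u := (WW_diff hc hu).hasDerivAt
  set w := WW c u with hw'
  have hb : HasDerivAt (fun x => (WW c x) ^ 2) (2 * w * d) u := by
    simpa using hd.fun_pow 2
  have ha : HasDerivAt (fun x : ℝ => c * x) c u := by
    simpa using (hasDerivAt_id u).const_mul c
  have h1 : HasDerivAt (fun x => c * x * (WW c x) ^ 2)
      (c * w ^ 2 + c * u * (2 * w * d)) u := by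
    simpa using ha.fun_mul hb
  have h2 : HasDerivAt (fun x : ℝ => x ^ 2 - 1) (2 * u) u := by
    simpa using ((hasDerivAt_pow 2 u).sub_const 1)
  have h3 : HasDerivAt (fun x => (x ^ 2 - 1) * (WW c x))
      (2 * u * w + (u ^ 2 - 1) * d) u := h2.mul hd
  have hq1 : HasDerivAt (fun x => c * x * (WW c x) ^ 2 - (x ^ 2 - 1) * (WW c x) - c * x)
      (c * w ^ 2 + c * u * (2 * w * d) - (2 * u * w + (u ^ 2 - 1) * d) - c) u :=
    (h1.sub h3).sub ha
  have hq0 : HasDerivAt (fun x => c * x * (WW c x) ^ 2 - (x ^ 2 - 1) * (WW c x) - c * x)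
      0 u := by
    refine (hasDerivAt_const u (0 : ℝ)).congr_of_eventuallyEq ?_
    filter_upwards [Ioi_mem_nhds hu] with x hx
    exact WW_quad hc hx
  have E : c * w ^ 2 + c * u * (2 * w * d) - (2 * u * w + (u ^ 2 - 1) * d) - c = 0 :=
    hq1.unique hq0
  have hh : HasDerivAt (fun x => x * (1 - (WW c x) ^ 2))
      (1 * (1 - w ^ 2) + u * (-(2 * w * d))) u :=
    (hasDerivAt_id u).mul (hb.const_sub 1)
  convert hh using 1
  have hs := SS_eq hc hu
  have hspos := SS_pos hc hu
  rw [div_eq_iff hspos.ne', hs, ← hw']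
  linear_combination (2 * u * w) * E


/-- For a mass ratio `c > 0`, with
`v(u) = (u² - 1 + √((u²-1)² + 4c²u²))/(2cu)` on `(0,1)` and the unique zero
`u₀ ∈ (0,1)` of `u ↦ F(u, v(u)) = 1 - 3u²v(u)² - u² - v(u)²`, the function
`g(u) = √(u(1 - v(u)²))` is strictly increasing on `(0, u₀]` and strictly decreasing on
`[u₀, 1)`: since `‖μ(u)‖ = λ g(u)` with `λ > 0`, the change of stability of the elliptic
relative equilibria occurs at a critical value of the momentum. -/
theorem momentum_norm_monotonicity
    (c : ℝ) (hc : 0 < c) (v g : ℝ → ℝ) (u₀ : ℝ)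
    (hv : ∀ u ∈ Set.Ioo (0 : ℝ) 1,
      v u = (u ^ 2 - 1 + Real.sqrt ((u ^ 2 - 1) ^ 2 + 4 * c ^ 2 * u ^ 2)) / (2 * c * u))
    (hg : ∀ u ∈ Set.Ioo (0 : ℝ) 1, g u = Real.sqrt (u * (1 - (v u) ^ 2)))
    (hu₀ : u₀ ∈ Set.Ioo (0 : ℝ) 1)
    (hzero : 1 - 3 * u₀ ^ 2 * (v u₀) ^ 2 - u₀ ^ 2 - (v u₀) ^ 2 = 0)
    (huniq : ∀ u ∈ Set.Ioo (0 : ℝ) 1,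
      1 - 3 * u ^ 2 * (v u) ^ 2 - u ^ 2 - (v u) ^ 2 = 0 → u = u₀) :
    StrictMonoOn g (Set.Ioc 0 u₀) ∧ StrictAntiOn g (Set.Ico u₀ 1) := by
  have hvW : ∀ u ∈ Set.Ioo (0 : ℝ) 1, v u = WW c u := by
    intro u hu
    rw [hv u hu]; rfl
  set Φ : ℝ → ℝ := fun x => 1 - 3 * x ^ 2 * (WW c x) ^ 2 - x ^ 2 - (WW c x) ^ 2 with hΦ'
  have hΦuniq : ∀ u ∈ Set.Ioo (0 : ℝ) 1, Φ u = 0 → u = u₀ := by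
    intro u hu h
    exact huniq u hu (by rw [hvW u hu]; exact h)
  have hΦcont : ∀ x ∈ Set.Ioo (0 : ℝ) 1, ContinuousAt Φ x := by
    intro x hx
    have hwc : ContinuousAt (WW c) x := (WW_diff hc hx.1).continuousAt
    exact ((continuousAt_const.sub ((continuousAt_const.mul
      (continuousAt_id.pow 2)).mul (hwc.pow 2))).sub
      (continuousAt_id.pow 2)).sub (hwc.pow 2)
  -- Φ is positive left of u₀
  have Fpos : ∀ x ∈ Set.Ioo (0 : ℝ) 1, x < u₀ → 0 < Φ x := by
    intro x hx hxlt
    by_contra hle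
    push_neg at hle
    have hne : Φ x ≠ 0 := fun h => absurd (hΦuniq x hx h) (ne_of_lt hxlt)
    have hneg : Φ x < 0 := lt_of_le_of_ne hle hne
    set a := min x (1 / (1 + 3 * c)) / 2 with ha'
    have hmin : 0 < min x (1 / (1 + 3 * c)) := lt_min hx.1 (by positivity)
    have ha0 : 0 < a := by positivity
    have hax : a < x := by
      have h1 : min x (1 / (1 + 3 * c)) ≤ x := min_le_left _ _
      have := hx.1
      simp only [ha']
      linarith
    have hale : a ≤ 1 / (1 + 3 * c) / 2 := by
      have := min_le_right x (1 / (1 + 3 * c))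
      simp only [ha']
      linarith
    have h13c : (1:ℝ) ≤ 1 + 3 * c := by linarith
    have ha2 : a ≤ 1 / 2 := by
      have : (1:ℝ) / (1 + 3 * c) ≤ 1 := by
        rw [div_le_one (by linarith)]; linarith
      linarith
    have hca : c * a ≤ 1 / 6 := by
      have h1 : a * (2 * (1 + 3 * c)) ≤ 1 := by
        have : a ≤ 1 / (2 * (1 + 3 * c)) := by
          rw [div_div] at hale
          convert hale using 2
          ring
        rw [← le_div_iff₀ (by positivity)]
        linarith [this]
      nlinarith
    have hΦa : 0 < Φ a := Phi_pos_near_zero hc ha0 ha2 hca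
    have hsub : Set.Icc a x ⊆ Set.Ioo (0:ℝ) 1 := fun y hy =>
      ⟨lt_of_lt_of_le ha0 hy.1, lt_of_le_of_lt hy.2 hx.2⟩
    have hcont : ContinuousOn Φ (Set.Icc a x) := fun y hy =>
      (hΦcont y (hsub hy)).continuousWithinAt
    have hivt := intermediate_value_Icc' hax.le hcont
    obtain ⟨z, hz, hz0⟩ := hivt ⟨hneg.le, hΦa.le⟩
    have hzu := hΦuniq z (hsub hz) hz0
    linarith [hz.2]
  -- Φ is negative right of u₀
  have Fneg : ∀ x ∈ Set.Ioo (0 : ℝ) 1, u₀ < x → Φ x < 0 := by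
    intro x hx hxgt
    by_contra hge
    push_neg at hge
    have hne : Φ x ≠ 0 := fun h => absurd (hΦuniq x hx h) (ne_of_gt hxgt)
    have hposx : 0 < Φ x := lt_of_le_of_ne hge (Ne.symm hne)
    set δ := min (1 - x) (c / 16) / 2 with hδ'
    have hmin : 0 < min (1 - x) (c / 16) := lt_min (by linarith [hx.2]) (by positivity)
    have hδ0 : 0 < δ := by positivity
    set b := 1 - δ with hb'
    have hb1 : b < 1 := by simp only [hb']; linarith
    have hbx : x < b := by
      have : δ ≤ (1 - x) / 2 := by
        have := min_le_left (1 - x) (c / 16)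
        simp only [hδ']; linarith
      simp only [hb']
      linarith [hx.2]
    have hbhalf : 1 / 2 < b := by
      have : δ < 1 / 2 := by
        have h1 : min (1 - x) (c / 16) ≤ 1 - x := min_le_left _ _
        have := hx.1
        simp only [hδ']; linarith
      simp only [hb']; linarith
    have hsm : 1 - b ^ 2 ≤ c / 16 := by
      have h1 : δ ≤ c / 16 / 2 := by
        have := min_le_right (1 - x) (c / 16)
        simp only [hδ']; linarith
      have hb0 : 0 < b := by linarith
      nlinarith
    have hΦb : Φ b < 0 := Phi_neg_near_one hc hbhalf hb1 hsm
    have hsub : Set.Icc x b ⊆ Set.Ioo (0:ℝ) 1 := fun y hy =>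
      ⟨lt_of_lt_of_le hx.1 hy.1, lt_of_le_of_lt hy.2 hb1⟩
    have hcont : ContinuousOn Φ (Set.Icc x b) := fun y hy =>
      (hΦcont y (hsub hy)).continuousWithinAt
    have hivt := intermediate_value_Icc' hbx.le hcont
    obtain ⟨z, hz, hz0⟩ := hivt ⟨hΦb.le, hposx.le⟩
    have hzu := hΦuniq z (hsub hz) hz0
    linarith [hz.1]
  -- the auxiliary function h
  set h : ℝ → ℝ := fun x => x * (1 - (WW c x) ^ 2) with hh'
  have hgh : ∀ x ∈ Set.Ioo (0 : ℝ) 1, g x = Real.sqrt (h x) := by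
    intro x hx
    rw [hg x hx, hvW x hx]
  have hhpos : ∀ x ∈ Set.Ioo (0 : ℝ) 1, 0 < h x := fun x hx =>
    mul_pos hx.1 (WW_one_sub_sq_pos hc hx.1 hx.2)
  have hIocsub : Set.Ioc (0:ℝ) u₀ ⊆ Set.Ioo (0:ℝ) 1 := fun y hy =>
    ⟨hy.1, lt_of_le_of_lt hy.2 hu₀.2⟩
  have hIcosub : Set.Ico u₀ (1:ℝ) ⊆ Set.Ioo (0:ℝ) 1 := fun y hy =>
    ⟨lt_of_lt_of_le hu₀.1 hy.1, hy.2⟩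
  have hmono : StrictMonoOn h (Set.Ioc 0 u₀) := by
    apply strictMonoOn_of_deriv_pos (convex_Ioc 0 u₀)
    · intro y hy
      exact (hasDeriv_h hc (hIocsub hy).1).continuousAt.continuousWithinAt
    · intro y hy
      rw [interior_Ioc] at hy
      have hyI : y ∈ Set.Ioo (0:ℝ) 1 := ⟨hy.1, lt_trans hy.2 hu₀.2⟩
      rw [(hasDeriv_h hc hy.1).deriv]
      exact div_pos (Fpos y hyI hy.2) (SS_pos hc hy.1)
  have hanti : StrictAntiOn h (Set.Ico u₀ 1) := by
    apply strictAntiOn_of_deriv_neg (convex_Ico u₀ 1)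
    · intro y hy
      exact (hasDeriv_h hc (hIcosub hy).1).continuousAt.continuousWithinAt
    · intro y hy
      rw [interior_Ico] at hy
      have hyI : y ∈ Set.Ioo (0:ℝ) 1 := ⟨lt_trans hu₀.1 hy.1, hy.2⟩
      rw [(hasDeriv_h hc hyI.1).deriv]
      exact div_neg_of_neg_of_pos (Fneg y hyI hy.1) (SS_pos hc hyI.1)
  constructor
  · intro x hx y hy hxy
    rw [hgh x (hIocsub hx), hgh y (hIocsub hy)]
    exact Real.sqrt_lt_sqrt (hhpos x (hIocsub hx)).le (hmono hx hy hxy)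
  · intro x hx y hy hxy
    rw [hgh x (hIcosub hx), hgh y (hIcosub hy)]
    exact Real.sqrt_lt_sqrt (hhpos y (hIcosub hy)).le (hanti hx hy hxy)
end

section
/- Let ω ∈ ℝ and θ ∈ (0, π/2), and define the curve γ : ℝ → ℍ by γ(t) = e^{ωt}·cos θ + i·e^{ωt}·sin θ and the curve c : ℝ → ℍ by c(t) = i·e^{ωt}. Then: (i) dist(γ(t), γ(s)) = dist(γ(t−s), γ(0)) for all t, s ∈ ℝ; (ii) dist(γ(t), γ(0))/|t| → |ω|/sin θ as t → 0 (t ≠ 0), i.e. each particle of the hyperbolic relative equilibrium moves with constant hyperbolic speed |ω|/sin θ = |ω|·cosh(d), where d = dist(i, cos θ + i sin θ); (iii) dist(c(t), c(s)) = |ω|·|t − s| for all t, s ∈ ℝ, i.e. the hyperbolic center of mass moves along a geodesic (the imaginary axis) with constant hyperbolic speed |ω|. -/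
open Real Filter Topology

lemma abs_arsinh' (x : ℝ) : |Real.arsinh x| = Real.arsinh |x| := by
  rcases le_total 0 x with h | h
  · rw [abs_of_nonneg h, abs_of_nonneg (Real.arsinh_nonneg_iff.mpr h)]
  · rw [abs_of_nonpos h, abs_of_nonpos (Real.arsinh_nonpos_iff.mpr h), ← Real.arsinh_neg]

lemma dist_exp_ray (x y a b : ℝ) (hy : 0 < y) (hxy : x ^ 2 + y ^ 2 = 1)
    (z w : UpperHalfPlane)
    (hzc : (z : ℂ) = ⟨Real.exp a * x, Real.exp a * y⟩)
    (hwc : (w : ℂ) = ⟨Real.exp b * x, Real.exp b * y⟩) :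
    dist z w = 2 * Real.arsinh (|Real.sinh ((a - b) / 2)| / y) := by
  have himz : z.im = Real.exp a * y := by rw [← UpperHalfPlane.coe_im, hzc]
  have himw : w.im = Real.exp b * y := by rw [← UpperHalfPlane.coe_im, hwc]
  have hd : dist (z : ℂ) (w : ℂ) = |Real.exp a - Real.exp b| := by
    rw [Complex.dist_eq_re_im, hzc, hwc]
    rw [show ((⟨Real.exp a * x, Real.exp a * y⟩ : ℂ).re - (⟨Real.exp b * x, Real.exp b * y⟩ : ℂ).re) ^ 2
        + ((⟨Real.exp a * x, Real.exp a * y⟩ : ℂ).im - (⟨Real.exp b * x, Real.exp b * y⟩ : ℂ).im) ^ 2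
        = (Real.exp a - Real.exp b) ^ 2 * (x ^ 2 + y ^ 2) from by ring, hxy, mul_one,
      Real.sqrt_sq_eq_abs]
  have h1 : Real.exp a * y * (Real.exp b * y) = (Real.exp ((a + b) / 2) * y) ^ 2 := by
    rw [mul_pow, sq (Real.exp ((a + b) / 2)), ← Real.exp_add,
      show (a + b) / 2 + (a + b) / 2 = a + b from by ring, Real.exp_add]
    ring
  have h2 : Real.exp ((a + b) / 2) * (2 * Real.sinh ((a - b) / 2)) = Real.exp a - Real.exp b := by
    rw [Real.sinh_eq, mul_comm (2 : ℝ), div_mul_cancel₀ _ two_ne_zero, mul_sub,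
      ← Real.exp_add, ← Real.exp_add, show (a + b) / 2 + (a - b) / 2 = a from by ring,
      show (a + b) / 2 + -((a - b) / 2) = b from by ring]
  rw [UpperHalfPlane.dist_eq, himz, himw, hd, h1, Real.sqrt_sq (by positivity), ← h2,
    abs_mul, abs_of_pos (Real.exp_pos _), abs_mul, abs_two]
  congr 1
  congr 1
  field_simp


/-- For `ω ∈ ℝ`, `θ ∈ (0, π/2)`, the curves `γ(t) = e^{ωt}(cos θ + i sin θ)`
and `c(t) = i e^{ωt}` in `ℍ` (particle and hyperbolic center of mass of the hyperbolic
relative equilibrium) satisfy: (i) `dist(γ(t), γ(s)) = dist(γ(t-s), γ(0))`;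
(ii) `dist(γ(t), γ(0))/|t| → |ω|/sin θ` as `t → 0`, i.e. the particle moves with constant
hyperbolic speed `|ω|/sin θ = |ω| cosh d` with `d = dist(i, cos θ + i sin θ)`;
(iii) `dist(c(t), c(s)) = |ω||t - s|`, i.e. the center of mass moves along a geodesic with
constant hyperbolic speed `|ω|`. -/
theorem hyperbolic_relative_equilibrium_intrinsic_description
    (ω θ : ℝ) (hθ : θ ∈ Set.Ioo 0 (π / 2))
    (γ c : ℝ → UpperHalfPlane)
    (hγ : ∀ t : ℝ, (γ t : ℂ) = ⟨Real.exp (ω * t) * Real.cos θ, Real.exp (ω * t) * Real.sin θ⟩)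
    (hc : ∀ t : ℝ, (c t : ℂ) = ⟨0, Real.exp (ω * t)⟩)
    (z : UpperHalfPlane) (hz : (z : ℂ) = ⟨Real.cos θ, Real.sin θ⟩) :
    (∀ t s : ℝ, dist (γ t) (γ s) = dist (γ (t - s)) (γ 0)) ∧
    Tendsto (fun t : ℝ => dist (γ t) (γ 0) / |t|) (𝓝[≠] 0) (𝓝 (|ω| / Real.sin θ)) ∧
    |ω| / Real.sin θ = |ω| * Real.cosh (dist UpperHalfPlane.I z) ∧
    (∀ t s : ℝ, dist (c t) (c s) = |ω| * |t - s|) := by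
  have hsin : 0 < Real.sin θ :=
    Real.sin_pos_of_pos_of_lt_pi hθ.1 (hθ.2.trans (by linarith [Real.pi_pos]))
  have hkey : ∀ t s : ℝ, dist (γ t) (γ s) =
      2 * Real.arsinh (|Real.sinh ((ω * t - ω * s) / 2)| / Real.sin θ) := fun t s =>
    dist_exp_ray (Real.cos θ) (Real.sin θ) (ω * t) (ω * s) hsin
      (by rw [add_comm]; exact Real.sin_sq_add_cos_sq θ) _ _ (hγ t) (hγ s)
  have hkeyc : ∀ t s : ℝ, dist (c t) (c s) =
      2 * Real.arsinh (|Real.sinh ((ω * t - ω * s) / 2)| / 1) := fun t s =>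
    dist_exp_ray 0 1 (ω * t) (ω * s) one_pos (by norm_num) _ _
      (by rw [hc]; simp [Complex.ext_iff]) (by rw [hc]; simp [Complex.ext_iff])
  refine ⟨?_, ?_, ?_, ?_⟩
  · intro t s
    rw [hkey, hkey]
    norm_num
    ring_nf
  · set f : ℝ → ℝ := fun t => 2 * Real.arsinh (Real.sinh (ω * t / 2) / Real.sin θ) with hf
    have hderiv : HasDerivAt f (ω / Real.sin θ) 0 := by
      have h0 : HasDerivAt (fun t : ℝ => ω * t / 2) (ω / 2) 0 := by
        simpa using ((hasDerivAt_id (0 : ℝ)).const_mul ω).div_const 2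
      have h1 : HasDerivAt (fun t : ℝ => Real.sinh (ω * t / 2))
          (Real.cosh (ω * 0 / 2) * (ω / 2)) 0 := (Real.hasDerivAt_sinh _).comp 0 h0
      have h2 := (h1.div_const (Real.sin θ))
      have h3 := ((Real.hasStrictDerivAt_arsinh
          (Real.sinh (ω * 0 / 2) / Real.sin θ)).hasDerivAt.comp 0 h2).const_mul 2
      refine h3.congr_deriv (Eq.symm ?_)
      rw [show ω * (0:ℝ) / 2 = 0 from by ring, Real.sinh_zero, Real.cosh_zero]
      norm_num
      field_simp
    have hslope := hasDerivAt_iff_tendsto_slope.mp hderiv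
    have habs : Tendsto (fun t : ℝ => |slope f 0 t|) (𝓝[≠] 0) (𝓝 (|ω| / Real.sin θ)) := by
      have := (continuous_abs.tendsto (ω / Real.sin θ)).comp hslope
      rwa [abs_div, abs_of_pos hsin] at this
    refine habs.congr fun t => ?_
    rw [slope_def_field, hf]
    simp only []
    rw [hkey, show ω * t - ω * 0 = ω * t from by ring]
    simp only [mul_zero, zero_div, Real.sinh_zero, Real.arsinh_zero, sub_zero]
    rw [abs_div, abs_mul, abs_two, abs_arsinh', abs_div, abs_of_pos hsin]
  · have hcosh : Real.cosh (dist UpperHalfPlane.I z) = 1 / Real.sin θ := by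
      rw [UpperHalfPlane.cosh_dist']
      have hre : z.re = Real.cos θ := by rw [← UpperHalfPlane.coe_re, hz]
      have him : z.im = Real.sin θ := by rw [← UpperHalfPlane.coe_im, hz]
      rw [hre, him, UpperHalfPlane.I_re, UpperHalfPlane.I_im]
      have : ((0:ℝ) - Real.cos θ) ^ 2 + 1 ^ 2 + Real.sin θ ^ 2 = 2 := by
        have := Real.sin_sq_add_cos_sq θ
        nlinarith
      rw [this]
      field_simp
    rw [hcosh, mul_one_div]
  · intro t s
    rw [hkeyc, div_one, Real.abs_sinh, Real.arsinh_sinh,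
      show ω * t - ω * s = ω * (t - s) from by ring, abs_div, abs_two, abs_mul]
    ring
end

section
/- For t ∈ ℝ let R_t = [[cos(t/2), −sin(t/2)], [sin(t/2), cos(t/2)]] ∈ SL(2,ℝ), let ω ≠ 0, θ ∈ (0, π/2), z = cos θ + i·sin θ ∈ ℍ, and define γ : ℝ → ℍ by γ(t) = R_{ωt}•z. Then: (i) R_t•i = i for all t (the hyperbolic center of mass stays fixed); (ii) γ(t + 2π/ω) = γ(t) for all t (the motion is periodic with period 2π/|ω|); (iii) dist(γ(t), γ(0))/|t| → |ω|·cos θ/sin θ as t → 0 (t ≠ 0), i.e. the particle moves with constant hyperbolic speed |ω|·cos θ/sin θ = |ω|·sinh(d), where d = dist(i, z). -/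
open Real Filter Topology

private lemma ere_denom_aux (c s : ℝ) (hcs : s^2 + c^2 = 1) (w : UpperHalfPlane) :
    (s : ℂ) * w + c ≠ 0 := by
  intro h
  have him : s * (w : ℂ).im = 0 := by simpa using congrArg Complex.im h
  have hs : s = 0 := by
    rcases mul_eq_zero.1 him with h' | h'
    · exact h'
    · exact absurd h' (ne_of_gt w.im_pos)
  have hre : c = 0 := by
    have := congrArg Complex.re h
    simpa [hs] using this
  rw [hs, hre] at hcs; norm_num at hcs

private lemma ere_dist_formula (a b c s : ℝ) (ha : 0 < a) (hb : 0 < b)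
    (hab : a^2 + b^2 = 1) (hcs : s^2 + c^2 = 1) (z w : UpperHalfPlane)
    (hz : (z : ℂ) = ⟨a, b⟩)
    (hw : (w : ℂ) = ((c : ℂ) * z - s) / ((s : ℂ) * z + c)) :
    dist w z = 2 * arsinh (a / b * |s|) := by
  have hden : (s : ℂ) * z + c ≠ 0 := ere_denom_aux c s hcs z
  set N := Complex.normSq ((s : ℂ) * z + c) with hNdef
  have hN : 0 < N := Complex.normSq_pos.2 hden
  have hnum : (w : ℂ) - z = (-(s:ℂ) * (1 + (z:ℂ)^2)) / ((s : ℂ) * z + c) := by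
    rw [hw, div_sub' hden]
    congr 1
    ring
  have hnsq : Complex.normSq ((w : ℂ) - z) = 4 * a^2 * s^2 / N := by
    rw [hnum, Complex.normSq_div, Complex.normSq_mul]
    have h1 : Complex.normSq (-(s:ℂ)) = s^2 := by
      simp [Complex.normSq_apply]; ring
    have h2 : Complex.normSq (1 + (z:ℂ)^2) = 4 * a^2 := by
      simp [Complex.normSq_apply, Complex.add_re, Complex.add_im, Complex.one_re,
        Complex.one_im, pow_two, Complex.mul_re, Complex.mul_im, hz]
      nlinarith [hab]
    rw [h1, h2]; ring
  have hwim : w.im = b / N := by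
    have h : ((w : ℂ)).im = b / N := by
      rw [hw, Complex.div_im]
      have hre' : ((c : ℂ) * z - s).re = c * a - s := by
        simp [Complex.sub_re, Complex.mul_re, hz]
      have him' : ((c : ℂ) * z - s).im = c * b := by
        simp [Complex.sub_im, Complex.mul_im, hz]
      have hre2 : ((s : ℂ) * z + c).re = s * a + c := by
        simp [Complex.add_re, Complex.mul_re, hz]
      have him2 : ((s : ℂ) * z + c).im = s * b := by
        simp [Complex.add_im, Complex.mul_im, hz]
      rw [hre', him', hre2, him2, ← hNdef, div_sub_div_same]
      congr 1
      nlinarith [hcs]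
    simpa [UpperHalfPlane.coe_im] using h
  have hzim : z.im = b := by
    rw [← UpperHalfPlane.coe_im, hz]
  rw [UpperHalfPlane.dist_eq]
  congr 1
  have hsN : Real.sqrt N ≠ 0 := by positivity
  have hdistC : dist (w : ℂ) z = 2 * a * |s| / Real.sqrt N := by
    rw [Complex.dist_eq, Complex.norm_def, hnsq,
      Real.sqrt_div (by positivity) N]
    congr 1
    rw [show 4 * a^2 * s^2 = (2 * a * |s|)^2 by rw [mul_pow, sq_abs]; ring,
      Real.sqrt_sq (by positivity)]
  rw [hdistC, hwim, hzim]
  rw [show b / N * b = (b / Real.sqrt N)^2 by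
    rw [div_pow, Real.sq_sqrt hN.le]; ring]
  rw [Real.sqrt_sq (by positivity)]
  field_simp

private lemma ere_abs_arsinh (x : ℝ) : |arsinh x| = arsinh |x| := by
  rcases le_or_gt 0 x with h | h
  · rw [abs_of_nonneg h, abs_of_nonneg (Real.arsinh_nonneg_iff.2 h)]
  · rw [abs_of_neg h, abs_of_neg (Real.arsinh_neg_iff.2 h), Real.arsinh_neg]

private lemma ere_sinh_dist (a b : ℝ) (ha : 0 < a) (hb : 0 < b) (hb1 : b ≤ 1)
    (hab : a^2 + b^2 = 1) (z : UpperHalfPlane) (hz : (z : ℂ) = ⟨a, b⟩) :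
    Real.sinh (dist UpperHalfPlane.I z) = a / b := by
  have hzim : z.im = b := by rw [← UpperHalfPlane.coe_im, hz]
  rw [UpperHalfPlane.dist_eq, UpperHalfPlane.I_im, hzim, one_mul]
  set u := dist (UpperHalfPlane.I : ℂ) (z : ℂ) / (2 * Real.sqrt b) with hu
  have hu0 : 0 ≤ u := by positivity
  have hd2 : (dist (UpperHalfPlane.I : ℂ) (z : ℂ))^2 = 2 - 2*b := by
    rw [Complex.dist_eq, Complex.sq_norm, UpperHalfPlane.coe_I]
    simp [Complex.normSq_apply, hz, Complex.sub_re, Complex.sub_im]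
    nlinarith [hab]
  have hu2 : u^2 = (1 - b) / (2 * b) := by
    rw [hu, div_pow, hd2, mul_pow, Real.sq_sqrt hb.le]
    field_simp
  rw [Real.sinh_two_mul, Real.sinh_arsinh, Real.cosh_arsinh]
  have h1u : 1 + u^2 = (1 + b) / (2 * b) := by rw [hu2]; field_simp; ring
  rw [h1u, ← Real.sqrt_sq hu0, hu2, mul_assoc,
    ← Real.sqrt_mul (div_nonneg (by linarith) (by linarith))]
  rw [show (1 - b) / (2 * b) * ((1 + b) / (2 * b)) = (a / (2 * b))^2 by
    field_simp; nlinarith [hab]]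
  rw [Real.sqrt_sq (by positivity)]
  field_simp

private lemma ere_hasDerivAt (ω k : ℝ) :
    HasDerivAt (fun t : ℝ => 2 * arsinh (k * Real.sin (ω * t / 2))) (k * ω) 0 := by
  have h1 : HasDerivAt (fun t : ℝ => ω * t / 2) (ω / 2) 0 := by
    simpa using ((hasDerivAt_id (0:ℝ)).const_mul ω).div_const 2
  have h2 : HasDerivAt (fun t : ℝ => Real.sin (ω * t / 2)) (ω / 2) 0 := by
    simpa using h1.sin
  have h3 : HasDerivAt (fun t : ℝ => k * Real.sin (ω * t / 2)) (k * (ω / 2)) 0 :=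
    h2.const_mul k
  have h4 := (Real.hasDerivAt_arsinh (k * Real.sin (ω * 0 / 2))).comp 0 h3
  have h5 := h4.const_mul 2
  refine h5.congr_deriv ?_
  simp
  ring

/-- For the rotations `R_t = !![cos(t/2), -sin(t/2); sin(t/2), cos(t/2)]`
in `SL(2,ℝ)`, `ω ≠ 0`, `θ ∈ (0, π/2)`, `z = cos θ + i sin θ ∈ ℍ` and the elliptic
relative-equilibrium curve `γ(t) = R_{ωt} • z`: (i) `R_t • i = i` for all `t` (the
hyperbolic center of mass stays fixed); (ii) `γ(t + 2π/ω) = γ(t)` for all `t` (the motion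
is periodic with period `2π/|ω|`); (iii) `dist(γ(t), γ(0))/|t| → |ω| cos θ / sin θ` as
`t → 0`, i.e. the particle moves with constant hyperbolic speed
`|ω| cos θ / sin θ = |ω| sinh d`, where `d = dist(i, z)`. -/
theorem elliptic_relative_equilibrium_intrinsic_description
    (R : ℝ → Matrix.SpecialLinearGroup (Fin 2) ℝ)
    (hR : ∀ t : ℝ, (R t : Matrix (Fin 2) (Fin 2) ℝ) =
      !![Real.cos (t / 2), -Real.sin (t / 2); Real.sin (t / 2), Real.cos (t / 2)])
    (ω θ : ℝ) (hω : ω ≠ 0) (hθ : θ ∈ Set.Ioo 0 (π / 2))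
    (z : UpperHalfPlane) (hz : (z : ℂ) = ⟨Real.cos θ, Real.sin θ⟩)
    (γ : ℝ → UpperHalfPlane) (hγ : ∀ t : ℝ, γ t = R (ω * t) • z) :
    (∀ t : ℝ, R t • UpperHalfPlane.I = UpperHalfPlane.I) ∧
    (∀ t : ℝ, γ (t + 2 * π / ω) = γ t) ∧
    Tendsto (fun t : ℝ => dist (γ t) (γ 0) / |t|) (𝓝[≠] 0)
      (𝓝 (|ω| * Real.cos θ / Real.sin θ)) ∧
    |ω| * Real.cos θ / Real.sin θ = |ω| * Real.sinh (dist UpperHalfPlane.I z) := by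
  obtain ⟨hθ0, hθ1⟩ := hθ
  set a := Real.cos θ with hadef
  set b := Real.sin θ with hbdef
  have ha : 0 < a := Real.cos_pos_of_mem_Ioo ⟨by linarith [Real.pi_pos], hθ1⟩
  have hb : 0 < b := Real.sin_pos_of_pos_of_lt_pi hθ0 (by linarith [Real.pi_pos])
  have hb1 : b ≤ 1 := Real.sin_le_one θ
  have hab : a^2 + b^2 = 1 := by
    rw [hadef, hbdef, add_comm]; exact Real.sin_sq_add_cos_sq θ
  -- the basic Möbius formula for the action of `R t`
  have key : ∀ (t : ℝ) (w : UpperHalfPlane), ((R t • w : UpperHalfPlane) : ℂ) =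
      ((Real.cos (t/2) : ℂ) * w - Real.sin (t/2)) /
        ((Real.sin (t/2) : ℂ) * w + Real.cos (t/2)) := by
    intro t w
    rw [UpperHalfPlane.specialLinearGroup_apply, UpperHalfPlane.coe_mk]
    simp [hR t, sub_eq_add_neg]
  -- (i)
  have part1 : ∀ t : ℝ, R t • UpperHalfPlane.I = UpperHalfPlane.I := by
    intro t
    have hcs : Real.sin (t/2)^2 + Real.cos (t/2)^2 = 1 := Real.sin_sq_add_cos_sq _
    have hden := ere_denom_aux (Real.cos (t/2)) (Real.sin (t/2)) hcs UpperHalfPlane.I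
    apply UpperHalfPlane.ext
    rw [key t UpperHalfPlane.I, UpperHalfPlane.coe_I]
    rw [UpperHalfPlane.coe_I] at hden
    rw [div_eq_iff hden]
    linear_combination (-(Real.sin (t/2)) : ℂ) * Complex.I_sq
  -- R 0 = 1
  have hR0 : R 0 = 1 := by
    apply Subtype.ext
    rw [hR 0]
    norm_num
    exact Matrix.one_fin_two.symm
  have hγ0 : γ 0 = z := by
    rw [hγ 0, mul_zero, hR0, one_smul]
  -- the key distance formula
  have hdist : ∀ u : ℝ, dist (R u • z) z = 2 * arsinh (a / b * |Real.sin (u/2)|) := by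
    intro u
    exact ere_dist_formula a b (Real.cos (u/2)) (Real.sin (u/2)) ha hb hab
      (Real.sin_sq_add_cos_sq _) z _ hz (key u z)
  -- (ii)
  have part2 : ∀ t : ℝ, γ (t + 2 * π / ω) = γ t := by
    intro t
    rw [hγ, hγ]
    have harg : ω * (t + 2 * π / ω) = ω * t + 2 * π := by field_simp
    rw [harg]
    apply UpperHalfPlane.ext
    rw [key, key]
    have h2 : (ω * t + 2 * π) / 2 = ω * t / 2 + π := by ring
    rw [h2, Real.cos_add_pi, Real.sin_add_pi]
    rw [Complex.ofReal_neg, Complex.ofReal_neg]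
    rw [show -(Real.cos (ω*t/2) : ℂ) * z - -(Real.sin (ω*t/2) : ℂ) =
      -((Real.cos (ω*t/2) : ℂ) * z - (Real.sin (ω*t/2) : ℂ)) by ring]
    rw [show -(Real.sin (ω*t/2) : ℂ) * z + -(Real.cos (ω*t/2) : ℂ) =
      -((Real.sin (ω*t/2) : ℂ) * z + (Real.cos (ω*t/2) : ℂ)) by ring]
    rw [neg_div_neg_eq]
  -- (iii)
  have part3 : Tendsto (fun t : ℝ => dist (γ t) (γ 0) / |t|) (𝓝[≠] 0)
      (𝓝 (|ω| * a / b)) := by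
    set k := a / b with hk
    have hk0 : 0 ≤ k := by positivity
    have hder := ere_hasDerivAt ω k
    rw [hasDerivAt_iff_tendsto_slope] at hder
    have habs := hder.abs
    have hlim : |k * ω| = |ω| * a / b := by
      rw [abs_mul, abs_of_nonneg hk0, hk]; ring
    rw [hlim] at habs
    apply habs.congr'
    filter_upwards [self_mem_nhdsWithin] with t ht
    have ht0 : t ≠ 0 := ht
    have hslope : slope (fun t : ℝ => 2 * arsinh (k * Real.sin (ω * t / 2))) 0 t =
        (2 * arsinh (k * Real.sin (ω * t / 2))) / t := by
      rw [slope_def_field]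
      simp
    rw [hslope, abs_div]
    congr 1
    rw [abs_mul, abs_of_nonneg (by norm_num : (0:ℝ) ≤ 2), ere_abs_arsinh,
      abs_mul, abs_of_nonneg hk0]
    rw [hγ t, hγ0, hdist (ω * t)]
  refine ⟨part1, part2, part3, ?_⟩
  rw [ere_sinh_dist a b ha hb hb1 hab z hz]
  ring
end

section
/- Let P be a locally compact metric space and G a compact topological group acting continuously on P. Let φ : ℝ → P → P be any family of maps (the flow: t ↦ φ t p is the solution with initial condition p), and let z : ℝ → P be a curve such that z(t) belongs to the G-orbit of z(0) for every t. Assume the stability property: for every open G-invariant set U containing the range of z there exists an open set W with range(z) ⊆ W ⊆ U such that φ t p ∈ U for every p ∈ W and every t ∈ ℝ. Then there exists an open set W containing the range of z such that for every p ∈ W the set {φ t p : t ∈ ℝ} is bounded. -/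
/-- Proposition A.1 of the paper. Let `P` be a locally compact metric
space and `G` a compact topological group acting continuously on `P`. If a curve
`z : ℝ → P` stays in the `G`-orbit of `z 0` and satisfies the `G`-stability property with
respect to a flow `φ` (for every `G`-invariant open `U ⊇ range z` there is an open `W`
with `range z ⊆ W ⊆ U` such that solutions starting in `W` stay in `U`), then there is an
open neighborhood `W` of `range z` from which all solutions are bounded. -/
theorem bounded_solutions_of_G_stable_relative_equilibrium
    {P : Type*} [MetricSpace P] [LocallyCompactSpace P]
    {G : Type*} [Group G] [TopologicalSpace G] [CompactSpace G]
    [MulAction G P] [ContinuousSMul G P]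
    (φ : ℝ → P → P) (z : ℝ → P)
    (horb : ∀ t : ℝ, z t ∈ MulAction.orbit G (z 0))
    (hstab : ∀ U : Set P, IsOpen U → (∀ (g : G), ∀ p ∈ U, g • p ∈ U) →
      Set.range z ⊆ U →
      ∃ W : Set P, IsOpen W ∧ Set.range z ⊆ W ∧ W ⊆ U ∧
        ∀ p ∈ W, ∀ t : ℝ, φ t p ∈ U) :
    ∃ W : Set P, IsOpen W ∧ Set.range z ⊆ W ∧
      ∀ p ∈ W, Bornology.IsBounded (Set.range fun t : ℝ => φ t p) := by
  -- The orbit of `z 0` is compact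
  have hKc : IsCompact (MulAction.orbit G (z 0)) := by
    have : MulAction.orbit G (z 0) = Set.range (fun g : G => g • z 0) := rfl
    rw [this]
    exact isCompact_range (continuous_id.smul continuous_const)
  -- Get a compact superset with open interior
  obtain ⟨K', hK'c, hKK'⟩ := exists_compact_superset hKc
  set V : Set P := interior K' with hV
  have hVopen : IsOpen V := isOpen_interior
  -- The G-saturation kernel S = {p | ∀ g, g • p ∈ V} is open, invariant, contains orbit
  set S : Set P := {p : P | ∀ g : G, g • p ∈ V} with hS
  have hSopen : IsOpen S := by
    rw [isOpen_iff_mem_nhds]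
    intro p hp
    have hsub : (Set.univ : Set G) ×ˢ ({p} : Set P) ⊆
        (fun q : G × P => q.1 • q.2) ⁻¹' V := by
      rintro ⟨g, q⟩ ⟨-, hq⟩
      simp only [Set.mem_singleton_iff] at hq
      subst hq
      exact hp g
    obtain ⟨u, v, _, hvopen, hu, hpv, huv⟩ :=
      generalized_tube_lemma isCompact_univ isCompact_singleton
        (hVopen.preimage (continuous_fst.smul continuous_snd)) hsub
    refine Filter.mem_of_superset (hvopen.mem_nhds (hpv rfl)) ?_
    intro q hq g
    exact huv (show (g, q) ∈ u ×ˢ v from ⟨hu trivial, hq⟩)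
  have hSinv : ∀ g : G, ∀ p ∈ S, g • p ∈ S := by
    intro g p hp h
    have := hp (h * g)
    rwa [mul_smul] at this
  have hKS : MulAction.orbit G (z 0) ⊆ S := by
    rintro p ⟨g, rfl⟩ h
    exact hKK' ⟨h * g, mul_smul h g (z 0)⟩
  have hrange : Set.range z ⊆ S := by
    rintro _ ⟨t, rfl⟩
    exact hKS (horb t)
  obtain ⟨W, hWopen, hWr, hWS, hWφ⟩ := hstab S hSopen hSinv hrange
  refine ⟨W, hWopen, hWr, fun p hp => ?_⟩
  have : Set.range (fun t : ℝ => φ t p) ⊆ K' := by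
    rintro _ ⟨t, rfl⟩
    have := hWφ p hp t 1
    rw [one_smul] at this
    exact interior_subset this
  exact hK'c.isBounded.subset this
end
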